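/- arXiv:2506.08273 — 6 statements merged into one kernel-verified Lean document; each statement's English description precedes it below -/
import Mathlib

section
/- Let d ≥ 2 and 0 < p ≤ 1. Then there exists a constant c = c(p) < ∞, depending only on p, such that for every function u : ℤ₊^d → ℂ for which the left-hand side below is finite, one has ∑_{j ∈ ℤ₊^d \ {0}} |u(j)|^p / ‖j‖_∞ ≤ c · d^{-1} · ∑_{j ∈ ℤ₊^d \ {0}} ∑_{k ∈ ℤ₊^d \ {0}, k ∼ j} |u(j) − u(k)|^p. -/
open scoped ENNReal

/-- The sup-norm `‖x‖_∞` of a point of `ℤ₊^d`, as a real number. -/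
noncomputable def nsup {d : ℕ} (x : Fin d → ℕ) : ℝ := ((Finset.univ.sup x : ℕ) : ℝ)

/-- `x ∼ y`: the Euclidean distance between `x` and `y` equals `1`. -/
def nbr {d : ℕ} (x y : Fin d → ℕ) : Prop := ∑ i, ((x i : ℤ) - (y i : ℤ)) ^ 2 = 1

open scoped NNReal

namespace HardyAux

variable {d : ℕ}

def nsupN (x : Fin d → ℕ) : ℕ := Finset.univ.sup x

def up (x : Fin d → ℕ) (i : Fin d) : Fin d → ℕ := Function.update x i (x i + 1)

def dn (x : Fin d → ℕ) (i : Fin d) : Fin d → ℕ := Function.update x i (x i - 1)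

noncomputable def FF (x : Fin d → ℕ) (i : Fin d) : ℝ :=
  if x = 0 then 0
  else ((2 * (x i + min (x i + 1) (nsupN x)) : ℕ) : ℝ) / ((d * nsupN x : ℕ) : ℝ)

lemma le_nsupN (x : Fin d → ℕ) (i : Fin d) : x i ≤ nsupN x :=
  Finset.le_sup (Finset.mem_univ i)

lemma nsupN_pos {x : Fin d → ℕ} (hx : x ≠ 0) : 1 ≤ nsupN x := by
  obtain ⟨i, hi⟩ := Function.ne_iff.1 hx
  have : x i ≠ 0 := hi
  exact le_trans (Nat.one_le_iff_ne_zero.2 this) (le_nsupN x i)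

lemma ne_zero_of_nsupN {x : Fin d → ℕ} (h : 1 ≤ nsupN x) : x ≠ 0 := by
  intro h0
  subst h0
  simp [nsupN] at h

lemma nsupN_le_iff {x : Fin d → ℕ} {R : ℕ} : nsupN x ≤ R ↔ ∀ i, x i ≤ R := by
  simp [nsupN, Finset.sup_le_iff]

lemma exists_eq_nsupN (hd : 1 ≤ d) (x : Fin d → ℕ) : ∃ i, x i = nsupN x := by
  have hne : (Finset.univ : Finset (Fin d)).Nonempty := by
    have : 0 < d := hd
    exact ⟨⟨0, this⟩, Finset.mem_univ _⟩
  obtain ⟨i, _, hi⟩ := Finset.exists_mem_eq_sup Finset.univ hne x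
  exact ⟨i, hi.symm⟩

@[simp] lemma up_self (x : Fin d → ℕ) (i : Fin d) : up x i i = x i + 1 :=
  Function.update_self _ _ _

lemma up_other (x : Fin d → ℕ) {i l : Fin d} (h : l ≠ i) : up x i l = x l :=
  Function.update_of_ne h _ _

@[simp] lemma dn_self (x : Fin d → ℕ) (i : Fin d) : dn x i i = x i - 1 :=
  Function.update_self _ _ _

lemma dn_other (x : Fin d → ℕ) {i l : Fin d} (h : l ≠ i) : dn x i l = x l :=
  Function.update_of_ne h _ _

lemma up_ne_zero (x : Fin d → ℕ) (i : Fin d) : up x i ≠ 0 := by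
  intro h
  have := congrFun h i
  simp at this

lemma dn_up (x : Fin d → ℕ) (i : Fin d) : dn (up x i) i = x := by
  funext l
  by_cases h : l = i
  · subst h; simp [dn, up]
  · rw [dn_other _ h, up_other _ h]

lemma up_dn {x : Fin d → ℕ} {i : Fin d} (h : 1 ≤ x i) : up (dn x i) i = x := by
  funext l
  by_cases hl : l = i
  · subst hl
    rw [up_self, dn_self]
    omega
  · rw [up_other _ hl, dn_other _ hl]

lemma dn_le (x : Fin d → ℕ) (i l : Fin d) : dn x i l ≤ x l := by
  by_cases h : l = i
  · subst h; rw [dn_self]; omega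
  · rw [dn_other _ h]

lemma nsupN_dn_of_other {x : Fin d → ℕ} {i i' : Fin d} (hne : i' ≠ i)
    (h : x i' = nsupN x) : nsupN (dn x i) = nsupN x := by
  apply le_antisymm
  · exact nsupN_le_iff.2 fun l => le_trans (dn_le x i l) (le_nsupN x l)
  · calc nsupN x = x i' := h.symm
      _ = dn x i i' := (dn_other x hne).symm
      _ ≤ nsupN (dn x i) := le_nsupN _ _

lemma nsupN_dn_of_unique {x : Fin d → ℕ} {i : Fin d} (hi : x i = nsupN x)
    (h : ∀ l, l ≠ i → x l < nsupN x) : nsupN (dn x i) = nsupN x - 1 := by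
  apply le_antisymm
  · refine nsupN_le_iff.2 fun l => ?_
    by_cases hl : l = i
    · subst hl; rw [dn_self]; omega
    · rw [dn_other _ hl]
      have := h l hl
      omega
  · calc nsupN x - 1 = dn x i i := by rw [dn_self, hi]
      _ ≤ nsupN (dn x i) := le_nsupN _ _

lemma FF_nonneg (x : Fin d → ℕ) (i : Fin d) : 0 ≤ FF x i := by
  unfold FF
  split
  · exact le_refl 0
  · positivity

lemma FF_le (hd : 1 ≤ d) (x : Fin d → ℕ) (i : Fin d) : FF x i ≤ 4 / d := by
  unfold FF
  split
  · positivity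
  · rename_i hx
    have hm : 1 ≤ nsupN x := nsupN_pos hx
    have hm' : (1:ℝ) ≤ (nsupN x : ℝ) := by exact_mod_cast hm
    have hd' : (1:ℝ) ≤ (d : ℝ) := by exact_mod_cast hd
    have h1 : ((x i : ℕ) : ℝ) ≤ (nsupN x : ℝ) := by exact_mod_cast le_nsupN x i
    have h2 : ((min (x i + 1) (nsupN x) : ℕ) : ℝ) ≤ (nsupN x : ℝ) := by
      exact_mod_cast min_le_right (x i + 1) (nsupN x)
    rw [div_le_div_iff₀ (by push_cast; nlinarith) (by nlinarith : (0:ℝ) < (d:ℝ))]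
    push_cast
    push_cast at h1 h2
    nlinarith


lemma FF_eval {x : Fin d → ℕ} (hx : x ≠ 0) (i : Fin d) :
    FF x i = ((2 * (x i + min (x i + 1) (nsupN x)) : ℕ) : ℝ) / ((d * nsupN x : ℕ) : ℝ) :=
  if_neg hx

lemma cast_den_pos (hd : 1 ≤ d) {m : ℕ} (hm : 1 ≤ m) : (0:ℝ) < ((d * m : ℕ) : ℝ) := by
  have : 1 ≤ d * m := Nat.one_le_iff_ne_zero.2 (by positivity)
  exact_mod_cast Nat.lt_of_lt_of_le Nat.zero_lt_one this

lemma frac_ge (hd : 1 ≤ d) {m A B : ℕ} (hm : 1 ≤ m) (hBA : B ≤ A) (h2 : 2 ≤ A - B) :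
    2 / ((d : ℝ) * (m : ℝ)) ≤ ((A:ℕ):ℝ) / ((d * m : ℕ):ℝ) - ((B:ℕ):ℝ) / ((d * m : ℕ):ℝ) := by
  rw [div_sub_div_same, ← Nat.cast_sub hBA]
  have hden : (0:ℝ) < ((d*m:ℕ):ℝ) := cast_den_pos hd hm
  have hcast : ((d*m:ℕ):ℝ) = (d:ℝ) * (m:ℝ) := by push_cast; ring
  rw [hcast] at hden ⊢
  gcongr
  exact_mod_cast h2

/-- term of the divergence -/
noncomputable def tdiv (x : Fin d → ℕ) (i : Fin d) : ℝ :=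
  FF x i - (if 1 ≤ x i then FF (dn x i) i else 0)

lemma tdiv_lt (hd : 1 ≤ d) {x : Fin d → ℕ} (hx : x ≠ 0) {i : Fin d}
    (hlt : x i < nsupN x) : 2 / ((d : ℝ) * (nsupN x : ℝ)) ≤ tdiv x i := by
  have hm : 1 ≤ nsupN x := nsupN_pos hx
  obtain ⟨i', hi'⟩ := exists_eq_nsupN hd x
  have hne : i' ≠ i := by intro h; rw [h] at hi'; omega
  unfold tdiv
  by_cases h1 : 1 ≤ x i
  · rw [if_pos h1]
    have hdn0 : dn x i ≠ 0 := by
      apply ne_zero_of_nsupN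
      rw [nsupN_dn_of_other hne hi']; exact hm
    rw [FF_eval hx, FF_eval hdn0, nsupN_dn_of_other hne hi', dn_self]
    exact frac_ge hd hm (by omega) (by omega)
  · rw [if_neg h1]
    have hxi : x i = 0 := by omega
    rw [FF_eval hx, hxi, sub_zero]
    have h0 : ((0:ℕ):ℝ) / ((d * nsupN x : ℕ):ℝ) = 0 := by simp
    calc 2 / ((d : ℝ) * (nsupN x : ℝ))
        ≤ ((2 * (0 + min (0 + 1) (nsupN x)) : ℕ):ℝ) / ((d * nsupN x : ℕ):ℝ) - ((0:ℕ):ℝ) / ((d * nsupN x : ℕ):ℝ) :=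
          frac_ge hd hm (by omega) (by omega)
      _ = ((2 * (0 + min (0 + 1) (nsupN x)) : ℕ):ℝ) / ((d * nsupN x : ℕ):ℝ) := by rw [h0, sub_zero]

lemma tdiv_two_max (hd : 1 ≤ d) {x : Fin d → ℕ} (hx : x ≠ 0) {i i' : Fin d}
    (hi : x i = nsupN x) (hne : i' ≠ i) (hi' : x i' = nsupN x) :
    2 / ((d : ℝ) * (nsupN x : ℝ)) ≤ tdiv x i := by
  have hm : 1 ≤ nsupN x := nsupN_pos hx
  have h1 : 1 ≤ x i := by omega
  unfold tdiv
  rw [if_pos h1]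
  have hdn0 : dn x i ≠ 0 := by
    apply ne_zero_of_nsupN
    rw [nsupN_dn_of_other hne hi']; exact hm
  rw [FF_eval hx, FF_eval hdn0, nsupN_dn_of_other hne hi', dn_self, hi]
  exact frac_ge hd hm (by omega) (by omega)

lemma cast_mul_div_cancel (hd : 1 ≤ d) {k : ℕ} (hk : 1 ≤ k) (c : ℕ) :
    ((c * k : ℕ):ℝ) / ((d * k : ℕ):ℝ) = (c:ℝ) / (d:ℝ) := by
  have hk0 : ((k:ℕ):ℝ) ≠ 0 := by
    have : (0:ℝ) < (k:ℝ) := by exact_mod_cast hk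
    linarith
  push_cast
  rw [mul_comm (c:ℝ), mul_comm (d:ℝ), mul_div_mul_left _ _ hk0]

lemma tdiv_nonneg (hd : 1 ≤ d) {x : Fin d → ℕ} (hx : x ≠ 0) (i : Fin d) :
    0 ≤ tdiv x i := by
  have hm : 1 ≤ nsupN x := nsupN_pos hx
  by_cases h1 : 1 ≤ x i
  · by_cases hlt : x i < nsupN x
    · refine le_trans ?_ (tdiv_lt hd hx hlt)
      positivity
    · have hi : x i = nsupN x := le_antisymm (le_nsupN x i) (by omega)
      by_cases hex : ∃ i', i' ≠ i ∧ x i' = nsupN x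
      · obtain ⟨i', hne, hi'⟩ := hex
        refine le_trans ?_ (tdiv_two_max hd hx hi hne hi')
        positivity
      · push_neg at hex
        have huniq : ∀ l, l ≠ i → x l < nsupN x := fun l hl =>
          lt_of_le_of_ne (le_nsupN x l) (hex l hl)
        unfold tdiv
        rw [if_pos h1]
        by_cases hdn : dn x i = 0
        · rw [hdn]
          have h0 : FF (0 : Fin d → ℕ) i = 0 := if_pos rfl
          rw [h0, sub_zero]
          exact FF_nonneg x i
        · have hmd : nsupN (dn x i) = nsupN x - 1 := nsupN_dn_of_unique hi huniq
          have hm2 : 1 ≤ nsupN x - 1 := by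
            have h := nsupN_pos hdn; rw [hmd] at h; exact h
          rw [FF_eval hx, FF_eval hdn, hmd, dn_self, hi]
          set m := nsupN x with hmdef
          have hmin1 : min (m + 1) m = m := by omega
          have hmin2 : min (m - 1 + 1) (m - 1) = m - 1 := by omega
          rw [hmin1, hmin2, sub_nonneg]
          have h4 : (2 * (m + m) : ℕ) = 4 * m := by ring
          have h4' : (2 * (m - 1 + (m - 1)) : ℕ) = 4 * (m - 1) := by omega
          rw [h4, h4', cast_mul_div_cancel hd hm, cast_mul_div_cancel hd hm2]
  · unfold tdiv
    rw [if_neg h1, sub_zero]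
    exact FF_nonneg x i

lemma key_div (hd : 2 ≤ d) {x : Fin d → ℕ} (hx : x ≠ 0) :
    1 / (nsupN x : ℝ) ≤ ∑ i, tdiv x i := by
  have hd1 : 1 ≤ d := by omega
  have hm : 1 ≤ nsupN x := nsupN_pos hx
  have hmR : (1:ℝ) ≤ (nsupN x : ℝ) := by exact_mod_cast hm
  have hdR : (2:ℝ) ≤ (d:ℝ) := by exact_mod_cast hd
  have hm0 : (0:ℝ) < (nsupN x : ℝ) := by linarith
  have hd0 : (0:ℝ) < (d:ℝ) := by linarith
  obtain ⟨i₀, hi₀⟩ := exists_eq_nsupN hd1 x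
  by_cases hex : ∃ i', i' ≠ i₀ ∧ x i' = nsupN x
  · obtain ⟨i₁, hne₁, hi₁⟩ := hex
    have hall : ∀ i ∈ Finset.univ, 2 / ((d:ℝ) * (nsupN x : ℝ)) ≤ tdiv x i := by
      intro i _
      by_cases hlt : x i < nsupN x
      · exact tdiv_lt hd1 hx hlt
      · have hi : x i = nsupN x := le_antisymm (le_nsupN x i) (by omega)
        by_cases hii : i = i₀
        · exact tdiv_two_max hd1 hx hi (by simpa [hii] using hne₁) hi₁
        · exact tdiv_two_max hd1 hx hi (fun h => hii h.symm) hi₀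
    have hstep : (d:ℝ) * (2 / ((d:ℝ) * (nsupN x:ℝ))) = 2 / (nsupN x:ℝ) := by
      field_simp
    calc (1:ℝ) / (nsupN x : ℝ) ≤ 2 / (nsupN x : ℝ) := by gcongr; norm_num
      _ = (d:ℝ) * (2 / ((d:ℝ) * (nsupN x:ℝ))) := hstep.symm
      _ ≤ ∑ i, tdiv x i := by
          have h := Finset.card_nsmul_le_sum Finset.univ (tdiv x) _ hall
          simpa [Finset.card_univ, nsmul_eq_mul] using h
  · push_neg at hex
    have huniq : ∀ l, l ≠ i₀ → x l < nsupN x := fun l hl =>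
      lt_of_le_of_ne (le_nsupN x l) (hex l hl)
    have hsum : ∑ i, tdiv x i = tdiv x i₀ + ∑ i ∈ Finset.univ.erase i₀, tdiv x i :=
      (Finset.add_sum_erase _ _ (Finset.mem_univ i₀)).symm
    have herase : ∀ i ∈ Finset.univ.erase i₀, 2 / ((d:ℝ) * (nsupN x : ℝ)) ≤ tdiv x i := by
      intro i hi
      exact tdiv_lt hd1 hx (huniq i (Finset.ne_of_mem_erase hi))
    have hcard : (Finset.univ.erase i₀).card = d - 1 := by
      rw [Finset.card_erase_of_mem (Finset.mem_univ i₀), Finset.card_univ, Fintype.card_fin]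
    have hcastd : ((d - 1 : ℕ):ℝ) = (d:ℝ) - 1 := by
      rw [Nat.cast_sub hd1]; norm_num
    have hstep : (1:ℝ) / (nsupN x : ℝ) ≤ ((d-1:ℕ):ℝ) * (2 / ((d:ℝ) * (nsupN x:ℝ))) := by
      rw [hcastd, div_le_iff₀ hm0]
      have hrw : ((d:ℝ) - 1) * (2 / ((d:ℝ) * (nsupN x:ℝ))) * (nsupN x:ℝ)
          = (2 * ((d:ℝ) - 1)) / (d:ℝ) := by
        field_simp
      rw [hrw, le_div_iff₀ hd0]
      nlinarith
    calc (1:ℝ) / (nsupN x : ℝ)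
        ≤ ((d-1:ℕ):ℝ) * (2 / ((d:ℝ) * (nsupN x:ℝ))) := hstep
      _ ≤ tdiv x i₀ + ∑ i ∈ Finset.univ.erase i₀, tdiv x i := by
          have h := Finset.card_nsmul_le_sum _ _ _ herase
          rw [hcard] at h
          have h' : ((d-1:ℕ):ℝ) * (2 / ((d:ℝ) * (nsupN x:ℝ))) ≤ ∑ i ∈ Finset.univ.erase i₀, tdiv x i := by
            simpa [nsmul_eq_mul] using h
          have h0 := tdiv_nonneg hd1 hx i₀
          linarith
      _ = ∑ i, tdiv x i := hsum.symm


lemma FF_zero (i : Fin d) : FF (0 : Fin d → ℕ) i = 0 := if_pos rfl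

lemma nsupN_up_le (x : Fin d → ℕ) (i : Fin d) : nsupN (up x i) ≤ nsupN x + 1 := by
  refine nsupN_le_iff.2 fun l => ?_
  by_cases h : l = i
  · subst h; rw [up_self]; have := le_nsupN x l; omega
  · rw [up_other _ h]; have := le_nsupN x l; omega

/-- truncated ball -/
def BB (d R : ℕ) : Finset (Fin d → ℕ) := Fintype.piFinset fun _ : Fin d => Finset.range (R + 1)

lemma mem_BB {R : ℕ} {x : Fin d → ℕ} : x ∈ BB d R ↔ ∀ i, x i ≤ R := by
  simp [BB, Fintype.mem_piFinset, Nat.lt_succ_iff]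

lemma mem_BB' {R : ℕ} {x : Fin d → ℕ} : x ∈ BB d R ↔ nsupN x ≤ R := by
  rw [mem_BB, nsupN_le_iff]

/-- truncated flow -/
noncomputable def eF (R : ℕ) (x : Fin d → ℕ) (i : Fin d) : ℝ :=
  if nsupN (up x i) ≤ R then FF x i else 0

lemma eF_nonneg (R : ℕ) (x : Fin d → ℕ) (i : Fin d) : 0 ≤ eF R x i := by
  unfold eF; split
  · exact FF_nonneg x i
  · exact le_refl 0

lemma eF_le (hd : 1 ≤ d) (R : ℕ) (x : Fin d → ℕ) (i : Fin d) : eF R x i ≤ 4 / d := by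
  unfold eF; split
  · exact FF_le hd x i
  · positivity

/-- truncated divergence -/
noncomputable def cc (R : ℕ) (x : Fin d → ℕ) : ℝ :=
  (∑ i, eF R x i) - ∑ i, (if 1 ≤ x i then eF R (dn x i) i else 0)

lemma cc_zero (R : ℕ) : cc R (0 : Fin d → ℕ) = 0 := by
  unfold cc
  have h1 : ∀ i : Fin d, eF R (0 : Fin d → ℕ) i = 0 := by
    intro i; unfold eF; split
    · exact FF_zero i
    · rfl
  have h2 : ∀ i : Fin d, (if 1 ≤ (0 : Fin d → ℕ) i then eF R (dn 0 i) i else 0) = 0 := by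
    intro i
    rw [if_neg]
    simp
  rw [Finset.sum_congr rfl fun i _ => h1 i, Finset.sum_congr rfl fun i _ => h2 i]
  simp

lemma cc_bulk (hd : 2 ≤ d) {R : ℕ} {x : Fin d → ℕ} (hx : x ≠ 0) (hR : nsupN x < R) :
    1 / (nsupN x : ℝ) ≤ cc R x := by
  have h1 : ∀ i : Fin d, eF R x i = FF x i := by
    intro i; unfold eF
    rw [if_pos (le_trans (nsupN_up_le x i) (by omega))]
  have h2 : ∀ i : Fin d, (if 1 ≤ x i then eF R (dn x i) i else 0)
      = (if 1 ≤ x i then FF (dn x i) i else 0) := by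
    intro i
    by_cases h : 1 ≤ x i
    · rw [if_pos h, if_pos h]
      unfold eF
      rw [if_pos]
      rw [up_dn h]
      omega
    · rw [if_neg h, if_neg h]
  unfold cc
  rw [Finset.sum_congr rfl fun i _ => h1 i, Finset.sum_congr rfl fun i _ => h2 i,
    ← Finset.sum_sub_distrib]
  exact key_div hd hx

lemma cc_ge (hd : 1 ≤ d) (R : ℕ) (x : Fin d → ℕ) : -4 ≤ cc R x := by
  have hd0 : (0:ℝ) < (d:ℝ) := by exact_mod_cast hd
  have hA : (0:ℝ) ≤ ∑ i, eF R x i :=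
    Finset.sum_nonneg fun i _ => eF_nonneg R x i
  have hB : ∑ i, (if 1 ≤ x i then eF R (dn x i) i else 0) ≤ 4 := by
    calc ∑ i, (if 1 ≤ x i then eF R (dn x i) i else 0) ≤ ∑ _i : Fin d, (4/(d:ℝ)) := by
          refine Finset.sum_le_sum fun i _ => ?_
          split
          · exact eF_le hd R (dn x i) i
          · positivity
      _ = 4 := by
          rw [Finset.sum_const, Finset.card_univ, Fintype.card_fin, nsmul_eq_mul]
          field_simp
  unfold cc
  linarith

section UV

variable (u : (Fin d → ℕ) → ℂ) (p : ℝ)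

noncomputable def vv (x : Fin d → ℕ) : ℝ := ‖u x‖ ^ p

noncomputable def ww (x y : Fin d → ℕ) : ℝ := ‖u x - u y‖ ^ p

lemma vv_nonneg (x : Fin d → ℕ) : 0 ≤ vv u p x :=
  Real.rpow_nonneg (norm_nonneg _) p

lemma ww_nonneg (x y : Fin d → ℕ) : 0 ≤ ww u p x y :=
  Real.rpow_nonneg (norm_nonneg _) p

end UV

lemma rpow_subadd {p : ℝ} (hp0 : 0 < p) (hp1 : p ≤ 1) {a b : ℝ} (ha : 0 ≤ a) (hb : 0 ≤ b) :
    (a + b) ^ p ≤ a ^ p + b ^ p := by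
  have h := NNReal.rpow_add_le_add_rpow a.toNNReal b.toNNReal hp0.le hp1
  have h2 := NNReal.coe_le_coe.2 h
  rw [NNReal.coe_rpow] at h2
  push_cast at h2
  rw [Real.coe_toNNReal _ ha, Real.coe_toNNReal _ hb] at h2
  exact h2

lemma abs_vv_sub {p : ℝ} (hp0 : 0 < p) (hp1 : p ≤ 1) (u : (Fin d → ℕ) → ℂ)
    (x y : Fin d → ℕ) : |vv u p x - vv u p y| ≤ ww u p x y := by
  have key : ∀ z w : ℂ, ‖z‖ ^ p - ‖w‖ ^ p ≤ ‖z - w‖ ^ p := by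
    intro z w
    have h1 : ‖z‖ ≤ ‖w‖ + ‖z - w‖ := by
      calc ‖z‖ = ‖w + (z - w)‖ := by ring_nf
        _ ≤ ‖w‖ + ‖z - w‖ := norm_add_le _ _
    have h2 : ‖z‖ ^ p ≤ (‖w‖ + ‖z - w‖) ^ p :=
      Real.rpow_le_rpow (norm_nonneg _) h1 hp0.le
    have h3 := rpow_subadd hp0 hp1 (norm_nonneg w)
      (norm_nonneg (z - w))
    linarith
  rw [abs_sub_le_iff]
  constructor
  · exact key (u x) (u y)
  · have := key (u y) (u x)
    unfold vv ww
    rwa [norm_sub_rev (u y) (u x)] at this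

lemma reindex (R : ℕ) (i : Fin d) (g : (Fin d → ℕ) → ℝ) :
    ∑ x ∈ BB d R, eF R x i * g (up x i)
      = ∑ y ∈ BB d R, (if 1 ≤ y i then eF R (dn y i) i * g y else 0) := by
  have hL : ∑ x ∈ (BB d R).filter (fun x => x i + 1 ≤ R), eF R x i * g (up x i)
      = ∑ x ∈ BB d R, eF R x i * g (up x i) := by
    refine Finset.sum_filter_of_ne fun x hx hne => ?_
    by_contra hgt
    have : eF R x i = 0 := by
      unfold eF
      rw [if_neg]
      intro hle
      have := le_nsupN (up x i) i
      rw [up_self] at this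
      omega
    rw [this, zero_mul] at hne
    exact hne rfl
  have hR : ∑ y ∈ BB d R, (if 1 ≤ y i then eF R (dn y i) i * g y else 0)
      = ∑ y ∈ (BB d R).filter (fun y => 1 ≤ y i), eF R (dn y i) i * g y :=
    (Finset.sum_filter _ _).symm
  rw [← hL, hR]
  refine Finset.sum_nbij' (fun x => up x i) (fun y => dn y i) ?_ ?_ ?_ ?_ ?_
  · intro x hx
    rw [Finset.mem_filter] at hx ⊢
    obtain ⟨hx1, hx2⟩ := hx
    rw [mem_BB] at hx1 ⊢
    refine ⟨fun l => ?_, ?_⟩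
    · show up x i l ≤ R
      by_cases h : l = i
      · subst h; rw [up_self]; omega
      · rw [up_other _ h]; exact hx1 l
    · show 1 ≤ up x i i
      rw [up_self]; omega
  · intro y hy
    rw [Finset.mem_filter] at hy ⊢
    obtain ⟨hy1, hy2⟩ := hy
    rw [mem_BB] at hy1 ⊢
    refine ⟨fun l => ?_, ?_⟩
    · show dn y i l ≤ R
      exact le_trans (dn_le y i l) (hy1 l)
    · show dn y i i + 1 ≤ R
      rw [dn_self]
      have h2' : 1 ≤ y i := hy2
      have h1' : y i ≤ R := hy1 i
      omega
  · intro x hx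
    exact dn_up x i
  · intro y hy
    rw [Finset.mem_filter] at hy
    exact up_dn hy.2
  · intro x hx
    rw [dn_up]

/-- summation by parts -/
lemma sbp (R : ℕ) (g : (Fin d → ℕ) → ℝ) :
    ∑ x ∈ BB d R, ∑ i, eF R x i * (g x - g (up x i))
      = ∑ x ∈ BB d R, g x * cc R x := by
  have h1 : ∀ x ∈ BB d R, ∑ i, eF R x i * (g x - g (up x i))
      = g x * (∑ i, eF R x i) - ∑ i, eF R x i * g (up x i) := by
    intro x _
    rw [Finset.mul_sum, ← Finset.sum_sub_distrib]
    refine Finset.sum_congr rfl fun i _ => by ring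
  rw [Finset.sum_congr rfl h1, Finset.sum_sub_distrib]
  have h2 : ∑ x ∈ BB d R, ∑ i, eF R x i * g (up x i)
      = ∑ x ∈ BB d R, g x * ∑ i, (if 1 ≤ x i then eF R (dn x i) i else 0) := by
    rw [Finset.sum_comm]
    have h3 : ∀ i ∈ (Finset.univ : Finset (Fin d)), ∑ x ∈ BB d R, eF R x i * g (up x i)
        = ∑ y ∈ BB d R, (if 1 ≤ y i then eF R (dn y i) i * g y else 0) :=
      fun i _ => reindex R i g
    rw [Finset.sum_congr rfl h3, Finset.sum_comm]
    refine Finset.sum_congr rfl fun x _ => ?_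
    rw [Finset.mul_sum]
    refine Finset.sum_congr rfl fun i _ => ?_
    split
    · ring
    · ring
  rw [h2]
  unfold cc
  rw [← Finset.sum_sub_distrib]
  refine Finset.sum_congr rfl fun x _ => by ring

/-- the master finite inequality -/
lemma master (hd : 2 ≤ d) (u : (Fin d → ℕ) → ℂ) {p : ℝ} (hp0 : 0 < p) (hp1 : p ≤ 1)
    (R : ℕ) (hR : 1 ≤ R) :
    ∑ x ∈ (BB d R).filter (fun x => ¬ nsupN x = R ∧ x ≠ 0), vv u p x / (nsupN x : ℝ)
      ≤ (4 / d) * ∑ x ∈ (BB d R).filter (fun x => x ≠ 0), (∑ i, ww u p x (up x i))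
        + 4 * ∑ x ∈ (BB d R).filter (fun x => nsupN x = R), vv u p x := by
  have hd1 : 1 ≤ d := by omega
  -- upper bound for S1
  have hup : ∑ x ∈ BB d R, ∑ i, eF R x i * (vv u p x - vv u p (up x i))
      ≤ (4 / d) * ∑ x ∈ (BB d R).filter (fun x => x ≠ 0), (∑ i, ww u p x (up x i)) := by
    rw [Finset.mul_sum, Finset.sum_filter]
    refine Finset.sum_le_sum fun x _ => ?_
    by_cases hx : x = 0
    · rw [if_neg (by simp [hx])]
      subst hx
      refine Finset.sum_nonpos fun i _ => ?_
      have : eF R (0 : Fin d → ℕ) i = 0 := by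
        unfold eF; split
        · exact FF_zero i
        · rfl
      rw [this, zero_mul]
    · rw [if_pos hx, Finset.mul_sum]
      refine Finset.sum_le_sum fun i _ => ?_
      calc eF R x i * (vv u p x - vv u p (up x i))
          ≤ eF R x i * |vv u p x - vv u p (up x i)| := by
            refine mul_le_mul_of_nonneg_left (le_abs_self _) (eF_nonneg R x i)
        _ ≤ (4 / d) * ww u p x (up x i) := by
            refine mul_le_mul (eF_le hd1 R x i) (abs_vv_sub hp0 hp1 u x (up x i))
              (abs_nonneg _) (by positivity)
  -- lower bound for S1
  have hlow : ∑ x ∈ (BB d R).filter (fun x => ¬ nsupN x = R ∧ x ≠ 0), vv u p x / (nsupN x : ℝ)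
        - 4 * ∑ x ∈ (BB d R).filter (fun x => nsupN x = R), vv u p x
      ≤ ∑ x ∈ BB d R, vv u p x * cc R x := by
    rw [← Finset.sum_filter_add_sum_filter_not (BB d R) (fun x => nsupN x = R)
      (fun x => vv u p x * cc R x)]
    have hA : -(4 * ∑ x ∈ (BB d R).filter (fun x => nsupN x = R), vv u p x)
        ≤ ∑ x ∈ (BB d R).filter (fun x => nsupN x = R), vv u p x * cc R x := by
      rw [neg_le, ← Finset.sum_neg_distrib, Finset.mul_sum]
      refine Finset.sum_le_sum fun x _ => ?_
      have h1 : -(vv u p x * cc R x) = vv u p x * (- cc R x) := by ring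
      rw [h1]
      calc vv u p x * (- cc R x) ≤ vv u p x * 4 := by
            refine mul_le_mul_of_nonneg_left ?_ (vv_nonneg u p x)
            have := cc_ge hd1 R x
            linarith
        _ = 4 * vv u p x := by ring
    have hB : ∑ x ∈ (BB d R).filter (fun x => ¬ nsupN x = R ∧ x ≠ 0), vv u p x / (nsupN x : ℝ)
        ≤ ∑ x ∈ (BB d R).filter (fun x => ¬ nsupN x = R), vv u p x * cc R x := by
      have heq : (BB d R).filter (fun x => ¬ nsupN x = R ∧ x ≠ 0)
          = ((BB d R).filter (fun x => ¬ nsupN x = R)).filter (fun x => x ≠ 0) := by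
        rw [Finset.filter_filter]
      rw [heq]
      calc ∑ x ∈ ((BB d R).filter (fun x => ¬ nsupN x = R)).filter (fun x => x ≠ 0),
            vv u p x / (nsupN x : ℝ)
          = ∑ x ∈ (BB d R).filter (fun x => ¬ nsupN x = R),
            (if x ≠ 0 then vv u p x / (nsupN x : ℝ) else 0) := Finset.sum_filter _ _
        _ ≤ ∑ x ∈ (BB d R).filter (fun x => ¬ nsupN x = R), vv u p x * cc R x := by
            refine Finset.sum_le_sum fun x hx => ?_
            rw [Finset.mem_filter, mem_BB'] at hx
            by_cases h0 : x = 0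
            · rw [if_neg (by simp [h0]), h0, cc_zero, mul_zero]
            · rw [if_pos h0]
              have hlt : nsupN x < R := lt_of_le_of_ne hx.1 hx.2
              have hcc := cc_bulk hd h0 hlt
              have hv := vv_nonneg u p x
              calc vv u p x / (nsupN x : ℝ) = vv u p x * (1 / (nsupN x : ℝ)) := by ring
                _ ≤ vv u p x * cc R x := mul_le_mul_of_nonneg_left hcc hv
      
    linarith
  rw [← sbp R (vv u p)] at hlow
  linarith


lemma nsup_eq (x : Fin d → ℕ) : nsup x = (nsupN x : ℝ) := rfl

lemma nbr_up (x : Fin d → ℕ) (i : Fin d) : nbr x (up x i) := by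
  unfold nbr
  rw [Finset.sum_eq_single i]
  · rw [up_self]; push_cast; ring
  · intro l _ hl
    rw [up_other _ hl]
    ring
  · intro h
    exact absurd (Finset.mem_univ i) h

end HardyAux

open HardyAux

/-- Discrete Hardy inequality on `ℤ₊^d` for `0 < p ≤ 1 < d`, with constant `c(p)/d`. -/
theorem hardy_p_small (p : ℝ) (hp0 : 0 < p) (hp1 : p ≤ 1) :
    ∃ c : ℝ, 0 ≤ c ∧ ∀ (d : ℕ), 2 ≤ d → ∀ u : (Fin d → ℕ) → ℂ,
      (∑' (j : {j : Fin d → ℕ // j ≠ 0}),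
          ENNReal.ofReal (‖u j.1‖ ^ p / nsup j.1)) ≠ ⊤ →
      (∑' (j : {j : Fin d → ℕ // j ≠ 0}),
          ENNReal.ofReal (‖u j.1‖ ^ p / nsup j.1))
        ≤ ENNReal.ofReal (c / d) *
            ∑' (j : {j : Fin d → ℕ // j ≠ 0})
              (k : {k : Fin d → ℕ // k ≠ 0 ∧ nbr j.1 k}),
              ENNReal.ofReal (‖u j.1 - u k.1‖ ^ p) := by
  refine ⟨4, by norm_num, ?_⟩
  intro d hd u hT
  set f : {j : Fin d → ℕ // j ≠ 0} → ℝ≥0∞ :=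
    fun j => ENNReal.ofReal (‖u j.1‖ ^ p / nsup j.1) with hf
  set T : ℝ≥0∞ := ∑' (j : {j : Fin d → ℕ // j ≠ 0}), f j with hTdef
  set A : (Fin d → ℕ) → ℝ≥0∞ := fun x =>
    ∑' (k : {k : Fin d → ℕ // k ≠ 0 ∧ nbr x k}), ENNReal.ofReal (‖u x - u k.1‖ ^ p)
    with hA
  set Sig2 : ℝ≥0∞ := ∑' (j : {j : Fin d → ℕ // j ≠ 0}), A j.1 with hSig2
  set X : ℝ≥0∞ := ENNReal.ofReal ((4:ℝ) / d) * Sig2 with hX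
  show T ≤ X
  -- f in vv form
  have hfeq : ∀ (j : {j : Fin d → ℕ // j ≠ 0}), f j = ENNReal.ofReal (vv u p j.1 / (nsupN j.1 : ℝ)) :=
    fun j => rfl
  -- shell finsets
  set shJ : ℕ → Finset {j : Fin d → ℕ // j ≠ 0} :=
    fun R => ((BB d R).filter (fun x => nsupN x = R)).subtype (fun x => x ≠ 0) with hshJ
  set β : ℕ → ℝ≥0∞ := fun R => ∑ j ∈ shJ R, f j with hβ
  have hβ_eq : ∀ R, 1 ≤ R →
      β R = ∑ x ∈ (BB d R).filter (fun x => nsupN x = R),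
        ENNReal.ofReal (vv u p x / (nsupN x : ℝ)) := by
    intro R hR
    have hfl : ((BB d R).filter (fun x => nsupN x = R)).filter (fun x => x ≠ 0)
        = (BB d R).filter (fun x => nsupN x = R) := by
      refine Finset.filter_true_of_mem fun x hx => ?_
      rw [Finset.mem_filter] at hx
      intro h0
      rw [h0] at hx
      have : nsupN (0 : Fin d → ℕ) = 0 := by
        simp [nsupN]
      omega
    calc β R = ∑ j ∈ shJ R, ENNReal.ofReal (vv u p j.1 / (nsupN j.1 : ℝ)) :=
        Finset.sum_congr rfl fun j _ => hfeq j
      _ = ∑ x ∈ ((BB d R).filter (fun x => nsupN x = R)).filter (fun x => x ≠ 0),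
            ENNReal.ofReal (vv u p x / (nsupN x : ℝ)) :=
          Finset.sum_subtype_eq_sum_filter (fun x => ENNReal.ofReal (vv u p x / (nsupN x : ℝ)))
      _ = ∑ x ∈ (BB d R).filter (fun x => nsupN x = R),
            ENNReal.ofReal (vv u p x / (nsupN x : ℝ)) := by rw [hfl]
  -- sums of shells bounded by T
  have hshdisj : ∀ t : Finset ℕ, (↑t : Set ℕ).PairwiseDisjoint shJ := by
    intro t R hR R' hR' hne
    rw [Function.onFun, Finset.disjoint_left]
    intro j hj hj'
    simp only [hshJ, Finset.mem_subtype, Finset.mem_filter] at hj hj'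
    exact hne (hj.2 ▸ hj'.2)
  have hshell_le : ∀ t : Finset ℕ, ∑ R ∈ t, β R ≤ T := by
    intro t
    rw [hβ]
    rw [← Finset.sum_biUnion (hshdisj t)]
    exact ENNReal.sum_le_tsum _
  -- liminf step
  have hliminf : ∀ (ε : ℝ≥0∞), ε ≠ 0 → ∀ R₀ : ℕ, ∃ R, R₀ ≤ R ∧ 1 ≤ R ∧ (R : ℝ≥0∞) * β R < ε := by
    intro ε hε R₀
    by_contra hcon
    push_neg at hcon
    have hharm : ∑' (k : ℕ), (((R₀ + 1 + k : ℕ) : ℝ≥0∞))⁻¹ = ⊤ := by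
      by_contra hne
      have hcoe : ∀ k : ℕ, (((R₀ + 1 + k : ℕ) : ℝ≥0∞))⁻¹
          = ((((R₀ + 1 + k : ℕ) : ℝ≥0))⁻¹ : ℝ≥0) := by
        intro k
        have h0 : ((R₀ + 1 + k : ℕ) : ℝ≥0) ≠ 0 := Nat.cast_ne_zero.2 (by omega)
        rw [ENNReal.coe_inv h0, ENNReal.coe_natCast]
      rw [tsum_congr hcoe] at hne
      have hsumm := ENNReal.tsum_coe_ne_top_iff_summable.1 hne
      have hsumm2 : Summable (fun k : ℕ => (((R₀ + 1 + k : ℕ) : ℝ))⁻¹) := by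
        have h2 := NNReal.summable_coe.2 hsumm
        simpa using h2
      have hsumm3 : Summable (fun k : ℕ => ((k : ℝ))⁻¹) := by
        have heq : (fun k : ℕ => (((R₀ + 1 + k : ℕ) : ℝ))⁻¹)
            = fun k : ℕ => (((k + (R₀ + 1) : ℕ) : ℝ))⁻¹ := by
          funext k
          congr 2
          omega
        rw [heq] at hsumm2
        exact (summable_nat_add_iff (R₀ + 1)).1 (by exact_mod_cast hsumm2)
      have := Real.not_summable_one_div_natCast
      simp only [one_div] at this
      exact this hsumm3
    have hterm : ∀ k : ℕ, ε * (((R₀ + 1 + k : ℕ) : ℝ≥0∞))⁻¹ ≤ β (R₀ + 1 + k) := by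
      intro k
      set R := R₀ + 1 + k
      have hR0 : ((R : ℕ) : ℝ≥0∞) ≠ 0 := Nat.cast_ne_zero.2 (by omega)
      have hRT : ((R : ℕ) : ℝ≥0∞) ≠ ⊤ := ENNReal.natCast_ne_top R
      have h := hcon R (by omega) (by omega)
      calc ε * (((R : ℕ) : ℝ≥0∞))⁻¹ ≤ ((R : ℕ) : ℝ≥0∞) * β R * (((R : ℕ) : ℝ≥0∞))⁻¹ :=
            mul_le_mul_left h _
        _ = β R * (((R : ℕ) : ℝ≥0∞) * (((R : ℕ) : ℝ≥0∞))⁻¹) := by ring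
        _ = β R := by rw [ENNReal.mul_inv_cancel hR0 hRT, mul_one]
    have hγT : ∑' (k : ℕ), β (R₀ + 1 + k) ≤ T := by
      rw [ENNReal.tsum_eq_iSup_sum]
      refine iSup_le fun t => ?_
      calc ∑ k ∈ t, β (R₀ + 1 + k) = ∑ R ∈ t.image (fun k => R₀ + 1 + k), β R := by
            rw [Finset.sum_image]
            intro a _ b _ hab
            simp only at hab
            omega
        _ ≤ T := hshell_le _
    have : (⊤ : ℝ≥0∞) ≤ T := by
      calc (⊤ : ℝ≥0∞) = ε * ⊤ := (ENNReal.mul_top hε).symm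
        _ = ε * ∑' (k : ℕ), (((R₀ + 1 + k : ℕ) : ℝ≥0∞))⁻¹ := by rw [hharm]
        _ = ∑' (k : ℕ), ε * (((R₀ + 1 + k : ℕ) : ℝ≥0∞))⁻¹ := ENNReal.tsum_mul_left.symm
        _ ≤ ∑' (k : ℕ), β (R₀ + 1 + k) := ENNReal.tsum_le_tsum hterm
        _ ≤ T := hγT
    exact hT (top_le_iff.1 this)
  -- W bound
  have hWbound : ∀ R : ℕ,
      ENNReal.ofReal (∑ x ∈ (BB d R).filter (fun x => x ≠ 0), (∑ i, ww u p x (up x i))) ≤ Sig2 := by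
    intro R
    set s₀ := (BB d R).filter (fun x => x ≠ 0) with hs₀
    have h0 : ∀ x ∈ s₀, x ≠ 0 := fun x hx => (Finset.mem_filter.1 hx).2
    rw [ENNReal.ofReal_sum_of_nonneg (fun x _ => Finset.sum_nonneg fun i _ => ww_nonneg u p _ _)]
    have hstep1 : ∀ x ∈ s₀, ENNReal.ofReal (∑ i, ww u p x (up x i)) ≤ A x := by
      intro x hx
      rw [ENNReal.ofReal_sum_of_nonneg (fun i _ => ww_nonneg u p _ _)]
      have hinj : Function.Injective
          (fun i : Fin d => (⟨up x i, ⟨up_ne_zero x i, nbr_up x i⟩⟩ :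
            {k : Fin d → ℕ // k ≠ 0 ∧ nbr x k})) := by
        intro i i' hii
        have h1 : up x i i = up x i' i := congrArg (fun z => z.1 i) hii
        by_contra hne
        rw [up_self, up_other x hne] at h1
        omega
      calc ∑ i, ENNReal.ofReal (ww u p x (up x i))
          = ∑ k ∈ Finset.univ.image
              (fun i : Fin d => (⟨up x i, ⟨up_ne_zero x i, nbr_up x i⟩⟩ :
                {k : Fin d → ℕ // k ≠ 0 ∧ nbr x k})),
              ENNReal.ofReal (‖u x - u k.1‖ ^ p) := by
            rw [Finset.sum_image (fun a _ b _ h => hinj h)]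
            rfl
        _ ≤ A x := ENNReal.sum_le_tsum _
    calc ∑ x ∈ s₀, ENNReal.ofReal (∑ i, ww u p x (up x i))
        ≤ ∑ x ∈ s₀, A x := Finset.sum_le_sum hstep1
      _ = ∑ j ∈ s₀.subtype (fun x => x ≠ 0), A j.1 := by
          rw [Finset.sum_subtype_eq_sum_filter A, Finset.filter_true_of_mem h0]
      _ ≤ Sig2 := ENNReal.sum_le_tsum _
  -- main per-finset bound
  have hmain : ∀ s : Finset {j : Fin d → ℕ // j ≠ 0}, ∑ j ∈ s, f j ≤ X := by
    intro s
    refine ENNReal.le_of_forall_pos_le_add fun ε hε hXlt => ?_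
    obtain ⟨R, hRR₀, hR1, hβR⟩ := hliminf ((ε : ℝ≥0∞) / 4)
      (by simp [ENNReal.div_eq_zero_iff, hε.ne']) (1 + s.sup fun j => nsupN j.1)
    set QR := (BB d R).filter (fun x => ¬ nsupN x = R ∧ x ≠ 0) with hQR
    have hsub : s.image Subtype.val ⊆ QR := by
      intro x hx
      rw [Finset.mem_image] at hx
      obtain ⟨j, hj, rfl⟩ := hx
      have hle : nsupN j.1 ≤ s.sup fun j => nsupN j.1 :=
        Finset.le_sup (f := fun (j : {j : Fin d → ℕ // j ≠ 0}) => nsupN j.1) hj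
      have hlt : nsupN j.1 < R := by omega
      rw [hQR, Finset.mem_filter, mem_BB']
      exact ⟨by omega, by omega, j.2⟩
    calc ∑ j ∈ s, f j
        = ∑ x ∈ s.image Subtype.val, ENNReal.ofReal (vv u p x / (nsupN x : ℝ)) := by
          rw [Finset.sum_image (fun a _ b _ h => Subtype.ext h)]
          exact Finset.sum_congr rfl fun j _ => hfeq j
      _ ≤ ∑ x ∈ QR, ENNReal.ofReal (vv u p x / (nsupN x : ℝ)) :=
          Finset.sum_le_sum_of_subset hsub
      _ = ENNReal.ofReal (∑ x ∈ QR, vv u p x / (nsupN x : ℝ)) := by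
          rw [ENNReal.ofReal_sum_of_nonneg
            (fun x _ => div_nonneg (vv_nonneg u p x) (Nat.cast_nonneg _))]
      _ ≤ ENNReal.ofReal ((4 / d) * (∑ x ∈ (BB d R).filter (fun x => x ≠ 0), (∑ i, ww u p x (up x i)))
            + 4 * ∑ x ∈ (BB d R).filter (fun x => nsupN x = R), vv u p x) :=
          ENNReal.ofReal_le_ofReal (master hd u hp0 hp1 R hR1)
      _ ≤ ENNReal.ofReal ((4 / d) * (∑ x ∈ (BB d R).filter (fun x => x ≠ 0), (∑ i, ww u p x (up x i))))
            + ENNReal.ofReal (4 * ∑ x ∈ (BB d R).filter (fun x => nsupN x = R), vv u p x) :=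
          ENNReal.ofReal_add_le
      _ ≤ X + ε := by
          gcongr
          · -- first piece ≤ X
            rw [ENNReal.ofReal_mul (by positivity)]
            rw [hX]
            exact mul_le_mul_right (hWbound R) _
          · -- second piece ≤ ε
            have hAR : ENNReal.ofReal (∑ x ∈ (BB d R).filter (fun x => nsupN x = R), vv u p x)
                = (R : ℝ≥0∞) * β R := by
              rw [ENNReal.ofReal_sum_of_nonneg (fun x _ => vv_nonneg u p x), hβ_eq R hR1,
                Finset.mul_sum]
              refine Finset.sum_congr rfl fun x hx => ?_
              have hxR : nsupN x = R := (Finset.mem_filter.1 hx).2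
              have hR0 : (0:ℝ) < (R:ℝ) := by exact_mod_cast hR1
              have hmul : (R:ℝ≥0∞) * ENNReal.ofReal (vv u p x / (R:ℝ))
                  = ENNReal.ofReal ((R:ℝ) * (vv u p x / (R:ℝ))) := by
                rw [ENNReal.ofReal_mul (le_of_lt hR0), ENNReal.ofReal_natCast]
              rw [hxR, hmul]
              congr 1
              field_simp
            rw [ENNReal.ofReal_mul (by norm_num), hAR]
            calc ENNReal.ofReal 4 * ((R : ℝ≥0∞) * β R) ≤ ENNReal.ofReal 4 * ((ε:ℝ≥0∞)/4) :=
                  mul_le_mul_right hβR.le _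
              _ = (4:ℝ≥0∞) * ((ε:ℝ≥0∞)/4) := by norm_num
              _ = ε := ENNReal.mul_div_cancel' (by norm_num) (by norm_num)
    
  rw [hTdef, ENNReal.tsum_eq_iSup_sum]
  exact iSup_le hmain
end

section
/- Let 0 < d < p. Then there exists a constant c = c(d, p) < ∞ such that for every function u : ℤ₊^d → ℂ with u(0) = 0, one has ∑_{j ∈ ℤ₊^d \ {0}} |u(j)|^p / ‖j‖_∞^p ≤ c · ∑_{j ∈ ℤ₊^d \ {0}} ∑_{k ∈ ℤ₊^d, k ∼ j} |u(j) − u(k)|^p. -/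
open scoped ENNReal

section HardyAux
open Finset

lemma hardy_rpow_mvt (e a : ℝ) (ha : 0 ≤ a) (he : 0 < e ∨ 0 < a) :
    ∃ ξ : ℝ, 0 < ξ ∧ a < ξ ∧ ξ < a + 1 ∧ (a+1) ^ e - a ^ e = e * ξ ^ (e - 1) := by
  have hab : a < a + 1 := by linarith
  have hcont : ContinuousOn (fun t : ℝ => t ^ e) (Set.Icc a (a+1)) := by
    intro x hx
    refine (Real.continuousAt_rpow_const x e ?_).continuousWithinAt
    rcases he with he' | ha'
    · exact Or.inr he'.le
    · exact Or.inl (lt_of_lt_of_le ha' hx.1).ne'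
  have hdiff : DifferentiableOn ℝ (fun t : ℝ => t ^ e) (Set.Ioo a (a+1)) := by
    intro x hx
    have hx0 : x ≠ 0 := (lt_of_le_of_lt ha hx.1).ne'
    exact ((Real.hasDerivAt_rpow_const (p := e) (Or.inl hx0)).differentiableAt).differentiableWithinAt
  obtain ⟨ξ, hξ, hder⟩ := exists_deriv_eq_slope (fun t : ℝ => t ^ e) hab hcont hdiff
  have hξ0 : 0 < ξ := lt_of_le_of_lt ha hξ.1
  refine ⟨ξ, hξ0, hξ.1, hξ.2, ?_⟩
  have hder' : deriv (fun t : ℝ => t ^ e) ξ = e * ξ ^ (e - 1) :=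
    Real.deriv_rpow_const ξ e
  rw [hder'] at hder
  rw [show a + 1 - a = (1:ℝ) by ring, div_one] at hder
  exact hder.symm

lemma hardy_head_pt {σ : ℝ} (h0 : 0 < σ) (h1 : σ < 1) (m : ℕ) :
    (1 - σ) * ((m:ℝ)+1) ^ (-σ) ≤ ((m:ℝ)+1) ^ (1-σ) - (m:ℝ) ^ (1-σ) := by
  obtain ⟨ξ, hξ0, hξ1, hξ2, heq⟩ :=
    hardy_rpow_mvt (1-σ) m (Nat.cast_nonneg m) (Or.inl (by linarith))
  rw [heq, show (1 - σ - 1) = -σ by ring]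
  have h2 := Real.rpow_le_rpow_of_nonpos hξ0 hξ2.le (by linarith : -σ ≤ 0)
  have h3 : (0:ℝ) ≤ 1 - σ := by linarith
  nlinarith

lemma hardy_head_sum {σ : ℝ} (h0 : 0 < σ) (h1 : σ < 1) (n : ℕ) :
    ∑ m ∈ Finset.range n, ((m:ℝ)+1) ^ (-σ) ≤ (1-σ)⁻¹ * (n:ℝ) ^ (1-σ) := by
  have h1σ : (0:ℝ) < 1 - σ := by linarith
  have key : ∀ m ∈ Finset.range n,
      ((m:ℝ)+1) ^ (-σ) ≤ (1-σ)⁻¹ * (((m:ℝ)+1) ^ (1-σ) - (m:ℝ) ^ (1-σ)) := by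
    intro m _
    rw [le_inv_mul_iff₀ h1σ]
    exact hardy_head_pt h0 h1 m
  calc ∑ m ∈ Finset.range n, ((m:ℝ)+1) ^ (-σ)
      ≤ ∑ m ∈ Finset.range n, (1-σ)⁻¹ * (((m:ℝ)+1) ^ (1-σ) - (m:ℝ) ^ (1-σ)) :=
        Finset.sum_le_sum key
    _ = (1-σ)⁻¹ * ∑ m ∈ Finset.range n, ((((m+1):ℕ):ℝ) ^ (1-σ) - ((m:ℕ):ℝ) ^ (1-σ)) := by
        rw [Finset.mul_sum]; apply Finset.sum_congr rfl; intro m _; push_cast; ring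
    _ = (1-σ)⁻¹ * ((n:ℝ) ^ (1-σ) - ((0:ℕ):ℝ) ^ (1-σ)) := by
        rw [Finset.sum_range_sub (fun m : ℕ => ((m:ℕ):ℝ) ^ (1-σ))]
    _ = (1-σ)⁻¹ * (n:ℝ) ^ (1-σ) := by
        norm_num [Real.zero_rpow h1σ.ne']

lemma hardy_tail_pt {r : ℝ} (hr : 1 < r) {n : ℕ} (hn : 1 ≤ n) :
    (n:ℝ) ^ (-r) ≤ (2^r / (r-1)) * ((n:ℝ) ^ (1-r) - ((n:ℝ)+1) ^ (1-r)) := by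
  have hn0 : (0:ℝ) < n := by exact_mod_cast hn
  obtain ⟨ξ, hξ0, hξ1, hξ2, heq⟩ :=
    hardy_rpow_mvt (1-r) n (Nat.cast_nonneg n) (Or.inr hn0)
  have hdiff : (n:ℝ) ^ (1-r) - ((n:ℝ)+1) ^ (1-r) = (r-1) * ξ ^ (-r) := by
    have : (1 - r - 1) = -r := by ring
    rw [this] at heq; nlinarith [heq]
  rw [hdiff]
  have h1 : ((n:ℝ)+1) ^ (-r) ≤ ξ ^ (-r) :=
    Real.rpow_le_rpow_of_nonpos hξ0 hξ2.le (by linarith)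
  have hn1 : (1:ℝ) ≤ n := by exact_mod_cast hn
  have h2 : ((2:ℝ)*n) ^ (-r) ≤ ((n:ℝ)+1) ^ (-r) :=
    Real.rpow_le_rpow_of_nonpos (by linarith) (by linarith) (by linarith)
  have h3 : ((2:ℝ)*n) ^ (-r) = (2:ℝ)^(-r) * (n:ℝ)^(-r) :=
    Real.mul_rpow (by norm_num) hn0.le
  have h4 : (0:ℝ) < 2^r := Real.rpow_pos_of_pos two_pos r
  have h5 : (2:ℝ)^(-r) = (2^r)⁻¹ := Real.rpow_neg (by norm_num) r
  have h6 : (0:ℝ) < r - 1 := by linarith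
  have h7 : (2^r)⁻¹ * (n:ℝ)^(-r) ≤ ξ ^ (-r) := by
    rw [← h5, ← h3]; exact le_trans h2 h1
  calc (n:ℝ) ^ (-r) = (2^r/(r-1)) * ((r-1) * ((2^r)⁻¹ * (n:ℝ)^(-r))) := by
        field_simp
    _ ≤ (2^r/(r-1)) * ((r-1) * ξ ^ (-r)) := by
        apply mul_le_mul_of_nonneg_left _ (by positivity)
        exact mul_le_mul_of_nonneg_left h7 h6.le

lemma hardy_tail_partial {r : ℝ} (hr : 1 < r) {q : ℕ} (hq : 1 ≤ q) (N : ℕ) :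
    ∑ n ∈ Finset.range N, (if q ≤ n then (n:ℝ)^(-r) else 0) ≤ (2^r/(r-1)) * (q:ℝ)^(1-r) := by
  set C := (2:ℝ)^r/(r-1) with hCdef
  have hC : 0 ≤ C := div_nonneg (Real.rpow_pos_of_pos two_pos r).le (by linarith)
  set f : ℕ → ℝ := fun n => C * ((max n q : ℕ):ℝ)^(1-r) with hfdef
  have step : ∀ n ∈ Finset.range N,
      (if q ≤ n then (n:ℝ)^(-r) else 0) ≤ f n - f (n+1) := by
    intro n _
    by_cases h : q ≤ n
    · simp only [h, if_true, hfdef]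
      rw [max_eq_left h, max_eq_left (le_trans h (Nat.le_succ n))]
      have h2 := hardy_tail_pt hr (le_trans hq h)
      rw [mul_sub] at h2
      push_cast
      push_cast at h2
      linarith
    · simp only [h, if_false, hfdef]
      have h1 : max n q = q := max_eq_right (le_of_not_ge h)
      have h2 : max (n+1) q = q := max_eq_right (Nat.succ_le_of_lt (lt_of_not_ge h))
      rw [h1, h2]; simp
  calc ∑ n ∈ Finset.range N, (if q ≤ n then (n:ℝ)^(-r) else 0)
      ≤ ∑ n ∈ Finset.range N, (f n - f (n+1)) := Finset.sum_le_sum step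
    _ = f 0 - f N := Finset.sum_range_sub' f N
    _ ≤ f 0 := by
        have : 0 ≤ f N := by
          apply mul_nonneg hC (Real.rpow_nonneg (Nat.cast_nonneg _) _)
        linarith
    _ = C * (q:ℝ)^(1-r) := by simp [hfdef]

lemma hardy_tail_sum {r : ℝ} (hr : 1 < r) {q : ℕ} (hq : 1 ≤ q) :
    ∑' n : ℕ, (if q ≤ n then ENNReal.ofReal ((n:ℝ) ^ (-r)) else 0)
      ≤ ENNReal.ofReal ((2^r/(r-1)) * (q:ℝ) ^ (1-r)) := by
  rw [ENNReal.tsum_eq_iSup_sum]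
  refine iSup_le fun s => ?_
  obtain ⟨N, hN⟩ : ∃ N, s ⊆ Finset.range N :=
    ⟨(s.sup id)+1, fun x hx => Finset.mem_range.mpr (Nat.lt_succ_of_le (Finset.le_sup (f := id) hx))⟩
  calc ∑ n ∈ s, (if q ≤ n then ENNReal.ofReal ((n:ℝ) ^ (-r)) else 0)
      ≤ ∑ n ∈ Finset.range N, (if q ≤ n then ENNReal.ofReal ((n:ℝ) ^ (-r)) else 0) :=
        Finset.sum_le_sum_of_subset hN
    _ = ∑ n ∈ Finset.range N, ENNReal.ofReal (if q ≤ n then (n:ℝ) ^ (-r) else 0) := by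
        apply Finset.sum_congr rfl; intro n _; split <;> simp
    _ = ENNReal.ofReal (∑ n ∈ Finset.range N, (if q ≤ n then (n:ℝ) ^ (-r) else 0)) := by
        rw [ENNReal.ofReal_sum_of_nonneg]
        intro n _; split
        · exact Real.rpow_nonneg (Nat.cast_nonneg _) _
        · exact le_refl 0
    _ ≤ _ := ENNReal.ofReal_le_ofReal (hardy_tail_partial hr hq N)

lemma hardy_rpow_combine {p q : ℝ} (hpq : Real.HolderConjugate q p) {a X Y : ℝ}
    (ha : 0 ≤ a) (hX : 0 ≤ X) (hY : 0 ≤ Y) (h : a ≤ X ^ (1/q) * Y ^ (1/p)) :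
    a ^ p ≤ X ^ (p - 1) * Y := by
  have hp : 0 < p := hpq.symm.pos
  have hq : 0 < q := hpq.pos
  have h2 : a ^ p ≤ (X ^ (1/q) * Y ^ (1/p)) ^ p :=
    Real.rpow_le_rpow ha h hp.le
  have e1 : 1/q * p = p - 1 := by
    have := hpq.inv_add_inv_eq_one
    field_simp at this ⊢
    nlinarith [this]
  have e2 : 1/p * p = 1 := by field_simp
  rwa [Real.mul_rpow (by positivity) (by positivity), ← Real.rpow_mul hX, ← Real.rpow_mul hY,
    e1, e2, Real.rpow_one] at h2

lemma hardy_holder {p s : ℝ} (hp : 1 < p) (hs : 0 < s) (hsp : s < p - 1)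
    (n : ℕ) (c : ℕ → ℝ) (hc : ∀ m, 0 ≤ c m) :
    (∑ m ∈ Finset.range n, c m) ^ p ≤
      ((1 - s/(p-1))⁻¹) ^ (p-1) * (n:ℝ) ^ (p-1-s) *
        ∑ m ∈ Finset.range n, ((m:ℝ)+1) ^ s * c m ^ p := by
  have hp1 : (0:ℝ) < p - 1 := by linarith
  set σ := s/(p-1) with hσdef
  have hσ0 : 0 < σ := div_pos hs hp1
  have hσ1 : σ < 1 := (div_lt_one hp1).mpr hsp
  have hpq : Real.HolderConjugate (Real.conjExponent p) p :=
    (Real.HolderConjugate.conjExponent hp).symm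
  set q := Real.conjExponent p with hqdef
  have hq1 : 1 < q := hpq.lt
  have hH := Real.inner_le_Lp_mul_Lq (Finset.range n)
    (fun m => ((m:ℝ)+1)^(-(s/p))) (fun m => ((m:ℝ)+1)^(s/p) * c m) hpq
  have hsum_eq : ∑ m ∈ Finset.range n, ((m:ℝ)+1)^(-(s/p)) * (((m:ℝ)+1)^(s/p) * c m)
      = ∑ m ∈ Finset.range n, c m := by
    apply Finset.sum_congr rfl; intro m _
    have hm : (0:ℝ) < (m:ℝ)+1 := by positivity
    rw [← mul_assoc, ← Real.rpow_add hm]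
    norm_num
  have hf_eq : ∀ m : ℕ, |((m:ℝ)+1)^(-(s/p))| ^ q = ((m:ℝ)+1) ^ (-σ) := by
    intro m
    have hm : (0:ℝ) < (m:ℝ)+1 := by positivity
    rw [abs_of_nonneg (Real.rpow_nonneg hm.le _), ← Real.rpow_mul hm.le]
    congr 1
    rw [hσdef, hqdef, Real.conjExponent]
    field_simp
  have habs : ∀ m:ℕ, |((m:ℝ)+1)^(s/p) * c m| ^ p = ((m:ℝ)+1)^s * c m ^ p := by
    intro m
    have hm : (0:ℝ) ≤ (m:ℝ)+1 := by positivity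
    rw [abs_of_nonneg (mul_nonneg (Real.rpow_nonneg hm _) (hc m)),
      Real.mul_rpow (Real.rpow_nonneg hm _) (hc m), ← Real.rpow_mul hm]
    congr 2
    field_simp
  simp only [hf_eq, habs, hsum_eq] at hH
  have hXnn : 0 ≤ ∑ m ∈ range n, ((m:ℝ)+1)^(-σ) :=
    Finset.sum_nonneg fun m _ => Real.rpow_nonneg (by positivity) _
  have hYnn : 0 ≤ ∑ m ∈ range n, ((m:ℝ)+1)^s * c m ^ p :=
    Finset.sum_nonneg fun m _ => mul_nonneg (Real.rpow_nonneg (by positivity) _)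
      (Real.rpow_nonneg (hc m) _)
  have hann : 0 ≤ ∑ m ∈ range n, c m := Finset.sum_nonneg fun m _ => hc m
  have hcomb := hardy_rpow_combine hpq hann hXnn hYnn hH
  have hX0le : (∑ m ∈ range n, ((m:ℝ)+1)^(-σ)) ^ (p-1)
      ≤ ((1-σ)⁻¹) ^ (p-1) * (n:ℝ)^(p-1-s) := by
    have h1 := hardy_head_sum hσ0 hσ1 n
    have h2 : (∑ m ∈ range n, ((m:ℝ)+1)^(-σ)) ^ (p-1) ≤ ((1-σ)⁻¹ * (n:ℝ)^(1-σ)) ^ (p-1) :=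
      Real.rpow_le_rpow hXnn h1 hp1.le
    rw [Real.mul_rpow (inv_nonneg.mpr (by linarith)) (Real.rpow_nonneg (Nat.cast_nonneg n) _),
      ← Real.rpow_mul (Nat.cast_nonneg n)] at h2
    have h3 : (1-σ)*(p-1) = p-1-s := by rw [hσdef]; field_simp
    rwa [h3] at h2
  calc (∑ m ∈ range n, c m) ^ p
      ≤ (∑ m ∈ range n, ((m:ℝ)+1)^(-σ))^(p-1) * (∑ m ∈ range n, ((m:ℝ)+1)^s * c m ^ p) := hcomb
    _ ≤ ((1-σ)⁻¹)^(p-1) * (n:ℝ)^(p-1-s) * (∑ m ∈ range n, ((m:ℝ)+1)^s * c m ^ p) :=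
        mul_le_mul_of_nonneg_right hX0le hYnn

lemma hardy_pow_mean {p : ℝ} (hp : 1 < p) {d : ℕ} (b : Fin d → ℝ) (hb : ∀ t, 0 ≤ b t) :
    (∑ t, b t) ^ p ≤ (d:ℝ) ^ (p-1) * ∑ t, b t ^ p := by
  have hpq : Real.HolderConjugate (Real.conjExponent p) p :=
    (Real.HolderConjugate.conjExponent hp).symm
  have hH := Real.inner_le_Lp_mul_Lq Finset.univ (fun _ : Fin d => (1:ℝ)) b hpq
  have hbb : ∀ t, |b t| ^ p = b t ^ p := fun t => by rw [abs_of_nonneg (hb t)]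
  simp only [one_mul, abs_one, Real.one_rpow, hbb, Finset.sum_const, Finset.card_univ,
    Fintype.card_fin, nsmul_eq_mul, mul_one] at hH
  exact hardy_rpow_combine hpq (Finset.sum_nonneg fun t _ => hb t) (Nat.cast_nonneg d)
    (Finset.sum_nonneg fun t _ => Real.rpow_nonneg (hb t) _) hH

noncomputable section

def hNN {d : ℕ} (j : Fin d → ℕ) : ℕ := Finset.univ.sup j

def hPhi {d : ℕ} (j : Fin d → ℕ) (m : ℕ) : Fin d → ℕ := fun i => m * j i / hNN j

def hPsi {d : ℕ} (j : Fin d → ℕ) (m t : ℕ) : Fin d → ℕ :=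
  fun i => if (i : ℕ) < t then hPhi j (m+1) i else hPhi j m i

def hBB {d : ℕ} (u : (Fin d → ℕ) → ℂ) (p : ℝ) (x : Fin d → ℕ) (t : Fin d) : ℝ≥0∞ :=
  ENNReal.ofReal (‖u (x + Pi.single t 1) - u x‖ ^ p)

lemma le_hNN {d : ℕ} (j : Fin d → ℕ) (i : Fin d) : j i ≤ hNN j :=
  Finset.le_sup (Finset.mem_univ i)

lemma hNN_pos {d : ℕ} {j : Fin d → ℕ} (hj : j ≠ 0) : 0 < hNN j := by
  rcases Nat.eq_zero_or_pos (hNN j) with h | h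
  · exfalso; apply hj; funext i
    have h2 := le_hNN j i
    simp only [Pi.zero_apply]
    omega
  · exact h

lemma hPhi_mono {d : ℕ} {j : Fin d → ℕ} {m m' : ℕ} (h : m ≤ m') (i : Fin d) :
    hPhi j m i ≤ hPhi j m' i :=
  Nat.div_le_div_right (Nat.mul_le_mul_right _ h)

lemma hPhi_le_succ {d : ℕ} {j : Fin d → ℕ} (hn : 0 < hNN j) (m : ℕ) (i : Fin d) :
    hPhi j (m+1) i ≤ hPhi j m i + 1 := by
  unfold hPhi
  have h1 : (m+1) * j i ≤ m * j i + hNN j := by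
    have := le_hNN j i; nlinarith
  calc (m+1) * j i / hNN j ≤ (m * j i + hNN j) / hNN j := Nat.div_le_div_right h1
    _ = m * j i / hNN j + 1 := Nat.add_div_right _ hn

lemma hPsi_between {d : ℕ} (j : Fin d → ℕ) (m t : ℕ) (i : Fin d) :
    hPhi j m i ≤ hPsi j m t i ∧ hPsi j m t i ≤ hPhi j (m+1) i := by
  unfold hPsi; split
  · exact ⟨hPhi_mono (Nat.le_succ m) i, le_refl _⟩
  · exact ⟨le_refl _, hPhi_mono (Nat.le_succ m) i⟩

lemma hardy_telescope {d : ℕ} (u : (Fin d → ℕ) → ℂ) (hu : u 0 = 0) {j : Fin d → ℕ}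
    (hj : j ≠ 0) :
    u j = ∑ m ∈ Finset.range (hNN j), ∑ t ∈ Finset.range d,
      (u (hPsi j m (t+1)) - u (hPsi j m t)) := by
  have hn := hNN_pos hj
  have inner : ∀ m, ∑ t ∈ Finset.range d, (u (hPsi j m (t+1)) - u (hPsi j m t))
      = u (hPhi j (m+1)) - u (hPhi j m) := by
    intro m
    rw [Finset.sum_range_sub (fun t => u (hPsi j m t))]
    have e1 : hPsi j m d = hPhi j (m+1) := funext fun i => by
      unfold hPsi; rw [if_pos i.isLt]
    have e2 : hPsi j m 0 = hPhi j m := funext fun i => by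
      unfold hPsi; rw [if_neg (Nat.not_lt_zero _)]
    rw [e1, e2]
  simp only [inner]
  rw [Finset.sum_range_sub (fun m => u (hPhi j m))]
  have h1 : hPhi j (hNN j) = j := by
    funext i; unfold hPhi; exact Nat.mul_div_cancel_left _ hn
  have h0 : hPhi j 0 = 0 := by
    funext i; unfold hPhi; simp
  rw [h1, h0, hu, sub_zero]

lemma hardy_edge {d : ℕ} (u : (Fin d → ℕ) → ℂ) {p : ℝ} (hp0 : 0 < p)
    {j : Fin d → ℕ} (hn : 0 < hNN j) (m : ℕ) (t : Fin d) :
    ENNReal.ofReal (‖u (hPsi j m (t.1+1)) - u (hPsi j m t.1)‖ ^ p)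
      ≤ hBB u p (hPsi j m t.1) t := by
  have hstep := hPhi_le_succ hn m t
  have hmono := hPhi_mono (j := j) (Nat.le_succ m) t
  rcases Nat.lt_or_ge (hPhi j m t) (hPhi j (m+1) t) with hlt | hge
  · have heq : hPhi j (m+1) t = hPhi j m t + 1 := le_antisymm hstep hlt
    have hx : hPsi j m (t.1+1) = hPsi j m t.1 + Pi.single t 1 := by
      funext i
      simp only [Pi.add_apply, Pi.single_apply, hPsi]
      rcases eq_or_ne i t with rfl | hne
      · rw [if_pos (Nat.lt_succ_self _), if_neg (lt_irrefl _), if_pos rfl, heq]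
      · have hneq : (i:ℕ) ≠ (t:ℕ) := fun h => hne (Fin.ext h)
        rw [if_neg hne, add_zero]
        by_cases hit : (i:ℕ) < t.1
        · rw [if_pos (Nat.lt_succ_of_lt hit), if_pos hit]
        · rw [if_neg (by omega), if_neg hit]
    rw [hx]; exact le_refl _
  · have heq : hPhi j (m+1) t = hPhi j m t := le_antisymm hge hmono
    have hx : hPsi j m (t.1+1) = hPsi j m t.1 := by
      funext i
      simp only [hPsi]
      rcases eq_or_ne i t with rfl | hne
      · rw [if_pos (Nat.lt_succ_self _), if_neg (lt_irrefl _), heq]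
      · by_cases hit : (i:ℕ) < t.1
        · rw [if_pos (Nat.lt_succ_of_lt hit), if_pos hit]
        · have hneq : (i:ℕ) ≠ (t:ℕ) := fun h => hne (Fin.ext h)
          rw [if_neg (by omega), if_neg hit]
    rw [hx, sub_self]
    simp only [norm_zero, Real.zero_rpow hp0.ne', ENNReal.ofReal_zero]
    exact zero_le

lemma hardy_constraint {d : ℕ} (hd : 0 < d) {j x : Fin d → ℕ} {m : ℕ} {t : ℕ}
    (hmn : m + 1 ≤ hNN j) (hpsix : hPsi j m t = x) :
    (hNN x ≤ m + 1 ∧ m + 1 ≤ hNN x + 2) ∧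
      ∀ l, hNN j * x l ≤ (m+1) * j l ∧ (m+1) * j l ≤ hNN j * x l + 2 * hNN j := by
  have : Nonempty (Fin d) := ⟨⟨0, hd⟩⟩
  set n := hNN j with hndef
  have hn : 0 < n := lt_of_lt_of_le (Nat.succ_pos m) hmn
  have hbounds : ∀ l, hPhi j m l ≤ x l ∧ x l ≤ hPhi j (m+1) l := by
    intro l; rw [← hpsix]; exact hPsi_between j m t l
  have main : ∀ l, n * x l ≤ (m+1) * j l ∧ (m+1) * j l ≤ n * x l + 2*n := by
    intro l
    constructor
    · calc n * x l ≤ n * ((m+1) * j l / n) := Nat.mul_le_mul_left n (hbounds l).2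
        _ ≤ (m+1) * j l := by rw [mul_comm]; exact Nat.div_mul_le_self _ _
    · have h1 := Nat.div_add_mod (m * j l) n
      have h2 := Nat.mod_lt (m * j l) hn
      have hb : n * (m * j l / n) ≤ n * x l := Nat.mul_le_mul_left n (hbounds l).1
      have hc : j l ≤ n := le_hNN j l
      have hd2 : (m+1) * j l = m * j l + j l := by ring
      omega
  refine ⟨⟨?_, ?_⟩, main⟩
  · obtain ⟨ls, _, hls⟩ := Finset.exists_mem_eq_sup Finset.univ Finset.univ_nonempty x
    have hls' : hNN x = x ls := hls
    have h1 : n * hNN x ≤ (m+1) * j ls := by rw [hls']; exact (main ls).1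
    have h2 : (m+1) * j ls ≤ (m+1) * n := Nat.mul_le_mul_left _ (le_hNN j ls)
    have h3 : n * hNN x ≤ n * (m+1) := by
      calc n * hNN x ≤ (m+1) * n := le_trans h1 h2
        _ = n * (m+1) := by ring
    exact Nat.le_of_mul_le_mul_left h3 hn
  · obtain ⟨lo, _, hlo⟩ := Finset.exists_mem_eq_sup Finset.univ Finset.univ_nonempty j
    have hlo' : n = j lo := hlo
    have h1 : (m+1) * j lo ≤ n * x lo + 2 * n := (main lo).2
    rw [← hlo'] at h1
    have h2 : n * (m+1) ≤ n * (x lo + 2) := by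
      calc n * (m+1) = (m+1) * n := by ring
        _ ≤ n * x lo + 2 * n := h1
        _ = n * (x lo + 2) := by ring
    have h3 : m + 1 ≤ x lo + 2 := Nat.le_of_mul_le_mul_left h2 hn
    have h4 : x lo ≤ hNN x := le_hNN x lo
    omega

def hCnt {d : ℕ} (x : Fin d → ℕ) (m n : ℕ) : Finset (Fin d → ℕ) :=
  Finset.univ.biUnion (fun l : Fin d => Fintype.piFinset (fun l' : Fin d =>
    if l' = l then {n} else Finset.Icc (n * x l' / (m+1)) ((n * x l' + 2*n)/(m+1))))

lemma hardy_count_mem {d : ℕ} (hd : 0 < d) {x j : Fin d → ℕ} {m n : ℕ}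
    (hjn : hNN j = n)
    (hcon : ∀ l, n * x l ≤ (m+1) * j l ∧ (m+1) * j l ≤ n * x l + 2*n) :
    j ∈ hCnt x m n := by
  have : Nonempty (Fin d) := ⟨⟨0, hd⟩⟩
  obtain ⟨lo, _, hlo⟩ := Finset.exists_mem_eq_sup Finset.univ Finset.univ_nonempty j
  have hlo' : j lo = n := by rw [← hjn]; exact hlo.symm
  rw [hCnt, Finset.mem_biUnion]
  refine ⟨lo, Finset.mem_univ _, ?_⟩
  rw [Fintype.mem_piFinset]
  intro l'
  by_cases h : l' = lo
  · rw [if_pos h, Finset.mem_singleton, h, hlo']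
  · rw [if_neg h, Finset.mem_Icc]
    constructor
    · calc n * x l' / (m+1) ≤ (m+1) * j l' / (m+1) := Nat.div_le_div_right (hcon l').1
        _ = j l' := Nat.mul_div_cancel_left _ (Nat.succ_pos m)
    · calc j l' = (m+1) * j l' / (m+1) := (Nat.mul_div_cancel_left _ (Nat.succ_pos m)).symm
        _ ≤ (n * x l' + 2*n)/(m+1) := Nat.div_le_div_right (hcon l').2

lemma hardy_count_card {d : ℕ} (x : Fin d → ℕ) (m n : ℕ) :
    (hCnt x m n).card ≤ d * (2*n/(m+1) + 2)^(d-1) := by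
  rw [hCnt]
  refine le_trans Finset.card_biUnion_le ?_
  have hb : ∀ l : Fin d, (Fintype.piFinset (fun l' : Fin d =>
      if l' = l then ({n} : Finset ℕ)
      else Finset.Icc (n * x l' / (m+1)) ((n * x l' + 2*n)/(m+1)))).card
      ≤ (2*n/(m+1) + 2)^(d-1) := by
    intro l
    rw [Fintype.card_piFinset,
      ← Finset.mul_prod_erase Finset.univ _ (Finset.mem_univ l),
      if_pos rfl, Finset.card_singleton, one_mul]
    refine le_trans (Finset.prod_le_pow_card _ _ (2*n/(m+1) + 2) ?_) ?_
    · intro l' hl'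
      have hne : l' ≠ l := Finset.ne_of_mem_erase hl'
      rw [if_neg hne, Nat.card_Icc]
      have h6 : (n * x l' + 2*n)/(m+1) = n * x l'/(m+1) + 2*n/(m+1)
          + if m+1 ≤ n * x l' % (m+1) + 2*n % (m+1) then 1 else 0 :=
        Nat.add_div (Nat.succ_pos m)
      have h7 : (n * x l' + 2*n)/(m+1) + 1 ≤ n*x l'/(m+1) + (2*n/(m+1) + 2) := by
        rw [h6]; split <;> omega
      exact le_trans (Nat.sub_le_iff_le_add.mpr (le_trans h7 (le_of_eq (by ring)))) (le_refl _)
    · rw [Finset.card_erase_of_mem (Finset.mem_univ l), Finset.card_univ, Fintype.card_fin]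
  calc ∑ l : Fin d, _ ≤ ∑ _l : Fin d, (2*n/(m+1) + 2)^(d-1) := Finset.sum_le_sum (fun l _ => hb l)
    _ = d * (2*n/(m+1) + 2)^(d-1) := by
        rw [Finset.sum_const, Finset.card_univ, Fintype.card_fin, smul_eq_mul]

lemma hardy_count_real {d : ℕ} (x : Fin d → ℕ) {m n : ℕ} (hmn : m+1 ≤ n) :
    ((hCnt x m n).card : ℝ) ≤ d * (4*(n:ℝ)/((m:ℝ)+1))^(d-1) := by
  have h1 : ((hCnt x m n).card : ℝ) ≤ ((d * (2*n/(m+1) + 2)^(d-1) : ℕ) : ℝ) :=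
    Nat.cast_le.mpr (hardy_count_card x m n)
  have h2 : ((2*n/(m+1) + 2 : ℕ) : ℝ) ≤ 4*(n:ℝ)/((m:ℝ)+1) := by
    have h3 : ((2*n/(m+1) : ℕ):ℝ) ≤ 2*(n:ℝ)/((m:ℝ)+1) := by
      have h := Nat.cast_div_le (α := ℝ) (m := 2*n) (n := m+1)
      push_cast at h; exact h
    have hm1 : (0:ℝ) < (m:ℝ)+1 := by positivity
    have h4 : (2:ℝ) ≤ 2*(n:ℝ)/((m:ℝ)+1) := by
      rw [le_div_iff₀ hm1]
      have : ((m:ℝ)+1) ≤ (n:ℝ) := by exact_mod_cast hmn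
      nlinarith
    have h5 : 4*(n:ℝ)/((m:ℝ)+1) = 2*(n:ℝ)/((m:ℝ)+1) + 2*(n:ℝ)/((m:ℝ)+1) := by ring
    push_cast
    linarith
  calc ((hCnt x m n).card : ℝ) ≤ ((d * (2*n/(m+1) + 2)^(d-1) : ℕ) : ℝ) := h1
    _ = (d:ℝ) * (((2*n/(m+1) + 2 : ℕ):ℝ))^(d-1) := by push_cast; ring
    _ ≤ (d:ℝ) * (4*(n:ℝ)/((m:ℝ)+1))^(d-1) := by
        apply mul_le_mul_of_nonneg_left _ (Nat.cast_nonneg d)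
        exact pow_le_pow_left₀ (Nat.cast_nonneg _) h2 _

lemma hardy_coeff {d : ℕ} (hd : 0 < d) (s : ℝ) (m n : ℕ) (hn : 0 < n) :
    (d:ℝ) * (4*(n:ℝ)/((m:ℝ)+1))^(d-1) * ((n:ℝ)^(-(1+s)) * ((m:ℝ)+1)^s)
    = ((d:ℝ) * 4^(d-1)) * (((m:ℝ)+1)^(s-(d:ℝ)+1) * (n:ℝ)^(-(s+2-(d:ℝ)))) := by
  have hn0 : (0:ℝ) < n := by exact_mod_cast hn
  have hm0 : (0:ℝ) < (m:ℝ)+1 := by positivity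
  have e1 : ((d-1:ℕ):ℝ) = (d:ℝ)-1 := by
    rw [Nat.cast_sub hd]; norm_num
  have e2 : (n:ℝ)^(d-1) = (n:ℝ)^((d:ℝ)-1) := by
    rw [← Real.rpow_natCast (n:ℝ) (d-1), e1]
  have e3 : ((m:ℝ)+1)^(d-1) = ((m:ℝ)+1)^((d:ℝ)-1) := by
    rw [← Real.rpow_natCast ((m:ℝ)+1) (d-1), e1]
  have e4 : (n:ℝ)^((d:ℝ)-1) * (n:ℝ)^(-(1+s)) = (n:ℝ)^(-(s+2-(d:ℝ))) := by
    rw [← Real.rpow_add hn0]; ring_nf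
  have e5 : ((m:ℝ)+1)^s / ((m:ℝ)+1)^((d:ℝ)-1) = ((m:ℝ)+1)^(s-(d:ℝ)+1) := by
    rw [← Real.rpow_sub hm0]; ring_nf
  have hmne : ((m:ℝ)+1)^((d:ℝ)-1) ≠ 0 := (Real.rpow_pos_of_pos hm0 _).ne'
  rw [div_pow, mul_pow, e2, e3, ← e4, ← e5]
  field_simp
def hCreal (s : ℝ) (m n : ℕ) : ℝ := (n:ℝ)^(-(1+s)) * ((m:ℝ)+1)^s

lemma hCreal_nonneg (s : ℝ) (m n : ℕ) : 0 ≤ hCreal s m n :=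
  mul_nonneg (Real.rpow_nonneg (Nat.cast_nonneg n) _) (Real.rpow_nonneg (by positivity) _)

lemma hardy_V {d : ℕ} (hd : 0 < d) {s r : ℝ} (hr : 1 < r) (hrdef : r = s + 2 - (d:ℝ))
    (m : ℕ) (x : Fin d → ℕ) :
    (∑' j : Fin d → ℕ,
      if (m+1 ≤ hNN j ∧ ∀ l, hNN j * x l ≤ (m+1) * j l ∧ (m+1) * j l ≤ hNN j * x l + 2 * hNN j)
        then ENNReal.ofReal (hCreal s m (hNN j)) else 0)
      ≤ ENNReal.ofReal ((d:ℝ) * 4^(d-1) * (2^r/(r-1))) := by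
  classical
  set K6 : ℝ := (d:ℝ) * 4^(d-1) with hK6def
  have hK6 : 0 ≤ K6 := by positivity
  set A : ℝ := ((m:ℝ)+1)^(s-(d:ℝ)+1) with hAdef
  have hA : 0 ≤ A := Real.rpow_nonneg (by positivity) _
  set H : (Fin d → ℕ) → ℕ → ℝ≥0∞ := fun j n =>
    if (hNN j = n ∧ m+1 ≤ n ∧ ∀ l, n * x l ≤ (m+1) * j l ∧ (m+1) * j l ≤ n * x l + 2*n)
      then ENNReal.ofReal (hCreal s m n) else 0 with hHdef
  have step0 : ∀ j : Fin d → ℕ,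
      (if (m+1 ≤ hNN j ∧ ∀ l, hNN j * x l ≤ (m+1) * j l ∧ (m+1) * j l ≤ hNN j * x l + 2 * hNN j)
        then ENNReal.ofReal (hCreal s m (hNN j)) else 0) = ∑' n : ℕ, H j n := by
    intro j
    have e1 : ∀ n : ℕ, H j n = if n = hNN j then H j (hNN j) else 0 := by
      intro n
      by_cases h : n = hNN j
      · rw [if_pos h, h]
      · rw [if_neg h, hHdef]
        simp only
        rw [if_neg]
        rintro ⟨h1, -⟩
        exact h h1.symm
    calc (if (m+1 ≤ hNN j ∧ ∀ l, hNN j * x l ≤ (m+1) * j l ∧ (m+1) * j l ≤ hNN j * x l + 2 * hNN j)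
        then ENNReal.ofReal (hCreal s m (hNN j)) else 0) = H j (hNN j) := by
          rw [hHdef]; simp only [true_and]
      _ = ∑' n : ℕ, (if n = hNN j then H j (hNN j) else 0) :=
            (tsum_ite_eq (hNN j) (fun _ => H j (hNN j))).symm
      _ = ∑' n : ℕ, H j n := by
          apply tsum_congr; intro n; rw [← e1]
  rw [tsum_congr step0, ENNReal.tsum_comm]
  have step2 : ∀ n : ℕ, (∑' j : Fin d → ℕ, H j n)
      ≤ if m+1 ≤ n then ENNReal.ofReal (K6 * (A * (n:ℝ)^(-r))) else 0 := by
    intro n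
    by_cases hmn : m+1 ≤ n
    · rw [if_pos hmn]
      have hn : 0 < n := lt_of_lt_of_le (Nat.succ_pos m) hmn
      have hsupp : ∀ j ∉ hCnt x m n, H j n = 0 := by
        intro j hj
        rw [hHdef]; simp only
        rw [if_neg]
        rintro ⟨h1, -, h3⟩
        exact hj (hardy_count_mem hd h1 h3)
      rw [tsum_eq_sum hsupp]
      have hterm : ∀ j ∈ hCnt x m n, H j n ≤ ENNReal.ofReal (hCreal s m n) := by
        intro j _
        rw [hHdef]; simp only
        split
        · exact le_refl _
        · exact zero_le
      calc ∑ j ∈ hCnt x m n, H j n ≤ (hCnt x m n).card • ENNReal.ofReal (hCreal s m n) :=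
            Finset.sum_le_card_nsmul _ _ _ hterm
        _ = ((hCnt x m n).card : ℝ≥0∞) * ENNReal.ofReal (hCreal s m n) := by
            rw [nsmul_eq_mul]
        _ = ENNReal.ofReal (((hCnt x m n).card : ℝ) * hCreal s m n) := by
            rw [ENNReal.ofReal_mul (Nat.cast_nonneg _), ENNReal.ofReal_natCast]
        _ ≤ ENNReal.ofReal (((d:ℝ) * (4*(n:ℝ)/((m:ℝ)+1))^(d-1)) * hCreal s m n) := by
            apply ENNReal.ofReal_le_ofReal
            exact mul_le_mul_of_nonneg_right (hardy_count_real x hmn) (hCreal_nonneg s m n)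
        _ = ENNReal.ofReal (K6 * (A * (n:ℝ)^(-r))) := by
            congr 1
            rw [hK6def, hAdef, hrdef]
            exact hardy_coeff hd s m n hn
    · rw [if_neg hmn]
      have : ∀ j : Fin d → ℕ, H j n = 0 := by
        intro j
        rw [hHdef]; simp only
        rw [if_neg]
        rintro ⟨-, h2, -⟩
        exact hmn h2
      simp only [this, tsum_zero]
      exact le_refl _
  calc ∑' n : ℕ, ∑' j : Fin d → ℕ, H j n
      ≤ ∑' n : ℕ, (if m+1 ≤ n then ENNReal.ofReal (K6 * (A * (n:ℝ)^(-r))) else 0) :=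
        ENNReal.tsum_le_tsum step2
    _ = ∑' n : ℕ, ENNReal.ofReal (K6 * A) * (if m+1 ≤ n then ENNReal.ofReal ((n:ℝ)^(-r)) else 0) := by
        apply tsum_congr; intro n
        by_cases hmn : m+1 ≤ n
        · rw [if_pos hmn, if_pos hmn, ← ENNReal.ofReal_mul (mul_nonneg hK6 hA)]
          congr 1
          ring
        · rw [if_neg hmn, if_neg hmn, mul_zero]
    _ = ENNReal.ofReal (K6 * A) * ∑' n : ℕ, (if m+1 ≤ n then ENNReal.ofReal ((n:ℝ)^(-r)) else 0) :=
        ENNReal.tsum_mul_left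
    _ ≤ ENNReal.ofReal (K6 * A) * ENNReal.ofReal ((2^r/(r-1)) * ((m+1:ℕ):ℝ) ^ (1-r)) := by
        apply mul_le_mul_right (hardy_tail_sum hr (Nat.succ_le_succ (Nat.zero_le m)))
    _ = ENNReal.ofReal ((d:ℝ) * 4^(d-1) * (2^r/(r-1))) := by
        rw [← ENNReal.ofReal_mul (mul_nonneg hK6 hA)]
        congr 1
        have hm0 : (0:ℝ) < (m:ℝ)+1 := by positivity
        have hAe : A * ((m+1:ℕ):ℝ) ^ (1-r) = 1 := by
          rw [hAdef]
          push_cast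
          rw [← Real.rpow_add hm0]
          have : s - (d:ℝ) + 1 + (1 - r) = 0 := by rw [hrdef]; ring
          rw [this, Real.rpow_zero]
        calc K6 * A * ((2^r/(r-1)) * ((m+1:ℕ):ℝ) ^ (1-r))
            = K6 * (2^r/(r-1)) * (A * ((m+1:ℕ):ℝ) ^ (1-r)) := by ring
          _ = (d:ℝ) * 4^(d-1) * (2^r/(r-1)) := by rw [hAe, mul_one, hK6def]
lemma hardy_W {d : ℕ} (hd : 0 < d) {s r : ℝ} (hr : 1 < r) (hrdef : r = s + 2 - (d:ℝ))
    (x : Fin d → ℕ) (t : Fin d) :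
    (∑' (m : ℕ) (j : Fin d → ℕ),
      if (hPsi j m t.1 = x ∧ m+1 ≤ hNN j) then ENNReal.ofReal (hCreal s m (hNN j)) else 0)
      ≤ ENNReal.ofReal (3 * ((d:ℝ) * 4^(d-1) * (2^r/(r-1)))) := by
  classical
  set K5 := (d:ℝ) * 4^(d-1) * (2^r/(r-1)) with hK5def
  set q := hNN x with hqdef
  have step1 : ∀ (m : ℕ) (j : Fin d → ℕ),
      (if (hPsi j m t.1 = x ∧ m+1 ≤ hNN j) then ENNReal.ofReal (hCreal s m (hNN j)) else 0)
      ≤ if (q ≤ m+1 ∧ m+1 ≤ q+2) then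
          (if (m+1 ≤ hNN j ∧ ∀ l, hNN j * x l ≤ (m+1) * j l ∧ (m+1) * j l ≤ hNN j * x l + 2 * hNN j)
            then ENNReal.ofReal (hCreal s m (hNN j)) else 0) else 0 := by
    intro m j
    by_cases h : hPsi j m t.1 = x ∧ m+1 ≤ hNN j
    · obtain ⟨⟨hq1, hq2⟩, hcon⟩ := hardy_constraint hd h.2 h.1
      rw [if_pos h, if_pos ⟨hq1, hq2⟩, if_pos ⟨h.2, hcon⟩]
    · rw [if_neg h]; exact zero_le
  calc (∑' (m : ℕ) (j : Fin d → ℕ),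
      if (hPsi j m t.1 = x ∧ m+1 ≤ hNN j) then ENNReal.ofReal (hCreal s m (hNN j)) else 0)
      ≤ ∑' (m : ℕ) (j : Fin d → ℕ), (if (q ≤ m+1 ∧ m+1 ≤ q+2) then
          (if (m+1 ≤ hNN j ∧ ∀ l, hNN j * x l ≤ (m+1) * j l ∧ (m+1) * j l ≤ hNN j * x l + 2 * hNN j)
            then ENNReal.ofReal (hCreal s m (hNN j)) else 0) else 0) :=
        ENNReal.tsum_le_tsum (fun m => ENNReal.tsum_le_tsum (step1 m))
    _ = ∑' (m : ℕ), (if (q ≤ m+1 ∧ m+1 ≤ q+2) then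
          (∑' j : Fin d → ℕ, (if (m+1 ≤ hNN j ∧ ∀ l, hNN j * x l ≤ (m+1) * j l ∧ (m+1) * j l ≤ hNN j * x l + 2 * hNN j)
            then ENNReal.ofReal (hCreal s m (hNN j)) else 0)) else 0) := by
        apply tsum_congr; intro m
        by_cases h : (q ≤ m+1 ∧ m+1 ≤ q+2)
        · simp only [h, if_true, and_self, true_and]
        · simp only [h, if_false, tsum_zero]
    _ ≤ ∑' (m : ℕ), (if (q ≤ m+1 ∧ m+1 ≤ q+2) then ENNReal.ofReal K5 else 0) := by
        apply ENNReal.tsum_le_tsum; intro m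
        split
        · exact hardy_V hd hr hrdef m x
        · exact le_refl _
    _ = ∑ m ∈ Finset.Icc (q-1) (q+1), (if (q ≤ m+1 ∧ m+1 ≤ q+2) then ENNReal.ofReal K5 else 0) := by
        apply tsum_eq_sum
        intro m hm
        rw [Finset.mem_Icc] at hm
        rw [if_neg]
        intro hcon
        omega
    _ ≤ (Finset.Icc (q-1) (q+1)).card • ENNReal.ofReal K5 := by
        apply Finset.sum_le_card_nsmul
        intro m _
        split
        · exact le_refl _
        · exact zero_le
    _ ≤ 3 * ENNReal.ofReal K5 := by
        rw [nsmul_eq_mul]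
        apply mul_le_mul_left
        have hcard : (Finset.Icc (q-1) (q+1)).card ≤ 3 := by
          rw [Nat.card_Icc]; omega
        calc ((Finset.Icc (q-1) (q+1)).card : ℝ≥0∞) ≤ ((3:ℕ) : ℝ≥0∞) := by
              exact_mod_cast hcard
          _ = 3 := by norm_num
    _ = ENNReal.ofReal (3 * K5) := by
        rw [ENNReal.ofReal_mul (by norm_num : (0:ℝ) ≤ 3)]
        norm_num
lemma hardy_perj {d : ℕ} (hd : 0 < d) {p s : ℝ} (hp : 1 < p) (hs : 0 < s) (hsp : s < p - 1)
    (u : (Fin d → ℕ) → ℂ) (hu : u 0 = 0) {j : Fin d → ℕ} (hj : j ≠ 0) :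
    ENNReal.ofReal (‖u j‖ ^ p / (hNN j : ℝ) ^ p)
      ≤ ENNReal.ofReal ((d:ℝ)^(p-1) * ((1 - s/(p-1))⁻¹)^(p-1)) *
        ∑' m : ℕ, ∑ t : Fin d,
          (if m + 1 ≤ hNN j then
            ENNReal.ofReal (hCreal s m (hNN j)) * hBB u p (hPsi j m t.1) t else 0) := by
  classical
  have hp0 : (0:ℝ) < p := by linarith
  set n := hNN j with hndef
  have hn : 0 < n := hNN_pos hj
  have hn0 : (0:ℝ) < n := by exact_mod_cast hn
  set Δ : ℕ → ℕ → ℂ := fun m t => u (hPsi j m (t+1)) - u (hPsi j m t) with hΔdef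
  set c : ℕ → ℝ := fun m => ∑ t : Fin d, ‖Δ m t.1‖ with hcdef
  have hc : ∀ m, 0 ≤ c m := fun m =>
    Finset.sum_nonneg fun t _ => norm_nonneg _
  have hσ1 : s/(p-1) < 1 := (div_lt_one (by linarith)).mpr hsp
  set KA := ((1 - s/(p-1))⁻¹)^(p-1) with hKAdef
  have hKA : 0 ≤ KA := Real.rpow_nonneg (inv_nonneg.mpr (by linarith)) _
  have hdp : (0:ℝ) ≤ (d:ℝ)^(p-1) := Real.rpow_nonneg (Nat.cast_nonneg d) _
  -- (1) triangle inequality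
  have habs : ‖u j‖ ≤ ∑ m ∈ Finset.range n, c m := by
    rw [hardy_telescope u hu hj, ← hndef]
    calc ‖∑ m ∈ Finset.range n, ∑ t ∈ Finset.range d, Δ m t‖
        ≤ ∑ m ∈ Finset.range n, ‖∑ t ∈ Finset.range d, Δ m t‖ :=
          norm_sum_le _ _
      _ ≤ ∑ m ∈ Finset.range n, ∑ t ∈ Finset.range d, ‖Δ m t‖ :=
          Finset.sum_le_sum fun m _ => norm_sum_le _ _
      _ = ∑ m ∈ Finset.range n, c m := by
          apply Finset.sum_congr rfl; intro m _
          rw [hcdef]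
          exact (Fin.sum_univ_eq_sum_range (fun t => ‖Δ m t‖) d).symm
  -- (2),(3),(4)
  have habsp : ‖u j‖ ^ p ≤ (∑ m ∈ Finset.range n, c m) ^ p :=
    Real.rpow_le_rpow (norm_nonneg _) habs hp0.le
  have hch := hardy_holder hp hs hsp n c hc
  have hstep3 : ∑ m ∈ Finset.range n, ((m:ℝ)+1)^s * c m ^ p
      ≤ ∑ m ∈ Finset.range n, ((m:ℝ)+1)^s *
          ((d:ℝ)^(p-1) * ∑ t : Fin d, ‖Δ m t.1‖ ^ p) := by
    apply Finset.sum_le_sum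
    intro m _
    apply mul_le_mul_of_nonneg_left _ (Real.rpow_nonneg (by positivity) s)
    exact hardy_pow_mean hp _ (fun t => norm_nonneg _)
  have h4 : ‖u j‖ ^ p ≤ KA * (n:ℝ)^(p-1-s) *
      ∑ m ∈ Finset.range n, ((m:ℝ)+1)^s *
        ((d:ℝ)^(p-1) * ∑ t : Fin d, ‖Δ m t.1‖ ^ p) := by
    refine le_trans (le_trans habsp hch) ?_
    apply mul_le_mul_of_nonneg_left hstep3
    exact mul_nonneg hKA (Real.rpow_nonneg hn0.le _)
  -- (5) divide by n^p
  have hnp : (0:ℝ) < (n:ℝ)^p := Real.rpow_pos_of_pos hn0 p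
  have h5 : ‖u j‖ ^ p / (n:ℝ)^p ≤ (KA * (n:ℝ)^(p-1-s) *
      ∑ m ∈ Finset.range n, ((m:ℝ)+1)^s *
        ((d:ℝ)^(p-1) * ∑ t : Fin d, ‖Δ m t.1‖ ^ p)) / (n:ℝ)^p := by
    gcongr
  set T := ∑ m ∈ Finset.range n, ∑ t : Fin d, hCreal s m n * ‖Δ m t.1‖ ^ p with hTdef
  set Sg := ∑ m ∈ Finset.range n, ∑ t : Fin d, ((m:ℝ)+1)^s * ‖Δ m t.1‖ ^ p with hSgdef
  have hT : T = (n:ℝ)^(-(1+s)) * Sg := by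
    rw [hTdef, hSgdef, Finset.mul_sum]
    apply Finset.sum_congr rfl; intro m _
    rw [Finset.mul_sum]
    apply Finset.sum_congr rfl; intro t _
    rw [hCreal]; ring
  have hSg2 : ∑ m ∈ Finset.range n, ((m:ℝ)+1)^s *
      ((d:ℝ)^(p-1) * ∑ t : Fin d, ‖Δ m t.1‖ ^ p) = (d:ℝ)^(p-1) * Sg := by
    simp only [hSgdef, Finset.mul_sum]
    exact Finset.sum_congr rfl fun m _ => Finset.sum_congr rfl fun t _ => by ring
  have hpow : (n:ℝ)^(p-1-s) * ((n:ℝ)^p)⁻¹ = (n:ℝ)^(-(1+s)) := by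
    rw [← Real.rpow_neg hn0.le, ← Real.rpow_add hn0]
    congr 1; ring
  have hid : (KA * (n:ℝ)^(p-1-s) *
      ∑ m ∈ Finset.range n, ((m:ℝ)+1)^s *
        ((d:ℝ)^(p-1) * ∑ t : Fin d, ‖Δ m t.1‖ ^ p)) / (n:ℝ)^p
      = ((d:ℝ)^(p-1) * KA) * T := by
    rw [hSg2, hT, div_eq_mul_inv]
    calc KA * (n:ℝ)^(p-1-s) * ((d:ℝ)^(p-1) * Sg) * ((n:ℝ)^p)⁻¹
        = (KA * (d:ℝ)^(p-1) * Sg) * ((n:ℝ)^(p-1-s) * ((n:ℝ)^p)⁻¹) := by ring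
      _ = ((d:ℝ)^(p-1) * KA) * ((n:ℝ)^(-(1+s)) * Sg) := by rw [hpow]; ring
  rw [hid] at h5
  -- (6) to ENNReal
  have h6 : ENNReal.ofReal (‖u j‖ ^ p / (n:ℝ)^p)
      ≤ ENNReal.ofReal (((d:ℝ)^(p-1) * KA) * T) := ENNReal.ofReal_le_ofReal h5
  refine le_trans h6 ?_
  rw [ENNReal.ofReal_mul (mul_nonneg hdp hKA)]
  apply mul_le_mul_right
  -- ofReal T ≤ tsum
  have hTnn : ∀ m ∈ Finset.range n, (0:ℝ) ≤ ∑ t : Fin d, hCreal s m n * ‖Δ m t.1‖ ^ p :=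
    fun m _ => Finset.sum_nonneg fun t _ => mul_nonneg (hCreal_nonneg s m n)
      (Real.rpow_nonneg (norm_nonneg _) p)
  have hofT : ENNReal.ofReal T ≤ ∑ m ∈ Finset.range n, ∑ t : Fin d,
      ENNReal.ofReal (hCreal s m n) * hBB u p (hPsi j m t.1) t := by
    rw [hTdef, ENNReal.ofReal_sum_of_nonneg hTnn]
    apply Finset.sum_le_sum
    intro m _
    rw [ENNReal.ofReal_sum_of_nonneg (fun t _ => mul_nonneg (hCreal_nonneg s m n)
      (Real.rpow_nonneg (norm_nonneg _) p))]
    apply Finset.sum_le_sum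
    intro t _
    rw [ENNReal.ofReal_mul (hCreal_nonneg s m n)]
    exact mul_le_mul_right (hardy_edge u hp0 hn m t) _
  refine le_trans hofT (le_of_eq ?_)
  have hvanish : ∀ m ∉ Finset.range n, (∑ t : Fin d, if m + 1 ≤ n then
      ENNReal.ofReal (hCreal s m n) * hBB u p (hPsi j m t.1) t else 0) = 0 := by
    intro m hm
    rw [Finset.mem_range] at hm
    apply Finset.sum_eq_zero
    intro t _
    rw [if_neg (by omega)]
  rw [tsum_eq_sum hvanish]
  apply Finset.sum_congr rfl
  intro m hm
  rw [Finset.mem_range] at hm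
  apply Finset.sum_congr rfl
  intro t _
  rw [if_pos (by omega)]
end
end HardyAux

open Finset in
/-- Discrete Hardy inequality on `ℤ₊^d` for `d < p`, for functions with `u(0) = 0`. -/
theorem hardy_p_large (d : ℕ) (p : ℝ) (hd : 0 < d) (hdp : (d : ℝ) < p) :
    ∃ c : ℝ, 0 ≤ c ∧ ∀ u : (Fin d → ℕ) → ℂ, u 0 = 0 →
      (∑' (j : {j : Fin d → ℕ // j ≠ 0}),
          ENNReal.ofReal (‖u j.1‖ ^ p / nsup j.1 ^ p))
        ≤ ENNReal.ofReal c *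
            ∑' (j : {j : Fin d → ℕ // j ≠ 0})
              (k : {k : Fin d → ℕ // nbr j.1 k}),
              ENNReal.ofReal (‖u j.1 - u k.1‖ ^ p) := by
  classical
  have hd1 : (1:ℝ) ≤ (d:ℝ) := by exact_mod_cast hd
  have hp : 1 < p := by linarith
  set s : ℝ := ((d:ℝ) + p)/2 - 1 with hsdef
  have hs : 0 < s := by rw [hsdef]; linarith
  have hsp : s < p - 1 := by rw [hsdef]; linarith
  set r : ℝ := s + 2 - (d:ℝ) with hrdef
  have hr : 1 < r := by rw [hrdef, hsdef]; linarith
  set K2 : ℝ := (d:ℝ)^(p-1) * ((1 - s/(p-1))⁻¹)^(p-1) with hK2def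
  set K5 : ℝ := (d:ℝ) * 4^(d-1) * (2^r/(r-1)) with hK5def
  have hσ1 : s/(p-1) < 1 := (div_lt_one (by linarith)).mpr hsp
  have hK2 : 0 ≤ K2 := mul_nonneg (Real.rpow_nonneg (Nat.cast_nonneg d) _)
    (Real.rpow_nonneg (inv_nonneg.mpr (by linarith)) _)
  have hK5 : 0 ≤ 3 * K5 := by
    have h2r : (0:ℝ) ≤ 2^r := (Real.rpow_pos_of_pos two_pos r).le
    have : (0:ℝ) ≤ 2^r/(r-1) := div_nonneg h2r (by linarith)
    positivity
  refine ⟨K2 * (3 * K5), mul_nonneg hK2 hK5, ?_⟩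
  intro u hu
  set g : (Fin d → ℕ) → ℕ → Fin d → ℝ≥0∞ := fun j m t =>
    if m + 1 ≤ hNN j then
      ENNReal.ofReal (hCreal s m (hNN j)) * hBB u p (hPsi j m t.1) t else 0 with hgdef
  set S : (Fin d → ℕ) → ℝ≥0∞ := fun j => ∑' m : ℕ, ∑ t : Fin d, g j m t with hSdef
  -- step 1
  have step1 : (∑' (j : {j : Fin d → ℕ // j ≠ 0}),
      ENNReal.ofReal (‖u j.1‖ ^ p / nsup j.1 ^ p))
      ≤ ENNReal.ofReal K2 * ∑' (j : {j : Fin d → ℕ // j ≠ 0}), S j.1 := by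
    rw [← ENNReal.tsum_mul_left]
    apply ENNReal.tsum_le_tsum
    intro j
    exact hardy_perj hd hp hs hsp u hu j.2
  -- step 2
  have step2 : (∑' (j : {j : Fin d → ℕ // j ≠ 0}), S j.1) ≤ ∑' j : Fin d → ℕ, S j :=
    ENNReal.tsum_comp_le_tsum_of_injective Subtype.val_injective S
  -- step 3 : reorganize
  set G : (Fin d → ℕ) → ℕ → Fin d → (Fin d → ℕ) → ℝ≥0∞ := fun j m t x =>
    (if (hPsi j m t.1 = x ∧ m+1 ≤ hNN j) then ENNReal.ofReal (hCreal s m (hNN j)) else 0)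
      * hBB u p x t with hGdef
  have claim1 : ∀ (j : Fin d → ℕ) (m : ℕ) (t : Fin d), g j m t = ∑' x : Fin d → ℕ, G j m t x := by
    intro j m t
    have e : ∀ x, G j m t x = if x = hPsi j m t.1 then g j m t else 0 := by
      intro x
      by_cases h1 : x = hPsi j m t.1
      · subst h1
        rw [if_pos rfl]
        by_cases h2 : m + 1 ≤ hNN j
        · simp [hGdef, hgdef, h2]
        · simp [hGdef, hgdef, h2]
      · rw [if_neg h1, hGdef]
        simp only
        rw [if_neg (fun hc => h1 hc.1.symm), zero_mul]
    rw [tsum_congr e, tsum_ite_eq]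
  have step3 : (∑' j : Fin d → ℕ, S j) = ∑' (t : Fin d) (x : Fin d → ℕ),
      (∑' (m : ℕ) (j : Fin d → ℕ),
        if (hPsi j m t.1 = x ∧ m+1 ≤ hNN j) then ENNReal.ofReal (hCreal s m (hNN j)) else 0)
        * hBB u p x t := by
    calc (∑' j : Fin d → ℕ, S j)
        = ∑' (j : Fin d → ℕ) (m : ℕ) (t : Fin d), g j m t := by
          apply tsum_congr; intro j
          apply tsum_congr; intro m
          exact (tsum_fintype _).symm
      _ = ∑' (j : Fin d → ℕ) (t : Fin d) (m : ℕ), g j m t := by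
          apply tsum_congr; intro j
          exact ENNReal.tsum_comm
      _ = ∑' (t : Fin d) (j : Fin d → ℕ) (m : ℕ), g j m t := ENNReal.tsum_comm
      _ = ∑' (t : Fin d) (j : Fin d → ℕ) (m : ℕ) (x : Fin d → ℕ), G j m t x := by
          apply tsum_congr; intro t
          apply tsum_congr; intro j
          apply tsum_congr; intro m
          exact claim1 j m t
      _ = ∑' (t : Fin d) (j : Fin d → ℕ) (x : Fin d → ℕ) (m : ℕ), G j m t x := by
          apply tsum_congr; intro t
          apply tsum_congr; intro j
          exact ENNReal.tsum_comm
      _ = ∑' (t : Fin d) (x : Fin d → ℕ) (j : Fin d → ℕ) (m : ℕ), G j m t x := by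
          apply tsum_congr; intro t
          exact ENNReal.tsum_comm
      _ = ∑' (t : Fin d) (x : Fin d → ℕ) (m : ℕ) (j : Fin d → ℕ), G j m t x := by
          apply tsum_congr; intro t
          apply tsum_congr; intro x
          exact ENNReal.tsum_comm
      _ = _ := by
          apply tsum_congr; intro t
          apply tsum_congr; intro x
          rw [hGdef]
          simp only
          rw [← ENNReal.tsum_mul_right]
          apply tsum_congr; intro m
          rw [← ENNReal.tsum_mul_right]
  -- step 4
  have step4 : (∑' (t : Fin d) (x : Fin d → ℕ),
      (∑' (m : ℕ) (j : Fin d → ℕ),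
        if (hPsi j m t.1 = x ∧ m+1 ≤ hNN j) then ENNReal.ofReal (hCreal s m (hNN j)) else 0)
        * hBB u p x t)
      ≤ ENNReal.ofReal (3 * K5) * ∑' (t : Fin d) (x : Fin d → ℕ), hBB u p x t := by
    rw [← ENNReal.tsum_mul_left]
    apply ENNReal.tsum_le_tsum; intro t
    rw [← ENNReal.tsum_mul_left]
    apply ENNReal.tsum_le_tsum; intro x
    apply mul_le_mul_left
    exact hardy_W hd hr hrdef x t
  -- step 5 : compare with RHS
  have hne : ∀ (t : Fin d) (x : Fin d → ℕ), x + Pi.single t 1 ≠ 0 := by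
    intro t x hcon
    have := congrFun hcon t
    simp only [Pi.add_apply, Pi.single_eq_same, Pi.zero_apply] at this
    omega
  have hnbr : ∀ (t : Fin d) (x : Fin d → ℕ), nbr (x + Pi.single t 1) x := by
    intro t x
    unfold nbr
    have e : ∀ i : Fin d, ((((x + Pi.single t 1 : Fin d → ℕ)) i : ℤ) - (x i : ℤ))^2
        = if i = t then 1 else 0 := by
      intro i
      simp only [Pi.add_apply, Pi.single_apply]
      split <;> push_cast <;> ring
    rw [Finset.sum_congr rfl (fun i _ => e i)]
    simp
  set F : (Σ j : {j : Fin d → ℕ // j ≠ 0}, {k : Fin d → ℕ // nbr j.1 k}) → ℝ≥0∞ :=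
    fun σ => ENNReal.ofReal (‖u σ.1.1 - u σ.2.1‖ ^ p) with hFdef
  set emb : Fin d × (Fin d → ℕ) → (Σ j : {j : Fin d → ℕ // j ≠ 0}, {k : Fin d → ℕ // nbr j.1 k}) :=
    fun q => ⟨⟨q.2 + Pi.single q.1 1, hne q.1 q.2⟩, ⟨q.2, hnbr q.1 q.2⟩⟩ with hembdef
  have hinj : Function.Injective emb := by
    intro a b hab
    have h2 : ((a.2 + Pi.single a.1 1 : Fin d → ℕ), a.2)
        = ((b.2 + Pi.single b.1 1 : Fin d → ℕ), b.2) := by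
      have := congrArg (fun σ : (Σ j : {j : Fin d → ℕ // j ≠ 0}, {k : Fin d → ℕ // nbr j.1 k}) =>
        (σ.1.1, σ.2.1)) hab
      simpa [hembdef] using this
    have hx : a.2 = b.2 := (Prod.mk.injEq _ _ _ _).mp h2 |>.2
    have hsing : (Pi.single a.1 1 : Fin d → ℕ) = Pi.single b.1 1 := by
      have h3 := (Prod.mk.injEq _ _ _ _).mp h2 |>.1
      rw [hx] at h3
      exact add_left_cancel h3
    have ht : a.1 = b.1 := by
      by_contra hne'
      have := congrFun hsing a.1
      simp only [Pi.single_eq_same, Pi.single_apply] at this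
      rw [if_neg hne'] at this
      omega
    exact Prod.ext ht hx
  have step5 : (∑' (t : Fin d) (x : Fin d → ℕ), hBB u p x t)
      ≤ ∑' (j : {j : Fin d → ℕ // j ≠ 0}) (k : {k : Fin d → ℕ // nbr j.1 k}),
          ENNReal.ofReal (‖u j.1 - u k.1‖ ^ p) := by
    rw [← ENNReal.tsum_sigma' F]
    calc (∑' (t : Fin d) (x : Fin d → ℕ), hBB u p x t)
        = ∑' q : Fin d × (Fin d → ℕ), hBB u p q.2 q.1 :=
          (ENNReal.tsum_prod' (f := fun q : Fin d × (Fin d → ℕ) => hBB u p q.2 q.1)).symm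
      _ = ∑' q : Fin d × (Fin d → ℕ), F (emb q) := by
          apply tsum_congr; intro q
          rw [hFdef, hembdef, hBB]
      _ ≤ ∑' σ, F σ := ENNReal.tsum_comp_le_tsum_of_injective hinj F
  -- final assembly
  calc (∑' (j : {j : Fin d → ℕ // j ≠ 0}),
      ENNReal.ofReal (‖u j.1‖ ^ p / nsup j.1 ^ p))
      ≤ ENNReal.ofReal K2 * ∑' (j : {j : Fin d → ℕ // j ≠ 0}), S j.1 := step1
    _ ≤ ENNReal.ofReal K2 * ∑' j : Fin d → ℕ, S j := mul_le_mul_right step2 _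
    _ = ENNReal.ofReal K2 * ∑' (t : Fin d) (x : Fin d → ℕ),
        (∑' (m : ℕ) (j : Fin d → ℕ),
          if (hPsi j m t.1 = x ∧ m+1 ≤ hNN j) then ENNReal.ofReal (hCreal s m (hNN j)) else 0)
          * hBB u p x t := by rw [step3]
    _ ≤ ENNReal.ofReal K2 * (ENNReal.ofReal (3 * K5) *
        ∑' (t : Fin d) (x : Fin d → ℕ), hBB u p x t) := mul_le_mul_right step4 _
    _ ≤ ENNReal.ofReal K2 * (ENNReal.ofReal (3 * K5) *
        ∑' (j : {j : Fin d → ℕ // j ≠ 0}) (k : {k : Fin d → ℕ // nbr j.1 k}),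
          ENNReal.ofReal (‖u j.1 - u k.1‖ ^ p)) := by
        apply mul_le_mul_right
        exact mul_le_mul_right step5 _
    _ = ENNReal.ofReal (K2 * (3 * K5)) *
        ∑' (j : {j : Fin d → ℕ // j ≠ 0}) (k : {k : Fin d → ℕ // nbr j.1 k}),
          ENNReal.ofReal (‖u j.1 - u k.1‖ ^ p) := by
        rw [ENNReal.ofReal_mul hK2, mul_assoc]
end

section
/- Let d = 1, 0 < p < 1 and ε > 0. Then there exists a constant c = c(p, ε) < ∞ such that for every function u : ℤ₊ → ℂ with u(0) = 0, one has ∑_{j ≥ 1} |u(j)|^p / j^{1+ε} ≤ c · ∑_{j ∈ ℤ₊} ∑_{k ∈ ℤ₊, |k−j|=1} |u(j) − u(k)|^p. -/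
open scoped ENNReal

lemma finset_rpow_sum_le {ι : Type*} (s : Finset ι) (f : ι → ℝ≥0∞) {p : ℝ}
    (hp0 : 0 < p) (hp1 : p ≤ 1) : (∑ i ∈ s, f i) ^ p ≤ ∑ i ∈ s, f i ^ p := by
  classical
  induction s using Finset.induction with
  | empty => simp [ENNReal.zero_rpow_of_pos hp0]
  | insert _ _ h ih =>
      rw [Finset.sum_insert h, Finset.sum_insert h]
      calc _ ≤ _ ^ p + _ ^ p := ENNReal.rpow_add_le_add_rpow _ _ hp0.le hp1
        _ ≤ _ := add_le_add_right ih _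

set_option maxHeartbeats 800000 in
/-- One-dimensional discrete Hardy-type inequality on `ℤ₊ = ℕ` for `0 < p < 1`,
with weight `j^(1+ε)`, for functions with `u(0) = 0`. -/
theorem hardy_d_one_p_small (p ε : ℝ) (hp0 : 0 < p) (hp1 : p < 1) (hε : 0 < ε) :
    ∃ c : ℝ, 0 ≤ c ∧ ∀ u : ℕ → ℂ, u 0 = 0 →
      (∑' (j : {j : ℕ // j ≠ 0}),
          ENNReal.ofReal (‖u j.1‖ ^ p / (j.1 : ℝ) ^ (1 + ε)))
        ≤ ENNReal.ofReal c *
            ∑' (j : ℕ) (k : {k : ℕ // ((k : ℤ) - (j : ℤ)) ^ 2 = 1}),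
              ENNReal.ofReal (‖u j - u k.1‖ ^ p) := by
  have h1ε : 1 < 1 + ε := by linarith
  have hsum : Summable (fun j : ℕ => 1 / (j : ℝ) ^ (1 + ε)) :=
    Real.summable_one_div_nat_rpow.mpr h1ε
  refine ⟨∑' j : ℕ, 1 / (j : ℝ) ^ (1 + ε), tsum_nonneg (fun j => by positivity), ?_⟩
  intro u hu0
  set A : ℕ → ℝ≥0∞ := fun i => ENNReal.ofReal (‖u (i + 1) - u i‖ ^ p) with hA
  set w : ℕ → ℝ≥0∞ := fun j => ENNReal.ofReal (1 / (j : ℝ) ^ (1 + ε)) with hw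
  -- pointwise bound
  have key : ∀ j : ℕ, ENNReal.ofReal (‖u j‖ ^ p) ≤ ∑ i ∈ Finset.range j, A i := by
    intro j
    have htel : ‖u j‖ ≤ ∑ i ∈ Finset.range j, ‖u (i + 1) - u i‖ := by
      have : ∑ i ∈ Finset.range j, (u (i + 1) - u i) = u j := by
        rw [Finset.sum_range_sub, hu0, sub_zero]
      calc ‖u j‖ = ‖∑ i ∈ Finset.range j, (u (i + 1) - u i)‖ := by
            rw [this]
        _ ≤ _ := by exact norm_sum_le _ _
    calc ENNReal.ofReal (‖u j‖ ^ p)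
        = ENNReal.ofReal (‖u j‖) ^ p := by
          rw [ENNReal.ofReal_rpow_of_nonneg (norm_nonneg _) hp0.le]
      _ ≤ (∑ i ∈ Finset.range j, ENNReal.ofReal (‖u (i + 1) - u i‖)) ^ p := by
          refine ENNReal.rpow_le_rpow ?_ hp0.le
          rw [← ENNReal.ofReal_sum_of_nonneg (fun i _ => norm_nonneg _)]
          exact ENNReal.ofReal_le_ofReal htel
      _ ≤ ∑ i ∈ Finset.range j, ENNReal.ofReal (‖u (i + 1) - u i‖) ^ p :=
          finset_rpow_sum_le _ _ hp0 hp1.le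
      _ = ∑ i ∈ Finset.range j, A i := by
          refine Finset.sum_congr rfl fun i _ => ?_
          rw [hA, ENNReal.ofReal_rpow_of_nonneg (norm_nonneg _) hp0.le]
  -- W bound
  have hW : ∀ i : ℕ, ∑' j : ℕ, (if i < j then w j else 0) ≤ ENNReal.ofReal (∑' j : ℕ, 1 / (j : ℝ) ^ (1 + ε)) := by
    intro i
    rw [ENNReal.ofReal_tsum_of_nonneg (fun j => by positivity) hsum]
    exact ENNReal.tsum_le_tsum fun j => by split <;> simp [hw]
  -- chain
  calc (∑' (j : {j : ℕ // j ≠ 0}),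
          ENNReal.ofReal (‖u j.1‖ ^ p / (j.1 : ℝ) ^ (1 + ε)))
      ≤ ∑' (j : {j : ℕ // j ≠ 0}), w j.1 * ∑ i ∈ Finset.range j.1, A i := by
        refine ENNReal.tsum_le_tsum fun j => ?_
        rw [div_eq_mul_inv, ← one_div, mul_comm, ENNReal.ofReal_mul (by positivity)]
        exact mul_le_mul_right (key j.1) _
    _ ≤ ∑' (j : ℕ), w j * ∑ i ∈ Finset.range j, A i :=
        ENNReal.tsum_comp_le_tsum_of_injective Subtype.val_injective
          (fun j => w j * ∑ i ∈ Finset.range j, A i)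
    _ = ∑' (j : ℕ) (i : ℕ), (if i < j then w j * A i else 0) := by
        refine tsum_congr fun j => ?_
        rw [Finset.mul_sum]
        rw [tsum_eq_sum (s := Finset.range j)
          (f := fun i => if i < j then w j * A i else 0)
          (fun i hi => if_neg (Finset.mem_range.not.mp hi))]
        exact (Finset.sum_congr rfl fun i hi => (if_pos (Finset.mem_range.mp hi)).symm)
    _ = ∑' (i : ℕ) (j : ℕ), (if i < j then w j * A i else 0) := ENNReal.tsum_comm
    _ = ∑' (i : ℕ), A i * ∑' (j : ℕ), (if i < j then w j else 0) := by
        refine tsum_congr fun i => ?_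
        rw [← ENNReal.tsum_mul_left]
        refine tsum_congr fun j => ?_
        by_cases h : i < j <;> simp [h, mul_comm]
    _ ≤ ∑' (i : ℕ), A i * ENNReal.ofReal (∑' j : ℕ, 1 / (j : ℝ) ^ (1 + ε)) := by
        exact ENNReal.tsum_le_tsum fun i => mul_le_mul_right (hW i) _
    _ = ENNReal.ofReal (∑' j : ℕ, 1 / (j : ℝ) ^ (1 + ε)) * ∑' (i : ℕ), A i := by
        rw [ENNReal.tsum_mul_right, mul_comm]
    _ ≤ _ := by
        refine mul_le_mul_right (ENNReal.tsum_le_tsum fun j => ?_) _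
        have hk : (((j + 1 : ℕ) : ℤ) - (j : ℤ)) ^ 2 = 1 := by push_cast; ring
        calc A j = ENNReal.ofReal (‖u j - u (j + 1)‖ ^ p) := by
              rw [hA]; rw [norm_sub_rev]
          _ ≤ _ := ENNReal.le_tsum (⟨j + 1, hk⟩ : {k : ℕ // ((k : ℤ) - (j : ℤ)) ^ 2 = 1})
end

section
/- Let 1 < p < d, let t > 0 and C < ∞, and suppose that the inequality ∑_{j ∈ ℤ₊^d \ {0}} |u(j)|^p / ‖j‖_∞^t ≤ C · ∑_{j ∈ ℤ₊^d \ {0}} ∑_{k ∈ ℤ₊^d \ {0}, k ∼ j} |u(j) − u(k)|^p holds for all functions u : ℤ₊^d → ℂ for which the left-hand side is finite. Then t ≥ p. (In other words, the exponent p on ‖j‖_∞ in the Hardy inequality for 1 ≤ p < d cannot be replaced by any smaller exponent.) -/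
open scoped ENNReal

open Finset

instance nbrDecidable {d : ℕ} (x y : Fin d → ℕ) : Decidable (nbr x y) := by
  unfold nbr; infer_instance

-- MVT lemma
lemma rpow_succ_diff {a : ℝ} (ha : a < 0) {x : ℝ} (hx : 1 ≤ x) :
    0 ≤ x^a - (x+1)^a ∧ x^a - (x+1)^a ≤ (-a) * x^(a-1) := by
  have hx0 : (0:ℝ) < x := lt_of_lt_of_le one_pos hx
  obtain ⟨c, hc, hc2⟩ := exists_hasDerivAt_eq_slope (fun y => y^a) (fun y => a*y^(a-1))
    (by linarith : x < x+1)
    (fun y hy => (Real.continuousAt_rpow_const y a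
      (Or.inl (ne_of_gt (lt_of_lt_of_le hx0 hy.1)))).continuousWithinAt)
    (fun y hy => Real.hasDerivAt_rpow_const (Or.inl (ne_of_gt (lt_of_lt_of_le hx0 (le_of_lt hy.1)))))
  have h1 : x + 1 - x = 1 := by ring
  rw [h1, div_one] at hc2
  have hcx : (0:ℝ) < c := lt_of_le_of_lt hx0.le (lt_of_le_of_lt (le_refl x) hc.1)
  have hkey : x^a - (x+1)^a = (-a) * c^(a-1) := by
    have := hc2
    nlinarith [this]
  constructor
  · rw [hkey]
    exact mul_nonneg (by linarith) (Real.rpow_nonneg hcx.le _)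
  · rw [hkey]
    have : c^(a-1) ≤ x^(a-1) :=
      Real.rpow_le_rpow_of_nonpos hx0 hc.1.le (by linarith)
    nlinarith [this]

noncomputable def clamp (x : ℝ) : ℝ := min 1 (max 0 x)

lemma clamp_nonneg (x : ℝ) : 0 ≤ clamp x := le_min one_pos.le (le_max_left 0 x)
lemma clamp_le_one (x : ℝ) : clamp x ≤ 1 := min_le_left _ _
lemma clamp_lip (x y : ℝ) : |clamp x - clamp y| ≤ |x - y| := by
  unfold clamp
  calc |min 1 (max 0 x) - min 1 (max 0 y)| ≤ |max 0 x - max 0 y| := by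
        have := abs_min_sub_min_le_max 1 (max 0 x) 1 (max 0 y)
        simpa using this
    _ ≤ |x - y| := by
        rw [max_comm 0 x, max_comm 0 y]
        exact abs_max_sub_max_le_abs _ _ _
lemma clamp_of_one_le {x : ℝ} (h : 1 ≤ x) : clamp x = 1 := by
  unfold clamp
  rw [max_eq_right (le_trans one_pos.le h), min_eq_left h]
lemma clamp_of_nonpos {x : ℝ} (h : x ≤ 0) : clamp x = 0 := by
  unfold clamp
  rw [max_eq_left h, min_eq_right one_pos.le]

noncomputable def hF (α : ℝ) (N n : ℕ) : ℝ := (n:ℝ)^α * clamp (2 - (n:ℝ)/(N:ℝ))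

lemma hF_nonneg (α : ℝ) (N n : ℕ) : 0 ≤ hF α N n :=
  mul_nonneg (Real.rpow_nonneg (Nat.cast_nonneg n) α) (clamp_nonneg _)

lemma hF_le (α : ℝ) (N n : ℕ) : hF α N n ≤ (n:ℝ)^α := by
  have := mul_le_mul_of_nonneg_left (clamp_le_one (2 - (n:ℝ)/N))
    (Real.rpow_nonneg (Nat.cast_nonneg n) α)
  simpa [hF] using this

lemma hF_eq_of_le {α : ℝ} {N n : ℕ} (hN : 1 ≤ N) (h : n ≤ N) : hF α N n = (n:ℝ)^α := by
  have hN0 : (0:ℝ) < N := by exact_mod_cast hN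
  have : (n:ℝ)/N ≤ 1 := by
    rw [div_le_one hN0]; exact_mod_cast h
  rw [hF, clamp_of_one_le (by linarith), mul_one]

lemma hF_eq_zero {α : ℝ} {N n : ℕ} (hN : 1 ≤ N) (h : 2*N ≤ n) : hF α N n = 0 := by
  have hN0 : (0:ℝ) < N := by exact_mod_cast hN
  have : (2:ℝ) ≤ (n:ℝ)/N := by
    rw [le_div_iff₀ hN0]; push_cast; exact_mod_cast (by exact_mod_cast h : (2*N:ℕ) ≤ n)
  rw [hF, clamp_of_nonpos (by linarith), mul_zero]

lemma hF_zero {α : ℝ} (hα : α < 0) (N : ℕ) : hF α N 0 = 0 := by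
  rw [hF]
  norm_num
  left
  exact Real.zero_rpow (ne_of_lt hα)

lemma hF_diff_succ {α : ℝ} (hα : α < 0) {N : ℕ} (hN : 1 ≤ N) {n : ℕ} (hn : 1 ≤ n) :
    |hF α N n - hF α N (n+1)| ≤ (|α| + 2) * (n:ℝ)^(α-1) := by
  have hn0 : (0:ℝ) < n := by exact_mod_cast hn
  have hn1 : (1:ℝ) ≤ n := by exact_mod_cast hn
  have hN0 : (0:ℝ) < N := by exact_mod_cast hN
  set g : ℕ → ℝ := fun m => clamp (2 - (m:ℝ)/(N:ℝ)) with hg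
  have hsplit : hF α N n - hF α N (n+1)
      = ((n:ℝ)^α - ((n:ℝ)+1)^α) * g n + ((n:ℝ)+1)^α * (g n - g (n+1)) := by
    simp only [hF, hg]
    push_cast
    ring
  have hmvt := rpow_succ_diff hα hn1
  have h1 : |((n:ℝ)^α - ((n:ℝ)+1)^α) * g n| ≤ |α| * (n:ℝ)^(α-1) := by
    rw [abs_mul]
    have hga : |g n| ≤ 1 := by
      rw [abs_of_nonneg (clamp_nonneg _)]; exact clamp_le_one _
    have : |(n:ℝ)^α - ((n:ℝ)+1)^α| ≤ (-α) * (n:ℝ)^(α-1) := by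
      rw [abs_of_nonneg hmvt.1]; exact hmvt.2
    calc |(n:ℝ)^α - ((n:ℝ)+1)^α| * |g n| ≤ ((-α) * (n:ℝ)^(α-1)) * 1 := by
          apply mul_le_mul this hga (abs_nonneg _)
          exact mul_nonneg (by linarith) (Real.rpow_nonneg hn0.le _)
      _ = (-α) * (n:ℝ)^(α-1) := by ring
      _ ≤ |α| * (n:ℝ)^(α-1) := by
          apply mul_le_mul_of_nonneg_right (neg_le_abs α) (Real.rpow_nonneg hn0.le _)
  have h2 : ((n:ℝ)+1)^α * |g n - g (n+1)| ≤ 2 * (n:ℝ)^(α-1) := by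
    rcases le_or_gt (n+1) N with hc | hc
    · have e1 : g n = 1 := by
        apply clamp_of_one_le
        have : (n:ℝ)/N ≤ 1 := by
          rw [div_le_one hN0]; exact_mod_cast Nat.le_of_succ_le hc
        linarith
      have e2 : g (n+1) = 1 := by
        apply clamp_of_one_le
        have : ((n+1:ℕ):ℝ)/N ≤ 1 := by
          rw [div_le_one hN0]; exact_mod_cast hc
        push_cast at this ⊢
        linarith
      rw [e1, e2]
      simp
      positivity
    rcases le_or_gt (2*N) n with hc2 | hc2
    · have e1 : g n = 0 := by
        apply clamp_of_nonpos
        have : (2:ℝ) ≤ (n:ℝ)/N := by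
          rw [le_div_iff₀ hN0]
          exact_mod_cast (by push_cast; exact_mod_cast Nat.cast_le.mpr hc2 : (2*(N:ℝ)) ≤ n)
        linarith
      have e2 : g (n+1) = 0 := by
        apply clamp_of_nonpos
        have : (2:ℝ) ≤ ((n+1:ℕ):ℝ)/N := by
          rw [le_div_iff₀ hN0]
          push_cast
          have : (2*(N:ℕ):ℝ) ≤ n := by exact_mod_cast hc2
          push_cast at this
          linarith
        linarith
      rw [e1, e2]
      simp
      positivity
    · -- N ≤ n < 2N
      have hlip : |g n - g (n+1)| ≤ 1/(N:ℝ) := by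
        have := clamp_lip (2 - (n:ℝ)/N) (2 - ((n+1:ℕ):ℝ)/N)
        simp only [hg]
        refine le_trans this ?_
        push_cast
        rw [show (2 - (n:ℝ)/N) - (2 - ((n:ℝ)+1)/N) = 1/N by field_simp; ring]
        rw [abs_of_nonneg (by positivity)]
      have hb : ((n:ℝ)+1)^α ≤ (n:ℝ)^α :=
        Real.rpow_le_rpow_of_nonpos hn0 (by linarith) hα.le
      have hone : 1/(N:ℝ) ≤ 2/(n:ℝ) := by
        rw [div_le_div_iff₀ hN0 hn0]
        have : (n:ℝ) < 2*N := by exact_mod_cast hc2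
        linarith
      calc ((n:ℝ)+1)^α * |g n - g (n+1)| ≤ (n:ℝ)^α * (2/(n:ℝ)) := by
            apply mul_le_mul (le_trans hb (le_refl _)) (le_trans hlip hone) (abs_nonneg _)
            exact Real.rpow_nonneg hn0.le _
        _ = 2 * (n:ℝ)^(α-1) := by
            rw [Real.rpow_sub hn0, Real.rpow_one]
            field_simp
  calc |hF α N n - hF α N (n+1)| ≤ |((n:ℝ)^α - ((n:ℝ)+1)^α) * g n| + |((n:ℝ)+1)^α * (g n - g (n+1))| := by
        rw [hsplit]; exact abs_add_le _ _
    _ ≤ |α| * (n:ℝ)^(α-1) + 2 * (n:ℝ)^(α-1) := by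
        apply add_le_add h1
        rw [abs_mul, abs_of_nonneg (Real.rpow_nonneg (by linarith) α)]
        exact h2
    _ = (|α| + 2) * (n:ℝ)^(α-1) := by ring

noncomputable def hD (α : ℝ) (N n : ℕ) : ℝ := max |hF α N n - hF α N (n+1)| |hF α N n - hF α N (n-1)|

lemma hD_nonneg (α : ℝ) (N n : ℕ) : 0 ≤ hD α N n := le_trans (abs_nonneg _) (le_max_left _ _)

lemma two_rpow_ge_one {α : ℝ} (hα : α < 0) : (1:ℝ) ≤ (2:ℝ)^(1-α) := by
  rw [show (1:ℝ) = (2:ℝ)^(0:ℝ) by simp]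
  exact Real.rpow_le_rpow_of_exponent_le one_le_two (by linarith)

lemma hD_bound {α : ℝ} (hα : α < 0) {N : ℕ} (hN : 1 ≤ N) {n : ℕ} (hn : 1 ≤ n) :
    hD α N n ≤ ((|α| + 2) * 2^(1-α)) * (n:ℝ)^(α-1) := by
  have hn0 : (0:ℝ) < n := by exact_mod_cast hn
  have hc0 : (2:ℝ) ≤ |α| + 2 := by linarith [abs_nonneg α]
  have h2r := two_rpow_ge_one hα
  have hrn : (0:ℝ) ≤ (n:ℝ)^(α-1) := Real.rpow_nonneg hn0.le _
  apply max_le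
  · calc |hF α N n - hF α N (n+1)| ≤ (|α| + 2) * (n:ℝ)^(α-1) := hF_diff_succ hα hN hn
      _ ≤ ((|α| + 2) * 2^(1-α)) * (n:ℝ)^(α-1) :=
        mul_le_mul_of_nonneg_right (by nlinarith) hrn
  · rcases eq_or_lt_of_le hn with h1 | h2
    · -- n = 1
      have hn1 : n = 1 := h1.symm
      subst hn1
      have : hF α N (1-1) = 0 := by
        norm_num
        exact hF_zero hα N
      rw [this, sub_zero, abs_of_nonneg (hF_nonneg _ _ _)]
      have : hF α N 1 ≤ (1:ℝ) := by
        have := hF_le α N 1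
        simpa using this
      have hr1 : ((1:ℕ):ℝ)^(α-1) = 1 := by norm_num
      rw [hr1, mul_one]
      nlinarith
    · -- 2 ≤ n
      have hn2 : 2 ≤ n := h2
      have hcast : ((n-1:ℕ):ℝ) = (n:ℝ) - 1 := by
        push_cast [Nat.cast_sub hn]
        ring
      have hstep : |hF α N n - hF α N (n-1)| ≤ (|α| + 2) * ((n-1:ℕ):ℝ)^(α-1) := by
        rw [abs_sub_comm]
        have := hF_diff_succ hα hN (n := n-1) (by omega)
        rwa [show n - 1 + 1 = n by omega] at this
      have hkey : ((n-1:ℕ):ℝ)^(α-1) ≤ 2^(1-α) * (n:ℝ)^(α-1) := by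
        have hhalf : (n:ℝ)/2 ≤ ((n-1:ℕ):ℝ) := by
          rw [hcast]
          have : (2:ℝ) ≤ n := by exact_mod_cast hn2
          linarith
        have h1 : ((n-1:ℕ):ℝ)^(α-1) ≤ ((n:ℝ)/2)^(α-1) :=
          Real.rpow_le_rpow_of_nonpos (by positivity) hhalf (by linarith)
        have h2 : ((n:ℝ)/2)^(α-1) = (n:ℝ)^(α-1) / (2:ℝ)^(α-1) :=
          Real.div_rpow hn0.le (by norm_num : (0:ℝ) ≤ 2) _
        have h3 : (n:ℝ)^(α-1) / (2:ℝ)^(α-1) = 2^(1-α) * (n:ℝ)^(α-1) := by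
          rw [div_eq_mul_inv, ← Real.rpow_neg (by norm_num : (0:ℝ) ≤ 2)]
          rw [show -(α-1) = 1-α by ring]
          ring
        rw [h2, h3] at h1
        exact h1
      calc |hF α N n - hF α N (n-1)| ≤ (|α| + 2) * ((n-1:ℕ):ℝ)^(α-1) := hstep
        _ ≤ (|α| + 2) * (2^(1-α) * (n:ℝ)^(α-1)) :=
          mul_le_mul_of_nonneg_left hkey (by linarith)
        _ = ((|α| + 2) * 2^(1-α)) * (n:ℝ)^(α-1) := by ring

lemma hD_zero {α : ℝ} (hα : α < 0) {N n : ℕ} (hN : 1 ≤ N) (h : 2*N + 1 ≤ n) : hD α N n = 0 := by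
  have h1 : hF α N n = 0 := hF_eq_zero hN (by omega)
  have h2 : hF α N (n+1) = 0 := hF_eq_zero hN (by omega)
  have h3 : hF α N (n-1) = 0 := hF_eq_zero hN (by omega)
  simp [hD, h1, h2, h3]


def nbox (d N : ℕ) : Finset (Fin d → ℕ) := Fintype.piFinset (fun _ => Finset.range (N+1))

lemma mem_nbox {d N : ℕ} {j : Fin d → ℕ} : j ∈ nbox d N ↔ univ.sup j ≤ N := by
  unfold nbox
  rw [Fintype.mem_piFinset]
  simp only [Finset.mem_range, Nat.lt_succ_iff]
  rw [Finset.sup_le_iff]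
  simp

lemma card_nbox (d N : ℕ) : (nbox d N).card = (N+1)^d := by
  unfold nbox
  rw [Fintype.card_piFinset]
  simp [Finset.card_range]

lemma sup_zero {d : ℕ} : univ.sup (0 : Fin d → ℕ) = 0 := by
  simp [Finset.sup_le_iff]

lemma ne_zero_of_sup_pos {d : ℕ} {j : Fin d → ℕ} (h : 1 ≤ univ.sup j) : j ≠ 0 := by
  intro h0; rw [h0, sup_zero] at h; omega

lemma sup_pos_of_ne_zero {d : ℕ} {j : Fin d → ℕ} (h : j ≠ 0) : 1 ≤ univ.sup j := by
  by_contra hc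
  push_neg at hc
  apply h
  funext i
  have := Finset.le_sup (f := j) (Finset.mem_univ i)
  simp only [Pi.zero_apply]
  omega

lemma card_shell {d N m : ℕ} (hm : 1 ≤ m) (hmN : m ≤ N) :
    ((nbox d N).filter (fun j => univ.sup j = m)).card = (m+1)^d - m^d := by
  have he : (nbox d N).filter (fun j => univ.sup j = m) = nbox d m \ nbox d (m-1) := by
    ext j
    simp only [Finset.mem_filter, Finset.mem_sdiff, mem_nbox]
    constructor
    · rintro ⟨h1, h2⟩; constructor <;> omega
    · rintro ⟨h1, h2⟩
      push_neg at h2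
      constructor <;> omega
  rw [he, Finset.card_sdiff_of_subset (by intro j; simp only [mem_nbox]; omega)]
  rw [card_nbox, card_nbox, show m-1+1 = m by omega]

lemma sum_shells {d N : ℕ} (φ : ℕ → ENNReal) :
    ∑ j ∈ (nbox d N).filter (fun j => j ≠ 0), φ (univ.sup j)
      = ∑ m ∈ Icc 1 N, ((m+1)^d - m^d : ℕ) • φ m := by
  rw [← Finset.sum_fiberwise_of_maps_to (g := fun j => univ.sup j) (t := Icc 1 N)
    (fun j hj => by
      simp only [Finset.mem_filter, mem_nbox] at hj
      simp only [Finset.mem_Icc]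
      exact ⟨sup_pos_of_ne_zero hj.2, hj.1⟩)]
  apply Finset.sum_congr rfl
  intro m hm
  simp only [Finset.mem_Icc] at hm
  have he : ((nbox d N).filter (fun j => j ≠ 0)).filter (fun j => univ.sup j = m)
      = (nbox d N).filter (fun j => univ.sup j = m) := by
    ext j
    simp only [Finset.mem_filter]
    constructor
    · rintro ⟨⟨h1, h2⟩, h3⟩; exact ⟨h1, h3⟩
    · rintro ⟨h1, h3⟩
      exact ⟨⟨h1, ne_zero_of_sup_pos (h3 ▸ hm.1)⟩, h3⟩
  rw [he]
  rw [Finset.sum_congr rfl (fun j hj => by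
    simp only [Finset.mem_filter] at hj
    rw [hj.2])]
  rw [Finset.sum_const, card_shell hm.1 hm.2]


def nbrs {d : ℕ} (j : Fin d → ℕ) : Finset (Fin d → ℕ) :=
  (univ.image (fun i => Function.update j i (j i + 1))) ∪
  (univ.image (fun i => Function.update j i (j i - 1)))

lemma card_nbrs {d : ℕ} (j : Fin d → ℕ) : (nbrs j).card ≤ 2*d := by
  unfold nbrs
  calc _ ≤ _ := Finset.card_union_le _ _
    _ ≤ 2*d := by
      have h1 := Finset.card_image_le (s := (univ : Finset (Fin d)))
        (f := fun i => Function.update j i (j i + 1))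
      have h2 := Finset.card_image_le (s := (univ : Finset (Fin d)))
        (f := fun i => Function.update j i (j i - 1))
      simp only [Finset.card_univ, Fintype.card_fin] at h1 h2
      omega

lemma sq_sum_eq_one {d : ℕ} {x : Fin d → ℤ} (h : ∑ i, x i ^ 2 = 1) :
    ∃ i, (x i = 1 ∨ x i = -1) ∧ ∀ i', i' ≠ i → x i' = 0 := by
  have hex : ∃ i, x i ≠ 0 := by
    by_contra hc
    push_neg at hc
    rw [Finset.sum_eq_zero (fun i _ => by rw [hc i]; ring)] at h
    omega
  obtain ⟨i, hi⟩ := hex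
  have hsplit : x i ^ 2 + ∑ i' ∈ univ.erase i, x i' ^ 2 = 1 := by
    rw [Finset.add_sum_erase _ (fun i' => x i' ^ 2) (Finset.mem_univ i)]
    exact h
  have h1 : 1 ≤ x i ^ 2 := by
    rcases lt_or_gt_of_ne hi with h' | h' <;> nlinarith
  have h2 : 0 ≤ ∑ i' ∈ univ.erase i, x i' ^ 2 :=
    Finset.sum_nonneg (fun i' _ => sq_nonneg _)
  have h3 : x i ^ 2 = 1 := by omega
  have h4 : ∑ i' ∈ univ.erase i, x i' ^ 2 = 0 := by omega
  refine ⟨i, ?_, ?_⟩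
  · have : (x i - 1) * (x i + 1) = 0 := by nlinarith
    rcases mul_eq_zero.mp this with h' | h'
    · left; omega
    · right; omega
  · intro i' hi'
    have := (Finset.sum_eq_zero_iff_of_nonneg (fun i'' _ => sq_nonneg (x i''))).mp h4 i'
      (Finset.mem_erase.mpr ⟨hi', Finset.mem_univ i'⟩)
    nlinarith [this]

lemma nbr_mem_nbrs {d : ℕ} {j k : Fin d → ℕ} (h : nbr j k) : k ∈ nbrs j := by
  obtain ⟨i, hi, hoth⟩ := sq_sum_eq_one h
  unfold nbrs
  rw [Finset.mem_union]
  rcases hi with hi | hi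
  · -- j i - k i = 1, so k i = j i - 1
    right
    rw [Finset.mem_image]
    refine ⟨i, Finset.mem_univ i, ?_⟩
    funext a
    rcases eq_or_ne a i with rfl | ha
    · rw [Function.update_self]; omega
    · rw [Function.update_of_ne ha]
      have := hoth a ha
      omega
  · left
    rw [Finset.mem_image]
    refine ⟨i, Finset.mem_univ i, ?_⟩
    funext a
    rcases eq_or_ne a i with rfl | ha
    · rw [Function.update_self]; omega
    · rw [Function.update_of_ne ha]
      have := hoth a ha
      omega

lemma sup_nbrs_bound {d : ℕ} {j k : Fin d → ℕ} (hk : k ∈ nbrs j) :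
    univ.sup j - 1 ≤ univ.sup k ∧ univ.sup k ≤ univ.sup j + 1 := by
  unfold nbrs at hk
  rw [Finset.mem_union, Finset.mem_image, Finset.mem_image] at hk
  have hsupk_le : ∀ (m : Fin d → ℕ), (∀ a, m a ≤ univ.sup j + 1) → univ.sup m ≤ univ.sup j + 1 :=
    fun m hm => Finset.sup_le (fun a _ => hm a)
  rcases hk with ⟨i, _, rfl⟩ | ⟨i, _, rfl⟩
  · constructor
    · have : univ.sup j ≤ univ.sup (Function.update j i (j i + 1)) := by
        apply Finset.sup_le
        intro a _
        rcases eq_or_ne a i with rfl | ha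
        · exact le_trans (by rw [Function.update_self]; omega)
            (Finset.le_sup (Finset.mem_univ a))
        · exact le_trans (le_of_eq (Function.update_of_ne ha _ _).symm)
            (Finset.le_sup (Finset.mem_univ a))
      omega
    · apply Finset.sup_le
      intro a _
      rcases eq_or_ne a i with rfl | ha
      · rw [Function.update_self]
        have := Finset.le_sup (f := j) (Finset.mem_univ a)
        omega
      · rw [Function.update_of_ne ha]
        have := Finset.le_sup (f := j) (Finset.mem_univ a)
        omega
  · constructor
    · -- sup j - 1 ≤ sup k : every j a ≤ k a + 1
      have : univ.sup j ≤ univ.sup (Function.update j i (j i - 1)) + 1 := by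
        apply Finset.sup_le
        intro a _
        rcases eq_or_ne a i with rfl | ha
        · have := Finset.le_sup (f := Function.update j a (j a - 1)) (Finset.mem_univ a)
          rw [Function.update_self] at this
          omega
        · have := Finset.le_sup (f := Function.update j i (j i - 1)) (Finset.mem_univ a)
          rw [Function.update_of_ne ha] at this
          omega
      omega
    · apply Finset.sup_le
      intro a _
      rcases eq_or_ne a i with rfl | ha
      · rw [Function.update_self]
        have := Finset.le_sup (f := j) (Finset.mem_univ a)
        omega
      · rw [Function.update_of_ne ha]
        have := Finset.le_sup (f := j) (Finset.mem_univ a)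
        omega


lemma nat_shell_lower {m d : ℕ} (hd : 1 ≤ d) : m^(d-1) + m^d ≤ (m+1)^d := by
  obtain ⟨e, rfl⟩ : ∃ e, d = e + 1 := ⟨d-1, by omega⟩
  simp only [Nat.add_sub_cancel]
  calc m^e + m^(e+1) = (m+1) * m^e := by ring
    _ ≤ (m+1) * (m+1)^e := Nat.mul_le_mul_left _ (Nat.pow_le_pow_left (by omega) e)
    _ = (m+1)^(e+1) := by ring

lemma nat_shell_upper' (m e : ℕ) : (m+1)^(e+1) ≤ m^(e+1) + (e+1)*(m+1)^e := by
  induction e with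
  | zero => simp
  | succ e ih =>
    calc (m+1)^(e+2) = (m+1) * (m+1)^(e+1) := by ring
      _ ≤ (m+1) * (m^(e+1) + (e+1)*(m+1)^e) := Nat.mul_le_mul_left _ ih
      _ = m^(e+2) + m^(e+1) + (e+1)*(m+1)^(e+1) := by ring
      _ ≤ m^(e+2) + (m+1)^(e+1) + (e+1)*(m+1)^(e+1) := by
          have := Nat.pow_le_pow_left (show m ≤ m+1 by omega) (e+1)
          omega
      _ = m^(e+2) + (e+2)*(m+1)^(e+1) := by ring

lemma nat_shell_upper {m d : ℕ} (hd : 1 ≤ d) (hm : 1 ≤ m) :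
    (m+1)^d - m^d ≤ d * 2^(d-1) * m^(d-1) := by
  obtain ⟨e, rfl⟩ : ∃ e, d = e + 1 := ⟨d-1, by omega⟩
  simp only [Nat.add_sub_cancel]
  have h1 := nat_shell_upper' m e
  have h2 : (m+1)^e ≤ 2^e * m^e := by
    calc (m+1)^e ≤ (2*m)^e := Nat.pow_le_pow_left (by omega) e
      _ = 2^e * m^e := by rw [Nat.mul_pow]
  have h3 : (e+1)*(m+1)^e ≤ (e+1) * (2^e * m^e) := Nat.mul_le_mul_left _ h2
  have h4 : (e+1) * 2^e * m^e = (e+1) * (2^e * m^e) := by ring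
  rw [h4]
  omega

lemma harmonic_Icc (N : ℕ) : ∑ m ∈ Icc 1 N, (1/(m:ℝ)) = ∑ i ∈ range N, 1/((i:ℝ)+1) := by
  induction N with
  | zero => simp
  | succ N ih =>
    rw [Finset.sum_Icc_succ_top (by omega), ih, Finset.sum_range_succ]
    push_cast
    ring

/-- Optimality of the exponent `p` in the Hardy inequality on `ℤ₊^d` for `1 < p < d`:
if the inequality with weight `‖j‖_∞^t` holds for all admissible `u`, then `t ≥ p`. -/
theorem hardy_exponent_optimal_p_medium (d : ℕ) (p t C : ℝ)
    (hp : 1 < p) (hpd : p < d) (ht : 0 < t)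
    (H : ∀ u : (Fin d → ℕ) → ℂ,
      (∑' (j : {j : Fin d → ℕ // j ≠ 0}),
          ENNReal.ofReal (‖u j.1‖ ^ p / nsup j.1 ^ t)) ≠ ⊤ →
      (∑' (j : {j : Fin d → ℕ // j ≠ 0}),
          ENNReal.ofReal (‖u j.1‖ ^ p / nsup j.1 ^ t))
        ≤ ENNReal.ofReal C *
            ∑' (j : {j : Fin d → ℕ // j ≠ 0})
              (k : {k : Fin d → ℕ // k ≠ 0 ∧ nbr j.1 k}),
              ENNReal.ofReal (‖u j.1 - u k.1‖ ^ p)) :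
    p ≤ t := by
  by_contra hpt
  push_neg at hpt
  -- basic numerology
  have hp0 : (0:ℝ) < p := lt_trans one_pos hp
  have hp_ne : p ≠ 0 := ne_of_gt hp0
  have hd1R : (1:ℝ) < d := lt_trans hp hpd
  have hd1 : 1 ≤ d := by
    have : (1:ℕ) < d := by exact_mod_cast hd1R
    omega
  set α : ℝ := (t - d)/p with hα_def
  have hαp : α * p = t - d := div_mul_cancel₀ _ hp_ne
  have hα : α < 0 := div_neg_of_neg_of_pos (by linarith) hp0
  set c : ℝ := (|α| + 2) * 2^(1-α) with hc_def
  have hc0 : 0 ≤ c := by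
    have := two_rpow_ge_one hα
    nlinarith [abs_nonneg α]
  set ε : ℝ := (d:ℝ) - 1 + (α-1)*p with hε_def
  have hε_lt : ε < -1 := by
    have h1 : (α-1)*p = t - d - p := by rw [sub_mul, hαp]; ring
    rw [hε_def, h1]
    linarith
  have hsum : Summable (fun n : ℕ => (n:ℝ)^ε) := Real.summable_nat_rpow.mpr hε_lt
  set S : ℝ := ∑' n:ℕ, (n:ℝ)^ε with hS_def
  have hS0 : 0 ≤ S := tsum_nonneg (fun n => Real.rpow_nonneg (Nat.cast_nonneg n) ε)
  set A : ℕ := 2*d*d*2^(d-1) with hA_def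
  set K1 : ℝ := (A:ℝ) * c^p with hK1_def
  have hK10 : 0 ≤ K1 := mul_nonneg (Nat.cast_nonneg A) (Real.rpow_nonneg hc0 p)
  set B : ℝ := max C 0 * (K1 * S) with hB_def
  have hB0 : 0 ≤ B := mul_nonneg (le_max_right C 0) (mul_nonneg hK10 hS0)
  -- the main estimate for each N
  have main : ∀ N : ℕ, 1 ≤ N → ∑ m ∈ Icc 1 N, (1/(m:ℝ)) ≤ B := by
    intro N hN
    set u : (Fin d → ℕ) → ℂ := fun x => ((hF α N (univ.sup x) : ℝ) : ℂ) with hu_def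
    have habs : ∀ x : Fin d → ℕ, ‖u x‖ = hF α N (univ.sup x) := by
      intro x
      rw [hu_def]
      simp only [Complex.norm_real, Real.norm_eq_abs]
      exact abs_of_nonneg (hF_nonneg _ _ _)
    set Φ : ℕ → ENNReal := fun m => ENNReal.ofReal (hF α N m ^ p / (m:ℝ) ^ t) with hΦ_def
    have hLHS_eq : (∑' (j : {j : Fin d → ℕ // j ≠ 0}),
        ENNReal.ofReal (‖u j.1‖ ^ p / nsup j.1 ^ t))
          = ∑' (j : {j : Fin d → ℕ // j ≠ 0}), Φ (univ.sup j.1) := by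
      apply tsum_congr
      intro j
      rw [habs j.1]
      rfl
    have hΦzero : ∀ m : ℕ, 2*N ≤ m → Φ m = 0 := by
      intro m hm
      rw [hΦ_def]
      simp only
      rw [hF_eq_zero hN hm, Real.zero_rpow hp_ne, zero_div, ENNReal.ofReal_zero]
    -- vanishing outside the box of size 2N
    have hvan : ∀ j : {j : Fin d → ℕ // j ≠ 0},
        j ∉ (nbox d (2*N)).subtype (fun j => j ≠ 0) → Φ (univ.sup j.1) = 0 := by
      intro j hj
      apply hΦzero
      rw [Finset.mem_subtype] at hj
      have : ¬ (univ.sup j.1 ≤ 2*N) := fun hc => hj (mem_nbox.mpr hc)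
      omega
    have hfinΦ : (∑' (j : {j : Fin d → ℕ // j ≠ 0}), Φ (univ.sup j.1)) ≠ ⊤ := by
      rw [tsum_eq_sum hvan]
      exact (ENNReal.sum_lt_top.mpr (fun _ _ => ENNReal.ofReal_lt_top)).ne
    -- lower bound of the LHS by the harmonic sum
    have hΦval : ∀ m : ℕ, 1 ≤ m → m ≤ N → Φ m = ENNReal.ofReal ((m:ℝ) ^ (-(d:ℝ))) := by
      intro m h1 h2
      have hm0 : (0:ℝ) < m := by exact_mod_cast h1
      rw [hΦ_def]
      simp only
      rw [hF_eq_of_le hN h2, ← Real.rpow_mul hm0.le, hαp, ← Real.rpow_sub hm0]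
      norm_num
    have hlow : ∀ m ∈ Icc 1 N, ENNReal.ofReal (1/(m:ℝ)) ≤ ((m+1)^d - m^d : ℕ) • Φ m := by
      intro m hm
      rw [Finset.mem_Icc] at hm
      have hm0 : (0:ℝ) < m := by exact_mod_cast hm.1
      rw [hΦval m hm.1 hm.2, nsmul_eq_mul, ← ENNReal.ofReal_natCast,
        ← ENNReal.ofReal_mul (Nat.cast_nonneg _)]
      apply ENNReal.ofReal_le_ofReal
      have hcard : ((m:ℝ))^(d-1:ℕ) ≤ (((m+1)^d - m^d : ℕ):ℝ) := by
        have h1 : m^(d-1) ≤ (m+1)^d - m^d := by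
          have := nat_shell_lower (m := m) hd1
          have h2 := Nat.pow_le_pow_left (show m ≤ m+1 by omega) d
          omega
        exact_mod_cast h1
      have heq : ((m:ℝ))^(d-1:ℕ) * (m:ℝ)^(-(d:ℝ)) = 1/(m:ℝ) := by
        rw [← Real.rpow_natCast (m:ℝ) (d-1), ← Real.rpow_add hm0]
        rw [show ((d-1:ℕ):ℝ) + -(d:ℝ) = -1 by push_cast [Nat.cast_sub hd1]; ring]
        rw [Real.rpow_neg_one]
        exact inv_eq_one_div _
      calc (1:ℝ)/(m:ℝ) = ((m:ℝ))^(d-1:ℕ) * (m:ℝ)^(-(d:ℝ)) := heq.symm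
        _ ≤ (((m+1)^d - m^d : ℕ):ℝ) * (m:ℝ)^(-(d:ℝ)) :=
          mul_le_mul_of_nonneg_right hcard (Real.rpow_nonneg hm0.le _)
    have hHar_le : ENNReal.ofReal (∑ m ∈ Icc 1 N, (1/(m:ℝ)))
        ≤ ∑' (j : {j : Fin d → ℕ // j ≠ 0}), Φ (univ.sup j.1) := by
      rw [ENNReal.ofReal_sum_of_nonneg (fun m hm => by positivity)]
      calc ∑ m ∈ Icc 1 N, ENNReal.ofReal (1/(m:ℝ))
          ≤ ∑ m ∈ Icc 1 N, ((m+1)^d - m^d : ℕ) • Φ m := Finset.sum_le_sum hlow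
        _ = ∑ j ∈ (nbox d N).filter (fun j => j ≠ 0), Φ (univ.sup j) := (sum_shells Φ).symm
        _ = ∑ j ∈ (nbox d N).subtype (fun j => j ≠ 0), Φ (univ.sup j.1) :=
          (Finset.sum_subtype_eq_sum_filter (fun j => Φ (univ.sup j))).symm
        _ ≤ ∑' (j : {j : Fin d → ℕ // j ≠ 0}), Φ (univ.sup j.1) := ENNReal.sum_le_tsum _
    -- upper bound on the RHS
    set Ψ : ℕ → ENNReal := fun m => (2*d) • ENNReal.ofReal (hD α N m ^ p) with hΨ_def
    have hinner : ∀ j : {j : Fin d → ℕ // j ≠ 0},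
        (∑' (k : {k : Fin d → ℕ // k ≠ 0 ∧ nbr j.1 k}),
          ENNReal.ofReal (‖u j.1 - u k.1‖ ^ p)) ≤ Ψ (univ.sup j.1) := by
      intro j
      have hm1 : 1 ≤ univ.sup j.1 := sup_pos_of_ne_zero j.2
      have hdiff : ∀ (k : {k : Fin d → ℕ // k ≠ 0 ∧ nbr j.1 k}),
          ‖u j.1 - u k.1‖ ≤ hD α N (univ.sup j.1) := by
        intro k
        have hk := sup_nbrs_bound (nbr_mem_nbrs k.2.2)
        have habs2 : ‖u j.1 - u k.1‖
            = |hF α N (univ.sup j.1) - hF α N (univ.sup k.1)| := by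
          rw [hu_def]
          simp only
          rw [← Complex.ofReal_sub, Complex.norm_real, Real.norm_eq_abs]
        rw [habs2]
        have hcases : univ.sup k.1 = univ.sup j.1 - 1 ∨ univ.sup k.1 = univ.sup j.1
            ∨ univ.sup k.1 = univ.sup j.1 + 1 := by omega
        rcases hcases with h | h | h
        · rw [h]; exact le_max_right _ _
        · rw [h]; simpa using hD_nonneg α N (univ.sup j.1)
        · rw [h]; exact le_max_left _ _
      have hsub : ((nbrs j.1).subtype (fun k => k ≠ 0 ∧ nbr j.1 k)).card ≤ 2*d := by
        rw [Finset.card_subtype]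
        exact le_trans (Finset.card_filter_le _ _) (card_nbrs j.1)
      calc (∑' (k : {k : Fin d → ℕ // k ≠ 0 ∧ nbr j.1 k}),
            ENNReal.ofReal (‖u j.1 - u k.1‖ ^ p))
          = ∑ k ∈ (nbrs j.1).subtype (fun k => k ≠ 0 ∧ nbr j.1 k),
              ENNReal.ofReal (‖u j.1 - u k.1‖ ^ p) :=
            tsum_eq_sum (fun k hk =>
              absurd (Finset.mem_subtype.mpr (nbr_mem_nbrs k.2.2)) hk)
        _ ≤ ((nbrs j.1).subtype (fun k => k ≠ 0 ∧ nbr j.1 k)).card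
              • ENNReal.ofReal (hD α N (univ.sup j.1) ^ p) := by
            apply Finset.sum_le_card_nsmul
            intro k _
            exact ENNReal.ofReal_le_ofReal
              (Real.rpow_le_rpow (norm_nonneg _) (hdiff k) hp0.le)
        _ ≤ Ψ (univ.sup j.1) := by
            rw [hΨ_def]
            simp only [nsmul_eq_mul]
            exact mul_le_mul_left (by exact_mod_cast hsub) _
    have hΨzero : ∀ m : ℕ, 2*N+1 ≤ m → Ψ m = 0 := by
      intro m hm
      rw [hΨ_def]
      simp only
      rw [hD_zero hα hN hm, Real.zero_rpow hp_ne, ENNReal.ofReal_zero, smul_zero]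
    have hvanΨ : ∀ j : {j : Fin d → ℕ // j ≠ 0},
        j ∉ (nbox d (2*N)).subtype (fun j => j ≠ 0) → Ψ (univ.sup j.1) = 0 := by
      intro j hj
      apply hΨzero
      rw [Finset.mem_subtype] at hj
      have : ¬ (univ.sup j.1 ≤ 2*N) := fun hc => hj (mem_nbox.mpr hc)
      omega
    have hterm : ∀ m ∈ Icc 1 (2*N),
        ((m+1)^d - m^d : ℕ) • Ψ m ≤ ENNReal.ofReal (K1 * (m:ℝ)^ε) := by
      intro m hm
      rw [Finset.mem_Icc] at hm
      have hm0 : (0:ℝ) < m := by exact_mod_cast hm.1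
      rw [hΨ_def]
      simp only
      rw [smul_smul]
      rw [nsmul_eq_mul, ← ENNReal.ofReal_natCast, ← ENNReal.ofReal_mul (Nat.cast_nonneg _)]
      apply ENNReal.ofReal_le_ofReal
      have hDp : hD α N m ^ p ≤ (c * (m:ℝ)^(α-1))^p :=
        Real.rpow_le_rpow (hD_nonneg α N m) (hD_bound hα hN hm.1) hp0.le
      have hexp : (c * (m:ℝ)^(α-1))^p = c^p * (m:ℝ)^((α-1)*p) := by
        rw [Real.mul_rpow hc0 (Real.rpow_nonneg hm0.le _), ← Real.rpow_mul hm0.le]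
      have hcardN : ((m+1)^d - m^d) * (2*d) ≤ A * m^(d-1) := by
        have h1 : (m+1)^d - m^d ≤ d * 2^(d-1) * m^(d-1) := nat_shell_upper hd1 hm.1
        calc ((m+1)^d - m^d) * (2*d) ≤ (d * 2^(d-1) * m^(d-1)) * (2*d) :=
              Nat.mul_le_mul_right _ h1
          _ = A * m^(d-1) := by rw [hA_def]; ring
      have hcard : ((((m+1)^d - m^d) * (2*d) : ℕ):ℝ) ≤ (A:ℝ) * ((m:ℝ))^(d-1:ℕ) := by
        exact_mod_cast hcardN
      have hpowsplit : (A:ℝ) * ((m:ℝ))^(d-1:ℕ) * (c^p * (m:ℝ)^((α-1)*p)) = K1 * (m:ℝ)^ε := by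
        have hcast : ((d-1:ℕ):ℝ) = (d:ℝ) - 1 := by push_cast [Nat.cast_sub hd1]; ring
        rw [← Real.rpow_natCast (m:ℝ) (d-1)]
        rw [show (A:ℝ) * (m:ℝ)^(((d-1:ℕ)):ℝ) * (c^p * (m:ℝ)^((α-1)*p))
            = ((A:ℝ)*c^p) * ((m:ℝ)^(((d-1:ℕ)):ℝ) * (m:ℝ)^((α-1)*p)) by ring]
        rw [← Real.rpow_add hm0, hcast, hK1_def, hε_def]
      calc ((((m+1)^d - m^d) * (2*d) : ℕ):ℝ) * (hD α N m ^ p)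
          ≤ ((A:ℝ) * ((m:ℝ))^(d-1:ℕ)) * (c^p * (m:ℝ)^((α-1)*p)) := by
            apply mul_le_mul hcard (le_of_le_of_eq hDp hexp)
              (Real.rpow_nonneg (hD_nonneg α N m) p)
              (mul_nonneg (Nat.cast_nonneg A) (by positivity))
        _ = K1 * (m:ℝ)^ε := hpowsplit
    have hRHS_le : (∑' (j : {j : Fin d → ℕ // j ≠ 0})
          (k : {k : Fin d → ℕ // k ≠ 0 ∧ nbr j.1 k}),
            ENNReal.ofReal (‖u j.1 - u k.1‖ ^ p))
        ≤ ENNReal.ofReal (K1 * S) := by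
      calc (∑' (j : {j : Fin d → ℕ // j ≠ 0})
            (k : {k : Fin d → ℕ // k ≠ 0 ∧ nbr j.1 k}),
              ENNReal.ofReal (‖u j.1 - u k.1‖ ^ p))
          ≤ ∑' (j : {j : Fin d → ℕ // j ≠ 0}), Ψ (univ.sup j.1) :=
            ENNReal.tsum_le_tsum hinner
        _ = ∑ j ∈ (nbox d (2*N)).subtype (fun j => j ≠ 0), Ψ (univ.sup j.1) :=
            tsum_eq_sum hvanΨ
        _ = ∑ j ∈ (nbox d (2*N)).filter (fun j => j ≠ 0), Ψ (univ.sup j) :=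
            Finset.sum_subtype_eq_sum_filter (fun j => Ψ (univ.sup j))
        _ = ∑ m ∈ Icc 1 (2*N), ((m+1)^d - m^d : ℕ) • Ψ m := sum_shells Ψ
        _ ≤ ∑ m ∈ Icc 1 (2*N), ENNReal.ofReal (K1 * (m:ℝ)^ε) := Finset.sum_le_sum hterm
        _ = ENNReal.ofReal (∑ m ∈ Icc 1 (2*N), K1 * (m:ℝ)^ε) :=
            (ENNReal.ofReal_sum_of_nonneg (fun m hm =>
              mul_nonneg hK10 (Real.rpow_nonneg (Nat.cast_nonneg m) ε))).symm
        _ ≤ ENNReal.ofReal (K1 * S) := by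
            apply ENNReal.ofReal_le_ofReal
            rw [← Finset.mul_sum]
            apply mul_le_mul_of_nonneg_left _ hK10
            exact Summable.sum_le_tsum _ (fun i _ => Real.rpow_nonneg (Nat.cast_nonneg i) ε) hsum
    -- put everything together
    have hfin0 : (∑' (j : {j : Fin d → ℕ // j ≠ 0}),
        ENNReal.ofReal (‖u j.1‖ ^ p / nsup j.1 ^ t)) ≠ ⊤ := by
      rw [hLHS_eq]; exact hfinΦ
    have hmain := H u hfin0
    rw [hLHS_eq] at hmain
    have hchain : ENNReal.ofReal (∑ m ∈ Icc 1 N, (1/(m:ℝ))) ≤ ENNReal.ofReal B := by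
      calc ENNReal.ofReal (∑ m ∈ Icc 1 N, (1/(m:ℝ)))
          ≤ ∑' (j : {j : Fin d → ℕ // j ≠ 0}), Φ (univ.sup j.1) := hHar_le
        _ ≤ ENNReal.ofReal C * (∑' (j : {j : Fin d → ℕ // j ≠ 0})
              (k : {k : Fin d → ℕ // k ≠ 0 ∧ nbr j.1 k}),
                ENNReal.ofReal (‖u j.1 - u k.1‖ ^ p)) := hmain
        _ ≤ ENNReal.ofReal (max C 0) * ENNReal.ofReal (K1 * S) :=
            mul_le_mul' (ENNReal.ofReal_le_ofReal (le_max_left C 0)) hRHS_le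
        _ = ENNReal.ofReal B := by
            rw [hB_def, ENNReal.ofReal_mul (le_max_right C 0)]
    exact (ENNReal.ofReal_le_ofReal_iff hB0).mp hchain
  -- harmonic divergence gives a contradiction
  have hdiv : Filter.Tendsto (fun N : ℕ => ∑ m ∈ Icc 1 N, (1/(m:ℝ))) Filter.atTop Filter.atTop := by
    have := Real.tendsto_sum_range_one_div_nat_succ_atTop
    apply this.congr
    intro N
    rw [harmonic_Icc]
  obtain ⟨N, hN⟩ := ((hdiv.eventually_gt_atTop B).and (Filter.eventually_ge_atTop 1)).exists
  exact absurd (main N hN.2) (not_le.mpr hN.1)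
end

section
/- Let 0 < p ≤ 1 < d, let t > 0 and C < ∞, and suppose that the inequality ∑_{j ∈ ℤ₊^d \ {0}} |u(j)|^p / ‖j‖_∞^t ≤ C · ∑_{j ∈ ℤ₊^d \ {0}} ∑_{k ∈ ℤ₊^d \ {0}, k ∼ j} |u(j) − u(k)|^p holds for all functions u : ℤ₊^d → ℂ for which the left-hand side is finite. Then t ≥ 1. (In other words, the exponent 1 on ‖j‖_∞ in the Hardy inequality for 0 < p ≤ 1 < d cannot be replaced by any smaller exponent.) -/
open scoped ENNReal

lemma pow_sub_aux (a b e : ℕ) (h : b ≤ a) : a^(e+1) ≤ b^(e+1) + (e+1)*(a-b)*a^e := by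
  induction e with
  | zero => simpa using (by omega : a ≤ b + (a - b))
  | succ e ih =>
      have h1 : a^(e+2) = a * a^(e+1) := by ring
      have h2 : a * a^(e+1) ≤ a * (b^(e+1) + (e+1)*(a-b)*a^e) := Nat.mul_le_mul_left a ih
      have h3 : a * b^(e+1) = (b + (a-b)) * b^(e+1) := by rw [Nat.add_sub_cancel' h]
      have h4 : b^(e+1) ≤ a^(e+1) := Nat.pow_le_pow_left h _
      calc a^(e+2) ≤ a * (b^(e+1) + (e+1)*(a-b)*a^e) := by rw [h1]; exact h2
    _ = a * b^(e+1) + (e+1)*(a-b)*(a*a^e) := by ring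
    _ = (b + (a-b)) * b^(e+1) + (e+1)*(a-b)*a^(e+1) := by rw [h3]; ring
    _ = b^(e+2) + (a-b)*b^(e+1) + (e+1)*(a-b)*a^(e+1) := by ring
    _ ≤ b^(e+2) + (a-b)*a^(e+1) + (e+1)*(a-b)*a^(e+1) := by
        have := Nat.mul_le_mul_left (a-b) h4; omega
    _ = b^(e+2) + (e+2)*(a-b)*a^(e+1) := by ring

lemma nbr_step {d : ℕ} {j k : Fin d → ℕ} (h : nbr j k) :
    ∃ i, (∀ m, m ≠ i → k m = j m) ∧ ((k i : ℤ) = j i + 1 ∨ (k i : ℤ) + 1 = j i) := by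
  obtain ⟨i, _, hi⟩ := Finset.exists_ne_zero_of_sum_ne_zero (by rw [h]; norm_num : ∑ i, ((j i : ℤ) - (k i : ℤ)) ^ 2 ≠ 0)
  have hs0 : ((j i : ℤ) - k i) ≠ 0 := fun h0 => hi (by rw [h0]; ring)
  set s : ℤ := (j i : ℤ) - k i with hs
  have hsq : 1 ≤ s^2 := by rcases lt_or_gt_of_ne hs0 with h' | h' <;> nlinarith
  have hsplit : s^2 + ∑ m ∈ Finset.univ.erase i, ((j m : ℤ) - k m)^2 = 1 := by
    rw [hs, Finset.add_sum_erase _ (fun m => ((j m : ℤ) - k m)^2) (Finset.mem_univ i)]; exact h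
  have hrest : ∀ m ∈ Finset.univ.erase i, ((j m : ℤ) - k m)^2 = 0 := by
    have hnn : ∀ m ∈ Finset.univ.erase i, (0:ℤ) ≤ ((j m : ℤ) - k m)^2 := fun m _ => sq_nonneg _
    have : ∑ m ∈ Finset.univ.erase i, ((j m : ℤ) - k m)^2 = 0 := by
      have := Finset.sum_nonneg hnn; omega
    exact (Finset.sum_eq_zero_iff_of_nonneg hnn).mp this
  refine ⟨i, fun m hm => ?_, ?_⟩
  · have := hrest m (Finset.mem_erase.mpr ⟨hm, Finset.mem_univ m⟩)
    have : (j m : ℤ) = k m := by nlinarith [sq_nonneg ((j m : ℤ) - k m)]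
    exact_mod_cast this.symm
  · have hs1 : s^2 = 1 := by
      have h2 : ∑ m ∈ Finset.univ.erase i, ((j m : ℤ) - k m)^2 = 0 := Finset.sum_eq_zero hrest
      omega
    have : (s - 1) * (s + 1) = 0 := by nlinarith
    rcases mul_eq_zero.mp this with h' | h'
    · right; omega
    · left; omega



lemma nbr_coord_le {d : ℕ} {j k : Fin d → ℕ} (h : nbr j k) (m : Fin d) :
    k m ≤ j m + 1 ∧ j m ≤ k m + 1 := by
  obtain ⟨i, hoth, hi⟩ := nbr_step h
  by_cases hm : m = i
  · subst hm
    rcases hi with h' | h' <;> constructor <;> omega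
  · rw [hoth m hm]; omega

lemma nbr_sup {d : ℕ} {j k : Fin d → ℕ} (h : nbr j k) :
    Finset.univ.sup k ≤ Finset.univ.sup j + 1 ∧ Finset.univ.sup j ≤ Finset.univ.sup k + 1 := by
  constructor <;> refine Finset.sup_le fun m _ => ?_
  · exact le_trans (nbr_coord_le h m).1 (by
      have := Finset.le_sup (f := j) (Finset.mem_univ m); omega)
  · exact le_trans (nbr_coord_le h m).2 (by
      have := Finset.le_sup (f := k) (Finset.mem_univ m); omega)

noncomputable def phi {d : ℕ} (j : Fin d → ℕ) :
    {k : Fin d → ℕ // k ≠ 0 ∧ nbr j k} → Fin d × Bool := fun k =>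
  ⟨Classical.choose (nbr_step k.2.2),
   decide ((k.1 (Classical.choose (nbr_step k.2.2)) : ℤ) = j (Classical.choose (nbr_step k.2.2)) + 1)⟩

lemma phi_inj {d : ℕ} (j : Fin d → ℕ) : Function.Injective (phi j) := by
  rintro ⟨k, hk⟩ ⟨k', hk'⟩ hE
  obtain ⟨hoth, hi⟩ := Classical.choose_spec (nbr_step hk.2)
  obtain ⟨hoth', hi'⟩ := Classical.choose_spec (nbr_step hk'.2)
  have h1 : Classical.choose (nbr_step hk.2) = Classical.choose (nbr_step hk'.2) :=
    congrArg Prod.fst hE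
  set i := Classical.choose (nbr_step hk.2) with hidef
  rw [← h1] at hoth' hi'
  have h2 : ((k i : ℤ) = j i + 1) ↔ ((k' i : ℤ) = j i + 1) := by
    have := congrArg Prod.snd hE
    simp only [phi, ← hidef, ← h1] at this
    exact decide_eq_decide.mp this
  have hki : k i = k' i := by
    rcases hi with h' | h' <;> rcases hi' with h'' | h''
    · omega
    · exact absurd (h2.mp h') (by omega)
    · exact absurd (h2.mpr h'') (by omega)
    · omega
  refine Subtype.ext (funext fun m => ?_)
  show k m = k' m
  by_cases hm : m = i
  · subst hm; exact hki
  · rw [hoth m hm, hoth' m hm]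

lemma tsum_le_two_d {d : ℕ} (j : Fin d → ℕ) (f : {k : Fin d → ℕ // k ≠ 0 ∧ nbr j k} → ℝ≥0∞)
    (hf : ∀ k, f k ≤ 1) : ∑' k, f k ≤ ((2 * d : ℕ) : ℝ≥0∞) := by
  have : Finite {k : Fin d → ℕ // k ≠ 0 ∧ nbr j k} := Finite.of_injective _ (phi_inj j)
  cases nonempty_fintype {k : Fin d → ℕ // k ≠ 0 ∧ nbr j k}
  rw [tsum_fintype]
  calc ∑ k, f k ≤ ∑ _k : {k : Fin d → ℕ // k ≠ 0 ∧ nbr j k}, (1 : ℝ≥0∞) :=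
        Finset.sum_le_sum fun k _ => hf k
    _ = (Fintype.card {k : Fin d → ℕ // k ≠ 0 ∧ nbr j k} : ℝ≥0∞) := by simp
    _ ≤ ((2 * d : ℕ) : ℝ≥0∞) := by
        have := Fintype.card_le_of_injective _ (phi_inj j)
        simp only [Fintype.card_prod, Fintype.card_fin, Fintype.card_bool] at this
        exact_mod_cast (by omega : Fintype.card {k : Fin d → ℕ // k ≠ 0 ∧ nbr j k} ≤ 2 * d)

lemma card_box (d m : ℕ) : (Fintype.piFinset fun _ : Fin d => Finset.range m).card = m ^ d := by
  simp [Fintype.card_piFinset]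

lemma card_boundary (d n : ℕ) (hn : 1 ≤ n) :
    (((Fintype.piFinset fun _ : Fin d => Finset.range (n+2))).filter
      (fun j => n ≤ Finset.univ.sup j)).card = (n+2)^d - n^d := by
  have hsplit := Finset.card_filter_add_card_filter_not
    (s := Fintype.piFinset fun _ : Fin d => Finset.range (n+2))
  have hsplit := hsplit (fun j : Fin d → ℕ => n ≤ Finset.univ.sup j)
  have hneg : ((Fintype.piFinset fun _ : Fin d => Finset.range (n+2)).filter
      (fun j => ¬ (fun j : Fin d → ℕ => n ≤ Finset.univ.sup j) j)) = Fintype.piFinset fun _ : Fin d => Finset.range n := by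
    ext j
    simp only [Finset.mem_filter, Fintype.mem_piFinset, Finset.mem_range, not_le]
    constructor
    · rintro ⟨hall, hsup⟩ i
      exact lt_of_le_of_lt (Finset.le_sup (Finset.mem_univ i)) hsup
    · intro hall
      refine ⟨fun i => by have := hall i; omega, ?_⟩
      have : Finset.univ.sup j < n := by
        refine Finset.sup_lt_iff (show (⊥:ℕ) < n from hn) |>.mpr fun i _ => hall i
      exact this
  rw [hneg, card_box, card_box] at hsplit
  omega

lemma boundary_le (d n : ℕ) (hn : 1 ≤ n) (hd : 1 ≤ d) :
    (n+2)^d - n^d ≤ 2 * d * 3^(d-1) * n^(d-1) := by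
  obtain ⟨e, rfl⟩ : ∃ e, d = e + 1 := ⟨d - 1, by omega⟩
  have h1 := pow_sub_aux (n+2) n e (by omega)
  have h2 : (n+2)^e ≤ (3*n)^e := Nat.pow_le_pow_left (by omega) e
  have h3 : (3*n)^e = 3^e * n^e := Nat.mul_pow 3 n e
  have h4 : (e+1) * ((n+2) - n) * (n+2)^e ≤ 2 * (e+1) * (3^e * n^e) := by
    have : (n+2) - n = 2 := by omega
    rw [this]
    calc (e+1) * 2 * (n+2)^e ≤ (e+1) * 2 * (3^e * n^e) := by
          exact Nat.mul_le_mul_left _ (by rw [← h3]; exact h2)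
      _ = 2 * (e+1) * (3^e * n^e) := by ring
  simp only [Nat.add_sub_cancel]
  calc (n+2)^(e+1) - n^(e+1) ≤ (e+1) * ((n+2) - n) * (n+2)^e := by omega
    _ ≤ 2 * (e+1) * (3^e * n^e) := h4
    _ = 2 * (e+1) * 3^e * n^e := by ring


/-- Optimality of the exponent `1` in the Hardy inequality on `ℤ₊^d` for `0 < p ≤ 1 < d`:
if the inequality with weight `‖j‖_∞^t` holds for all admissible `u`, then `t ≥ 1`. -/
theorem hardy_exponent_optimal_p_small (d : ℕ) (p t C : ℝ)
    (hp0 : 0 < p) (hp1 : p ≤ 1) (hd : 1 < d) (ht : 0 < t)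
    (H : ∀ u : (Fin d → ℕ) → ℂ,
      (∑' (j : {j : Fin d → ℕ // j ≠ 0}),
          ENNReal.ofReal (‖u j.1‖ ^ p / nsup j.1 ^ t)) ≠ ⊤ →
      (∑' (j : {j : Fin d → ℕ // j ≠ 0}),
          ENNReal.ofReal (‖u j.1‖ ^ p / nsup j.1 ^ t))
        ≤ ENNReal.ofReal C *
            ∑' (j : {j : Fin d → ℕ // j ≠ 0})
              (k : {k : Fin d → ℕ // k ≠ 0 ∧ nbr j.1 k}),
              ENNReal.ofReal (‖u j.1 - u k.1‖ ^ p)) :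
    1 ≤ t := by
  by_contra hlt
  push_neg at hlt
  set K : ℝ := (max C 0) * ((2 * d * 3^(d-1) : ℕ) : ℝ) * ((2 * d : ℕ) : ℝ) with hK
  have key : ∀ n : ℕ, 1 ≤ n → (n : ℝ) ^ (1 - t) ≤ K := by
    intro n hn
    have hNpos : (0:ℝ) < (n:ℝ) := by exact_mod_cast hn
    set u : (Fin d → ℕ) → ℂ := fun j => if Finset.univ.sup j ≤ n then 1 else 0 with hu
    -- term simplification
    have hterm : ∀ j : {j : Fin d → ℕ // j ≠ 0},
        ENNReal.ofReal (‖u j.1‖ ^ p / nsup j.1 ^ t)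
          = if Finset.univ.sup j.1 ≤ n then ENNReal.ofReal (1 / nsup j.1 ^ t) else 0 := by
      intro j
      by_cases hj : Finset.univ.sup j.1 ≤ n
      · simp only [hu]
        rw [if_pos hj, if_pos hj]
        simp [Real.one_rpow]
      · simp only [hu]
        rw [if_neg hj, if_neg hj]
        simp [Real.zero_rpow hp0.ne']
    -- finiteness of LHS
    set S1 : Finset {j : Fin d → ℕ // j ≠ 0} :=
      (Fintype.piFinset fun _ : Fin d => Finset.range (n+1)).subtype _ with hS1
    have hLsum : (∑' (j : {j : Fin d → ℕ // j ≠ 0}),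
        ENNReal.ofReal (‖u j.1‖ ^ p / nsup j.1 ^ t))
        = ∑ j ∈ S1, ENNReal.ofReal (‖u j.1‖ ^ p / nsup j.1 ^ t) := by
      refine tsum_eq_sum fun j hj => ?_
      rw [hterm j, if_neg ?_]
      rw [hS1, Finset.mem_subtype] at hj
      simp only [Fintype.mem_piFinset, Finset.mem_range, not_forall, not_lt] at hj
      obtain ⟨i, hi⟩ := hj
      have := Finset.le_sup (f := j.1) (Finset.mem_univ i)
      omega
    have hfin : (∑' (j : {j : Fin d → ℕ // j ≠ 0}),
        ENNReal.ofReal (‖u j.1‖ ^ p / nsup j.1 ^ t)) ≠ ⊤ := by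
      rw [hLsum]
      exact (ENNReal.sum_lt_top.mpr fun j _ => ENNReal.ofReal_lt_top).ne
    have hH := H u hfin
    -- lower bound for LHS
    have i0 : Fin d := ⟨0, by omega⟩
    set emb : (Fin d → Fin n) → {j : Fin d → ℕ // j ≠ 0} :=
      fun f => ⟨fun i => (f i : ℕ) + 1, fun h0 => by
        have := congrFun h0 i0
        simp at this⟩ with hemb
    have hinj : Function.Injective emb := by
      intro f g hfg
      have := congrArg Subtype.val hfg
      funext i
      have h2 := congrFun this i
      simp only [hemb] at h2
      exact Fin.ext (by omega)
    set s' : Finset {j : Fin d → ℕ // j ≠ 0} := Finset.image emb Finset.univ with hs'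
    have hcard' : s'.card = n ^ d := by
      rw [hs', Finset.card_image_of_injective _ hinj]
      simp
    have hlow1 : ∀ j ∈ s', ENNReal.ofReal (((n:ℝ)^t)⁻¹)
        ≤ ENNReal.ofReal (‖u j.1‖ ^ p / nsup j.1 ^ t) := by
      intro j hj
      rw [hs', Finset.mem_image] at hj
      obtain ⟨f, _, rfl⟩ := hj
      have hsup_le : Finset.univ.sup ((emb f) : Fin d → ℕ) ≤ n :=
        Finset.sup_le fun i _ => by
          have := (f i).2
          simp only [hemb]
          omega
      have hsup_ge : 1 ≤ Finset.univ.sup ((emb f) : Fin d → ℕ) := by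
        refine le_trans ?_ (Finset.le_sup (f := ((emb f) : Fin d → ℕ)) (Finset.mem_univ i0))
        simp [hemb]
      rw [hterm _, if_pos hsup_le]
      apply ENNReal.ofReal_le_ofReal
      rw [one_div]
      have h1 : (0:ℝ) < nsup ((emb f) : Fin d → ℕ) := by
        unfold nsup; exact_mod_cast hsup_ge
      have h2 : nsup ((emb f) : Fin d → ℕ) ^ t ≤ (n:ℝ) ^ t := by
        apply Real.rpow_le_rpow h1.le _ ht.le
        unfold nsup; exact_mod_cast hsup_le
      exact inv_anti₀ (Real.rpow_pos_of_pos h1 t) h2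
    have hlow : ((n ^ d : ℕ) : ℝ≥0∞) * ENNReal.ofReal (((n:ℝ)^t)⁻¹)
        ≤ ∑' (j : {j : Fin d → ℕ // j ≠ 0}),
            ENNReal.ofReal (‖u j.1‖ ^ p / nsup j.1 ^ t) := by
      calc ((n ^ d : ℕ) : ℝ≥0∞) * ENNReal.ofReal (((n:ℝ)^t)⁻¹)
          = s'.card • ENNReal.ofReal (((n:ℝ)^t)⁻¹) := by rw [hcard', nsmul_eq_mul]
        _ ≤ ∑ j ∈ s', ENNReal.ofReal (‖u j.1‖ ^ p / nsup j.1 ^ t) :=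
            Finset.card_nsmul_le_sum s' _ _ hlow1
        _ ≤ _ := ENNReal.sum_le_tsum s'
    -- upper bound for RHS
    have habs : ∀ a b : Fin d → ℕ, ‖u a - u b‖ ≤ 1 := by
      intro a b
      simp only [hu]
      by_cases ha : Finset.univ.sup a ≤ n <;> by_cases hb : Finset.univ.sup b ≤ n <;>
        simp [ha, hb]
    have hinner : ∀ j : {j : Fin d → ℕ // j ≠ 0},
        (∑' (k : {k : Fin d → ℕ // k ≠ 0 ∧ nbr j.1 k}),
            ENNReal.ofReal (‖u j.1 - u k.1‖ ^ p))
        ≤ if n ≤ Finset.univ.sup j.1 ∧ Finset.univ.sup j.1 ≤ n + 1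
            then ((2 * d : ℕ) : ℝ≥0∞) else 0 := by
      intro j
      by_cases hj : n ≤ Finset.univ.sup j.1 ∧ Finset.univ.sup j.1 ≤ n + 1
      · rw [if_pos hj]
        refine tsum_le_two_d j.1 _ fun k => ?_
        refine ENNReal.ofReal_le_one.mpr ?_
        exact Real.rpow_le_one (norm_nonneg _) (habs _ _) hp0.le
      · rw [if_neg hj]
        refine le_of_eq (ENNReal.tsum_eq_zero.mpr fun k => ?_)
        have hks := nbr_sup k.2.2
        have huu : u j.1 = u k.1 := by
          simp only [hu]
          by_cases hc : Finset.univ.sup j.1 ≤ n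
          · have h1 : Finset.univ.sup j.1 < n := by omega
            have h2 : Finset.univ.sup k.1 ≤ n := by omega
            rw [if_pos hc, if_pos h2]
          · have h1 : n + 1 < Finset.univ.sup j.1 := by omega
            have h2 : ¬ Finset.univ.sup k.1 ≤ n := by omega
            rw [if_neg hc, if_neg h2]
        rw [huu, sub_self]
        simp [Real.zero_rpow hp0.ne']
    set cardA : ℕ := (n+2)^d - n^d with hcardA
    have hRbound : (∑' (j : {j : Fin d → ℕ // j ≠ 0})
          (k : {k : Fin d → ℕ // k ≠ 0 ∧ nbr j.1 k}),
          ENNReal.ofReal (‖u j.1 - u k.1‖ ^ p))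
        ≤ (cardA : ℝ≥0∞) * ((2 * d : ℕ) : ℝ≥0∞) := by
      refine le_trans (ENNReal.tsum_le_tsum hinner) ?_
      set S2 : Finset {j : Fin d → ℕ // j ≠ 0} :=
        (Fintype.piFinset fun _ : Fin d => Finset.range (n+2)).subtype _ with hS2
      have htz : (∑' (j : {j : Fin d → ℕ // j ≠ 0}),
          if n ≤ Finset.univ.sup j.1 ∧ Finset.univ.sup j.1 ≤ n + 1
            then ((2 * d : ℕ) : ℝ≥0∞) else 0)
          = ∑ j ∈ S2, (if n ≤ Finset.univ.sup j.1 ∧ Finset.univ.sup j.1 ≤ n + 1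
            then ((2 * d : ℕ) : ℝ≥0∞) else 0) := by
        refine tsum_eq_sum fun j hj => ?_
        rw [if_neg ?_]
        rw [hS2, Finset.mem_subtype] at hj
        simp only [Fintype.mem_piFinset, Finset.mem_range, not_forall, not_lt] at hj
        obtain ⟨i, hi⟩ := hj
        have := Finset.le_sup (f := j.1) (Finset.mem_univ i)
        omega
      rw [htz]
      rw [← Finset.sum_filter]
      rw [Finset.sum_const]
      have hcardle : (S2.filter (fun j => n ≤ Finset.univ.sup j.1 ∧ Finset.univ.sup j.1 ≤ n + 1)).card
          ≤ cardA := by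
        rw [hcardA, ← card_boundary d n hn]
        apply Finset.card_le_card_of_injOn (fun j => j.1)
        · intro j hj
          rw [Finset.mem_coe, Finset.mem_filter] at hj
          obtain ⟨hj1, hj2, _⟩ := hj
          rw [hS2, Finset.mem_subtype] at hj1
          exact Finset.mem_coe.mpr (Finset.mem_filter.mpr ⟨hj1, hj2⟩)
        · exact fun a _ b _ hab => Subtype.ext hab
      calc (S2.filter _).card • ((2 * d : ℕ) : ℝ≥0∞)
          = ((S2.filter _).card : ℝ≥0∞) * ((2 * d : ℕ) : ℝ≥0∞) := nsmul_eq_mul _ _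
        _ ≤ (cardA : ℝ≥0∞) * ((2 * d : ℕ) : ℝ≥0∞) := by
            exact mul_le_mul_left (by exact_mod_cast hcardle) _
    -- combine in ℝ≥0∞
    have hmain : ((n ^ d : ℕ) : ℝ≥0∞) * ENNReal.ofReal (((n:ℝ)^t)⁻¹)
        ≤ ENNReal.ofReal C * ((cardA : ℝ≥0∞) * ((2 * d : ℕ) : ℝ≥0∞)) :=
      le_trans hlow (hH.trans (mul_le_mul_right hRbound _))
    -- convert to ℝ
    have hreal : ((n:ℝ) ^ d) * ((n:ℝ)^t)⁻¹ ≤ (max C 0) * ((cardA : ℝ) * ((2*d : ℕ) : ℝ)) := by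
      have hbne : (ENNReal.ofReal C * ((cardA : ℝ≥0∞) * ((2 * d : ℕ) : ℝ≥0∞))) ≠ ⊤ := by
        refine ENNReal.mul_ne_top ENNReal.ofReal_ne_top ?_
        exact ENNReal.mul_ne_top (ENNReal.natCast_ne_top _) (ENNReal.natCast_ne_top _)
      have hane : (((n ^ d : ℕ) : ℝ≥0∞) * ENNReal.ofReal (((n:ℝ)^t)⁻¹)) ≠ ⊤ :=
        ENNReal.mul_ne_top (ENNReal.natCast_ne_top _) ENNReal.ofReal_ne_top
      have := (ENNReal.toReal_le_toReal hane hbne).mpr hmain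
      rw [ENNReal.toReal_mul, ENNReal.toReal_mul, ENNReal.toReal_mul] at this
      rw [ENNReal.toReal_natCast, ENNReal.toReal_natCast, ENNReal.toReal_natCast] at this
      rw [ENNReal.toReal_ofReal (by positivity), ENNReal.toReal_ofReal'] at this
      exact_mod_cast this
    -- numeric manipulation
    have hcardA_le : (cardA : ℝ) ≤ ((2 * d * 3^(d-1) : ℕ) : ℝ) * (n:ℝ)^(d-1) := by
      have := boundary_le d n hn (by omega)
      calc (cardA : ℝ) ≤ ((2 * d * 3^(d-1) * n^(d-1) : ℕ) : ℝ) := by exact_mod_cast this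
        _ = ((2 * d * 3^(d-1) : ℕ) : ℝ) * (n:ℝ)^(d-1) := by push_cast; ring
    have hstep : ((n:ℝ) ^ d) * ((n:ℝ)^t)⁻¹ ≤ K * (n:ℝ)^(d-1) := by
      calc ((n:ℝ) ^ d) * ((n:ℝ)^t)⁻¹ ≤ (max C 0) * ((cardA : ℝ) * ((2*d : ℕ) : ℝ)) := hreal
        _ ≤ (max C 0) * ((((2 * d * 3^(d-1) : ℕ) : ℝ) * (n:ℝ)^(d-1)) * ((2*d : ℕ) : ℝ)) := by
            refine mul_le_mul_of_nonneg_left ?_ (le_max_right _ _)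
            exact mul_le_mul_of_nonneg_right hcardA_le (by positivity)
        _ = K * (n:ℝ)^(d-1) := by rw [hK]; ring
    have hPpos : (0:ℝ) < (n:ℝ)^(d-1) := by positivity
    have hfinal : (n:ℝ) * ((n:ℝ)^t)⁻¹ ≤ K := by
      have hde : (n:ℝ) ^ d = (n:ℝ)^(d-1) * (n:ℝ) := by
        rw [← pow_succ]
        congr 1
        omega
      rw [hde] at hstep
      have h' : (n:ℝ)^(d-1) * ((n:ℝ) * ((n:ℝ)^t)⁻¹) ≤ (n:ℝ)^(d-1) * K := by
        calc (n:ℝ)^(d-1) * ((n:ℝ) * ((n:ℝ)^t)⁻¹)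
            = (n:ℝ)^(d-1) * (n:ℝ) * ((n:ℝ)^t)⁻¹ := by ring
          _ ≤ K * (n:ℝ)^(d-1) := hstep
          _ = (n:ℝ)^(d-1) * K := by ring
      exact le_of_mul_le_mul_left h' hPpos
    calc (n:ℝ) ^ (1 - t) = (n:ℝ) ^ (1:ℝ) * ((n:ℝ)^t)⁻¹ := by
          rw [Real.rpow_sub hNpos, div_eq_mul_inv]
      _ = (n:ℝ) * ((n:ℝ)^t)⁻¹ := by rw [Real.rpow_one]
      _ ≤ K := hfinal
  -- contradiction via unboundedness of n^(1-t)
  have h10 : (0:ℝ) < 1 - t := by linarith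
  have htend : Filter.Tendsto (fun n : ℕ => (n:ℝ) ^ (1 - t)) Filter.atTop Filter.atTop :=
    (tendsto_rpow_atTop h10).comp tendsto_natCast_atTop_atTop
  obtain ⟨n, hn1, hn2⟩ := ((htend.eventually_ge_atTop (K + 1)).and
    (Filter.eventually_ge_atTop 1)).exists
  have := key n hn2
  linarith
end

section
/- Let d = p (with d ∈ ℕ, d ≥ 1). Then there is NO finite constant C such that ∑_{j ∈ ℤ₊^d \ {0}} |u(j)|^p / ‖j‖_∞^p ≤ C · ∑_{j ∈ ℤ₊^d \ {0}} ∑_{k ∈ ℤ₊^d, k ∼ j} |u(j) − u(k)|^p holds for all functions u : ℤ₊^d → ℂ with u(0) = 0. In other words, the Hardy inequality in the critical case d = p fails for ε = 0. -/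
open scoped ENNReal
open Classical

def evec {d : ℕ} (i : Fin d) : Fin d → ℕ := fun t => if t = i then 1 else 0

lemma nbr_zero_char {d : ℕ} {j : Fin d → ℕ} (h : nbr j 0) : ∃ i, j = evec i := by
  have h' : ∑ i, (j i) ^ 2 = 1 := by
    have := h
    unfold nbr at this
    have : ((∑ i, (j i) ^ 2 : ℕ) : ℤ) = 1 := by
      push_cast
      simpa using this
    exact_mod_cast this
  -- find i with j i ≠ 0
  have hex : ∃ i, j i ≠ 0 := by
    by_contra hall
    push_neg at hall
    simp [hall] at h'
  obtain ⟨i, hi⟩ := hex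
  have hle : (j i) ^ 2 ≤ 1 := by
    calc (j i)^2 ≤ ∑ t, (j t)^2 :=
      Finset.single_le_sum (f := fun t => (j t)^2) (fun t _ => Nat.zero_le _) (Finset.mem_univ i)
    _ = 1 := h'
  have hji : j i = 1 := by nlinarith [Nat.one_le_iff_ne_zero.2 hi]
  refine ⟨i, funext fun t => ?_⟩
  by_cases ht : t = i
  · simp [ht, evec, hji]
  · have : (j i)^2 + (j t)^2 ≤ ∑ s, (j s)^2 := by
      have := Finset.sum_le_sum_of_subset (s := ({i, t} : Finset (Fin d)))
        (t := Finset.univ) (f := fun s => (j s)^2) (Finset.subset_univ _)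
      simpa [Finset.sum_pair (Ne.symm ht)] using this
    rw [h', hji] at this
    have : (j t)^2 = 0 := by omega
    have : j t = 0 := by nlinarith
    simp [evec, ht, this]

instance {d : ℕ} (x y : Fin d → ℕ) : Decidable (nbr x y) := by
  unfold nbr; infer_instance

/-- Failure of the Hardy inequality on `ℤ₊^d` in the critical case `d = p` with `ε = 0`:
no finite constant `C` works for all `u` with `u(0) = 0`. -/
theorem hardy_critical_fails (d : ℕ) (p : ℝ) (hd : 1 ≤ d) (hdp : (d : ℝ) = p) :
    ¬ ∃ C : ℝ, ∀ u : (Fin d → ℕ) → ℂ, u 0 = 0 →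
      (∑' (j : {j : Fin d → ℕ // j ≠ 0}),
          ENNReal.ofReal (‖u j.1‖ ^ p / nsup j.1 ^ p))
        ≤ ENNReal.ofReal C *
            ∑' (j : {j : Fin d → ℕ // j ≠ 0})
              (k : {k : Fin d → ℕ // nbr j.1 k}),
              ENNReal.ofReal (‖u j.1 - u k.1‖ ^ p) := by
  subst hdp
  rintro ⟨C, hC⟩
  have hd0 : (d : ℝ) ≠ 0 := Nat.cast_ne_zero.2 (by omega)
  set u : (Fin d → ℕ) → ℂ := fun j => if j = 0 then 0 else 1 with hu
  have key := hC u (if_pos rfl)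
  set i0 : Fin d := ⟨0, hd⟩ with hi0
  -- RHS: inner sums
  have hinner : ∀ j : {j : Fin d → ℕ // j ≠ 0},
      (∑' (k : {k : Fin d → ℕ // nbr j.1 k}),
        ENNReal.ofReal (‖u j.1 - u k.1‖ ^ (d : ℝ)))
      ≤ (if nbr j.1 0 then 1 else 0 : ℝ≥0∞) := by
    intro j
    by_cases h : nbr j.1 0
    · rw [if_pos h]
      have hb : ∀ k : {k : Fin d → ℕ // nbr j.1 k},
          ENNReal.ofReal (‖u j.1 - u k.1‖ ^ (d : ℝ))
          ≤ (if k = (⟨0, h⟩ : {k : Fin d → ℕ // nbr j.1 k}) then 1 else 0 : ℝ≥0∞) := by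
        intro k
        by_cases hk : k = (⟨0, h⟩ : {k : Fin d → ℕ // nbr j.1 k})
        · rw [hk, if_pos rfl]
          simp [hu, j.2, Real.one_rpow]
        · rw [if_neg hk]
          have hk1 : k.1 ≠ 0 := fun hh => hk (Subtype.ext hh)
          simp [hu, j.2, hk1, Real.zero_rpow hd0]
      calc (∑' (k : {k : Fin d → ℕ // nbr j.1 k}),
            ENNReal.ofReal (‖u j.1 - u k.1‖ ^ (d : ℝ)))
          ≤ ∑' (k : {k : Fin d → ℕ // nbr j.1 k}),
            (if k = (⟨0, h⟩ : {k : Fin d → ℕ // nbr j.1 k}) then 1 else 0 : ℝ≥0∞) :=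
            ENNReal.tsum_le_tsum hb
        _ = 1 := tsum_ite_eq _ 1
    · rw [if_neg h]
      have hz : ∀ k : {k : Fin d → ℕ // nbr j.1 k},
          ENNReal.ofReal (‖u j.1 - u k.1‖ ^ (d : ℝ)) = 0 := by
        intro k
        have hk1 : k.1 ≠ 0 := by
          intro hh
          have hk2 := k.2
          rw [hh] at hk2
          exact h hk2
        simp [hu, j.2, hk1, Real.zero_rpow hd0]
      exact le_of_eq ((tsum_congr hz).trans tsum_zero)
  -- RHS: outer sum bounded by d
  have houter : (∑' (j : {j : Fin d → ℕ // j ≠ 0})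
        (k : {k : Fin d → ℕ // nbr j.1 k}),
        ENNReal.ofReal (‖u j.1 - u k.1‖ ^ (d : ℝ))) ≤ (d : ℝ≥0∞) := by
    set T : Finset (Fin d → ℕ) := Finset.image evec Finset.univ with hT
    calc (∑' (j : {j : Fin d → ℕ // j ≠ 0})
          (k : {k : Fin d → ℕ // nbr j.1 k}),
          ENNReal.ofReal (‖u j.1 - u k.1‖ ^ (d : ℝ)))
        ≤ ∑' (j : {j : Fin d → ℕ // j ≠ 0}), (if nbr j.1 0 then 1 else 0 : ℝ≥0∞) :=
          ENNReal.tsum_le_tsum hinner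
      _ ≤ ∑' (j : Fin d → ℕ), (if nbr j 0 then 1 else 0 : ℝ≥0∞) :=
          ENNReal.tsum_comp_le_tsum_of_injective Subtype.val_injective _
      _ = ∑ j ∈ T, (if nbr j 0 then 1 else 0 : ℝ≥0∞) := by
          refine tsum_eq_sum (fun j hj => if_neg (fun hn => hj ?_))
          obtain ⟨i, rfl⟩ := nbr_zero_char hn
          exact Finset.mem_image_of_mem _ (Finset.mem_univ i)
      _ ≤ ∑ j ∈ T, (1 : ℝ≥0∞) := Finset.sum_le_sum (fun j _ => by split <;> simp)
      _ = (T.card : ℝ≥0∞) := by simp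
      _ ≤ (d : ℝ≥0∞) := by
          have : T.card ≤ d := le_trans Finset.card_image_le (by simp)
          exact_mod_cast this
  -- LHS lower bound along shells
  set B : ℕ → Finset (Fin d → ℕ) :=
    fun r => Fintype.piFinset (fun i => if i = i0 then {r} else Finset.range r) with hB
  have hBmem : ∀ {r : ℕ} {j : Fin d → ℕ}, j ∈ B r → j i0 = r ∧ ∀ i, j i ≤ r := by
    intro r j hj
    rw [hB, Fintype.mem_piFinset] at hj
    constructor
    · have := hj i0
      simpa using this
    · intro i
      have := hj i
      by_cases hi : i = i0
      · rw [hi]; simp_all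
      · rw [if_neg hi, Finset.mem_range] at this; omega
  have hBsup : ∀ {r : ℕ} {j : Fin d → ℕ}, j ∈ B r → Finset.univ.sup j = r := by
    intro r j hj
    obtain ⟨h1, h2⟩ := hBmem hj
    refine le_antisymm (Finset.sup_le fun i _ => h2 i) ?_
    calc r = j i0 := h1.symm
      _ ≤ Finset.univ.sup j := Finset.le_sup (Finset.mem_univ i0)
  have hBne : ∀ {r : ℕ}, 1 ≤ r → ∀ {j : Fin d → ℕ}, j ∈ B r → j ≠ 0 := by
    intro r hr j hj h0
    have := (hBmem hj).1
    rw [h0] at this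
    simp at this
    omega
  have hBcard : ∀ r : ℕ, (B r).card = r ^ (d - 1) := by
    intro r
    rw [hB]
    rw [Fintype.card_piFinset]
    have : ∀ i : Fin d, ((if i = i0 then ({r} : Finset ℕ) else Finset.range r)).card
        = (if i = i0 then 1 else r) := by
      intro i; split <;> simp
    rw [Finset.prod_congr rfl (fun i _ => this i)]
    rw [← Finset.mul_prod_erase Finset.univ _ (Finset.mem_univ i0), if_pos rfl, one_mul]
    rw [Finset.prod_congr rfl (fun i hi => if_neg (Finset.ne_of_mem_erase hi))]
    rw [Finset.prod_const, Finset.card_erase_of_mem (Finset.mem_univ i0)]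
    simp
  have hBsum : ∀ r : ℕ, 1 ≤ r →
      (∑ j ∈ B r, ENNReal.ofReal (‖u j‖ ^ (d : ℝ) / nsup j ^ (d : ℝ)))
        = ENNReal.ofReal (1 / (r : ℝ)) := by
    intro r hr
    have hterm : ∀ j ∈ B r,
        ENNReal.ofReal (‖u j‖ ^ (d : ℝ) / nsup j ^ (d : ℝ))
          = ENNReal.ofReal (1 / (r : ℝ) ^ d) := by
      intro j hj
      have hne := hBne hr hj
      have hsup : nsup j = (r : ℝ) := by rw [nsup, hBsup hj]
      rw [hsup]
      have : (r : ℝ) ^ (d : ℝ) = (r : ℝ) ^ d := by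
        rw [Real.rpow_natCast]
      rw [this]
      simp [hu, hne, Real.one_rpow]
    rw [Finset.sum_congr rfl hterm, Finset.sum_const, hBcard r, nsmul_eq_mul]
    have hrpos : (0 : ℝ) < (r : ℝ) := by exact_mod_cast hr
    rw [show ((r ^ (d-1) : ℕ) : ℝ≥0∞) = ENNReal.ofReal ((r:ℝ) ^ (d-1)) by
      rw [← ENNReal.ofReal_natCast]; push_cast; ring_nf]
    rw [← ENNReal.ofReal_mul (by positivity)]
    congr 1
    have hdd : d = (d - 1) + 1 := by omega
    rw [hdd, pow_succ]
    field_simp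
    simp
  -- harmonic partial sums in the LHS
  have hLHS : ∀ n : ℕ,
      ENNReal.ofReal (∑ r ∈ Finset.Icc 1 n, (1 / (r : ℝ)))
        ≤ ∑' (j : {j : Fin d → ℕ // j ≠ 0}),
            ENNReal.ofReal (‖u j.1‖ ^ (d : ℝ) / nsup j.1 ^ (d : ℝ)) := by
    intro n
    set S : Finset (Fin d → ℕ) := (Finset.Icc 1 n).biUnion B with hS
    have hdisj : (Finset.Icc 1 n : Set ℕ).PairwiseDisjoint B := by
      intro r _ s _ hrs
      apply Finset.disjoint_left.2
      intro j hjr hjs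
      exact hrs ((hBmem hjr).1.symm.trans (hBmem hjs).1)
    have h1 : ENNReal.ofReal (∑ r ∈ Finset.Icc 1 n, (1 / (r : ℝ)))
        = ∑ j ∈ S, ENNReal.ofReal (‖u j‖ ^ (d : ℝ) / nsup j ^ (d : ℝ)) := by
      rw [hS, Finset.sum_biUnion hdisj, ENNReal.ofReal_sum_of_nonneg (fun r hr => by positivity)]
      refine Finset.sum_congr rfl (fun r hr => ?_)
      rw [hBsum r (Finset.mem_Icc.1 hr).1]
    have hall : ∀ j ∈ S, j ≠ (0 : Fin d → ℕ) := by
      intro j hj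
      rw [hS, Finset.mem_biUnion] at hj
      obtain ⟨r, hr, hjr⟩ := hj
      exact hBne (Finset.mem_Icc.1 hr).1 hjr
    have h2 := Finset.sum_subtype_eq_sum_filter
      (fun j => ENNReal.ofReal (‖u j‖ ^ (d : ℝ) / nsup j ^ (d : ℝ)))
      (s := S) (p := fun j => j ≠ 0)
    rw [Finset.filter_true_of_mem hall] at h2
    calc ENNReal.ofReal (∑ r ∈ Finset.Icc 1 n, (1 / (r : ℝ)))
        = ∑ j ∈ S.subtype (fun j => j ≠ 0),
            ENNReal.ofReal (‖u j.1‖ ^ (d : ℝ) / nsup j.1 ^ (d : ℝ)) := by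
          rw [h1, ← h2]
      _ ≤ _ := ENNReal.sum_le_tsum _
  -- conclude
  have hfin : ∀ n : ℕ, (∑ r ∈ Finset.Icc 1 n, (1 / (r : ℝ))) ≤ |C| * d := by
    intro n
    have c1 : ENNReal.ofReal (∑ r ∈ Finset.Icc 1 n, (1 / (r : ℝ)))
        ≤ ENNReal.ofReal (|C| * d) := by
      calc ENNReal.ofReal (∑ r ∈ Finset.Icc 1 n, (1 / (r : ℝ)))
          ≤ _ := hLHS n
        _ ≤ _ := key
        _ ≤ ENNReal.ofReal |C| * (d : ℝ≥0∞) :=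
            mul_le_mul' (ENNReal.ofReal_le_ofReal (le_abs_self C)) houter
        _ = ENNReal.ofReal (|C| * d) := by
            rw [← ENNReal.ofReal_natCast d, ← ENNReal.ofReal_mul (abs_nonneg C)]
    have := (ENNReal.ofReal_le_ofReal_iff (by positivity)).1 c1
    exact this
  -- harmonic series diverges
  have hdiv := Real.tendsto_sum_range_one_div_nat_succ_atTop
  obtain ⟨n, hn⟩ := (Filter.tendsto_atTop.1 hdiv (|C| * d + 1)).exists
  have heq : ∑ i ∈ Finset.range n, (1 / ((i : ℝ) + 1)) = ∑ r ∈ Finset.Icc 1 n, (1 / (r : ℝ)) := by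
    rw [show Finset.Icc 1 n = Finset.Ico 1 (n+1) by rfl]
    rw [Finset.sum_Ico_eq_sum_range]
    simp only [Nat.add_sub_cancel]
    refine Finset.sum_congr rfl (fun i _ => ?_)
    push_cast
    ring
  rw [heq] at hn
  have := hfin n
  linarith
end
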